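/- arXiv:1306.1845 — 12 statements merged into one kernel-verified Lean document; each statement's English description precedes it below -/
import Mathlib

section
/- If f, g : U → V are linear maps between vector spaces over a field K such that for every x ∈ U the vectors f(x) and g(x) are linearly dependent, and g is not identically zero with rank at least 2, then f is a scalar multiple of g. -/
theorem stmt0 {K U V : Type*} [Field K] [AddCommGroup U] [Module K U]
    [AddCommGroup V] [Module K V] (f g : U →ₗ[K] V)
    (hdep : ∀ x : U, ∃ a b : K, (a, b) ≠ 0 ∧ a • f x + b • g x = 0)
    (hg : g ≠ 0) (hrank : 2 ≤ LinearMap.rank g) :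
    ∃ c : K, f = c • g := by
  classical
  -- Step 1: wherever g x ≠ 0, f x is a scalar multiple of g x
  have h1 : ∀ x : U, g x ≠ 0 → ∃ c : K, f x = c • g x := by
    intro x hx
    obtain ⟨a, b, hab, heq⟩ := hdep x
    rcases eq_or_ne a 0 with ha | ha
    · exfalso
      subst ha
      have hb : b ≠ 0 := by
        intro hb; exact hab (by simp [hb, Prod.ext_iff])
      have hbg : b • g x = 0 := by simpa using heq
      rcases smul_eq_zero.mp hbg with h | h
      · exact hb h
      · exact hx h
    · have h2 : a • f x = (-b) • g x := by
        rw [neg_smul]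
        exact eq_neg_of_add_eq_zero_left heq
      refine ⟨a⁻¹ * (-b), ?_⟩
      rw [← smul_smul, ← h2, smul_smul, inv_mul_cancel₀ ha, one_smul]
  -- find u with g u ≠ 0
  obtain ⟨u, hu⟩ : ∃ u, g u ≠ 0 := by
    by_contra h
    push_neg at h
    exact hg (LinearMap.ext fun x => by simpa using h x)
  -- find z with g u, g z linearly independent
  have hr1 : (1 : Cardinal) < Module.rank K (LinearMap.range g) :=
    lt_of_lt_of_le (by norm_num) hrank
  have huR : ((⟨g u, LinearMap.mem_range_self g u⟩ : LinearMap.range g)) ≠ 0 := by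
    intro h
    exact hu (congrArg Subtype.val h)
  obtain ⟨y', hind'⟩ := exists_linearIndependent_pair_of_one_lt_rank hr1 huR
  obtain ⟨z, hz⟩ := y'.2
  have hind : LinearIndependent K ![g u, g z] := by
    have h2 := hind'.map' (LinearMap.range g).subtype (Submodule.ker_subtype _)
    have heq : ((LinearMap.range g).subtype ∘ ![(⟨g u, LinearMap.mem_range_self g u⟩ :
        LinearMap.range g), y']) = ![g u, g z] := by
      ext i
      fin_cases i <;> simp [hz]
    rwa [heq] at h2
  have hzne : g z ≠ 0 := by
    intro h
    exact (hind.ne_zero 1) (by simpa using h)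
  -- key: if g x, g y independent and f x = a • g x, f y = b • g y, then a = b
  have key : ∀ (x y : U) (a b : K), LinearIndependent K ![g x, g y] →
      f x = a • g x → f y = b • g y → a = b := by
    intro x y a b hxy hfx hfy
    have hgx : g x ≠ 0 := fun h => (hxy.ne_zero 0) (by simpa using h)
    have hgy : g y ≠ 0 := fun h => (hxy.ne_zero 1) (by simpa using h)
    have hgxy : g (x + y) ≠ 0 := by
      intro h
      rw [map_add, ← add_zero (g x + g y) ] at h
      have := (LinearIndependent.pair_iff.mp hxy 1 1 (by simpa using h)).1
      exact one_ne_zero this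
    obtain ⟨d, hd⟩ := h1 (x + y) hgxy
    have hsum : a • g x + b • g y = d • g x + d • g y := by
      have h3 : f x + f y = d • (g x + g y) := by
        rw [← map_add]; simpa [map_add] using hd
      rw [hfx, hfy, smul_add] at h3
      exact h3
    have h4 : (a - d) • g x + (b - d) • g y = 0 := by
      rw [sub_smul, sub_smul]
      rw [← sub_eq_zero] at hsum
      rw [← hsum]; abel
    have h5 := LinearIndependent.pair_iff.mp hxy (a - d) (b - d) h4
    have ha : a = d := sub_eq_zero.mp h5.1
    have hb : b = d := sub_eq_zero.mp h5.2
    rw [ha, hb]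
  -- kernel lemma: g x = 0 → f x = 0
  have hker : ∀ x : U, g x = 0 → f x = 0 := by
    intro x hx
    have hmem : ∀ w : U, g w ≠ 0 → ∃ t : K, f x = t • g w := by
      intro w hw
      obtain ⟨c1, hc1⟩ := h1 w hw
      have hgxw : g (x + w) ≠ 0 := by
        rw [map_add, hx, zero_add]; exact hw
      obtain ⟨c2, hc2⟩ := h1 (x + w) hgxw
      refine ⟨c2 - c1, ?_⟩
      have h3 : f x + f w = c2 • g w := by
        rw [← map_add]
        simpa [map_add, hx] using hc2
      rw [hc1] at h3
      rw [sub_smul, ← h3]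
      abel
    obtain ⟨s, hs⟩ := hmem u hu
    obtain ⟨t, ht⟩ := hmem z hzne
    have h6 : s • g u + (-t) • g z = 0 := by
      rw [neg_smul, ← hs, ← ht]; abel
    have h7 := (LinearIndependent.pair_iff.mp hind s (-t) h6).1
    rw [hs, h7, zero_smul]
  -- conclude
  obtain ⟨c, hc⟩ := h1 u hu
  refine ⟨c, LinearMap.ext fun x => ?_⟩
  simp only [LinearMap.smul_apply]
  rcases eq_or_ne (g x) 0 with hx | hx
  · rw [hker x hx, hx, smul_zero]
  · by_cases hux : LinearIndependent K ![g u, g x]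
    · obtain ⟨d, hd⟩ := h1 x hx
      rw [hd, key u x c d hux hc hd]
    · -- dependent case: g x = t • g u
      obtain ⟨t, hgt⟩ : ∃ t : K, g x = t • g u := by
        rw [LinearIndependent.pair_iff' hu] at hux
        push_neg at hux
        obtain ⟨a, ha⟩ := hux
        exact ⟨a, ha.symm⟩
      have h0 : g (x - t • u) = 0 := by
        rw [map_sub, map_smul, hgt, sub_self]
      have h8 := hker _ h0
      rw [map_sub, map_smul, sub_eq_zero] at h8
      rw [h8, hc, smul_smul, mul_comm, ← smul_smul, ← hgt]
end

section
/- Let S be a 2-dimensional subspace of L(U,V) such that for every x ∈ U there exists a nonzero f ∈ S with f(x) = 0. Then there exists a 1-dimensional subspace D of V such that f(x) ∈ D for every f ∈ S and every x ∈ U. -/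
section aux

variable {K U V : Type*} [Field K] [AddCommGroup U] [Module K U]
    [AddCommGroup V] [Module K V]

lemma solve2 {u v : V} {a b : K} (hb : b ≠ 0) (h : a • u + b • v = 0) :
    v = (-(a/b)) • u := by
  have h1 : b • v = -(a • u) := eq_neg_of_add_eq_zero_right h
  calc v = b⁻¹ • (b • v) := by rw [smul_smul, inv_mul_cancel₀ hb, one_smul]
    _ = (-(a/b)) • u := by
        rw [h1, smul_neg, smul_smul, ← neg_smul, div_eq_inv_mul]

lemma dep_resolve {u v : V} {a b : K} (hu : u ≠ 0) (hab : a ≠ 0 ∨ b ≠ 0)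
    (h : a • u + b • v = 0) : ∃ c : K, v = c • u := by
  by_cases hb : b = 0
  · exfalso
    subst hb
    simp only [zero_smul, add_zero, smul_eq_zero] at h
    rcases hab with ha | ha
    · tauto
    · exact ha rfl
  · exact ⟨-(a/b), solve2 hb h⟩

/-- If f, g are linearly independent operators with pointwise dependent values,
then all pairs of values of f are dependent (rank f ≤ 1). -/
lemma ranklem (f g : U →ₗ[K] V)
    (hfg : ∀ a b : K, a • f + b • g = 0 → a = 0 ∧ b = 0)
    (hdep : ∀ x : U, ∃ a b : K, (a ≠ 0 ∨ b ≠ 0) ∧ a • f x + b • g x = 0) :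
    ∀ x y : U, ∃ a b : K, (a ≠ 0 ∨ b ≠ 0) ∧ a • f x + b • f y = 0 := by
  intro x y
  by_contra hcon
  push_neg at hcon
  -- independence of f x, f y
  have hxy : ∀ a b : K, a • f x + b • f y = 0 → a = 0 ∧ b = 0 := by
    intro a b hab
    by_contra h
    rw [not_and_or] at h
    exact hcon a b (by tauto) hab
  have hfx : f x ≠ 0 := by
    intro h0
    have := (hxy 1 0 (by simp [h0])).1
    simpa using this
  have hfy : f y ≠ 0 := by
    intro h0
    have := (hxy 0 1 (by simp [h0])).2
    simpa using this
  -- wherever f z ≠ 0, g z is a multiple of f z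
  have scalar : ∀ z : U, f z ≠ 0 → ∃ c : K, g z = c • f z := by
    intro z hz
    obtain ⟨a, b, hab, he⟩ := hdep z
    exact dep_resolve hz hab he
  -- key propagation lemma
  have H : ∀ (p q : U) (c : K),
      (∀ a b : K, a • f p + b • f q = 0 → a = 0 ∧ b = 0) →
      g p = c • f p → g q = c • f q := by
    intro p q c hpq hgp
    have hfq : f q ≠ 0 := by
      intro h0
      have := (hpq 0 1 (by simp [h0])).2
      simpa using this
    obtain ⟨d, hd⟩ := scalar q hfq
    have hfpq : f (p + q) ≠ 0 := by
      rw [map_add]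
      intro h0
      have := (hpq 1 1 (by simpa using h0)).1
      simpa using this
    obtain ⟨e, he⟩ := scalar (p + q) hfpq
    rw [map_add, map_add, hgp, hd, smul_add] at he
    have hcomb : (c - e) • f p + (d - e) • f q = 0 := by
      rw [sub_smul, sub_smul, sub_add_sub_comm, he, sub_self]
    obtain ⟨h1, h2⟩ := hpq _ _ hcomb
    rw [hd, sub_eq_zero.mp h2, ← sub_eq_zero.mp h1]
  -- fix the scalar at x
  obtain ⟨c, hc⟩ := scalar x hfx
  have hgy : g y = c • f y := H x y c hxy hc
  -- show g = c • f everywhere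
  have hall : ∀ z : U, g z = c • f z := by
    intro z
    by_cases hz : ∀ a b : K, a • f x + b • f z = 0 → a = 0 ∧ b = 0
    · exact H x z c hz hc
    · push_neg at hz
      obtain ⟨a, b, he, hne⟩ := hz
      have hab : a ≠ 0 ∨ b ≠ 0 := by tauto
      obtain ⟨t, ht⟩ := dep_resolve hfx hab he
      -- f (z + y) is independent from f x
      have hind : ∀ a b : K, a • f x + b • f (z + y) = 0 → a = 0 ∧ b = 0 := by
        intro a b hab2
        rw [map_add, ht, smul_add, smul_smul] at hab2
        have : (a + b * t) • f x + b • f y = 0 := by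
          rw [add_smul]
          rw [← hab2]
          abel
        obtain ⟨h1, h2⟩ := hxy _ _ this
        subst h2
        constructor
        · simpa using h1
        · rfl
      have := H x (z + y) c hind hc
      rw [map_add, map_add, hgy, smul_add] at this
      exact add_right_cancel this
  -- contradiction with linear independence of f, g
  have : c • f + (-1 : K) • g = 0 := by
    ext z
    simp [hall z]
  have := (hfg c (-1) this).2
  exact absurd this (by norm_num)

/-- Any operator not identically zero has a nonzero value. -/
lemma exists_ne_zero {f : U →ₗ[K] V} (hf : f ≠ 0) : ∃ x, f x ≠ 0 := by
  by_contra h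
  push_neg at h
  exact hf (by ext z; simpa using h z)

lemma key (f g : U →ₗ[K] V)
    (hfg : ∀ a b : K, a • f + b • g = 0 → a = 0 ∧ b = 0)
    (hdep : ∀ x : U, ∃ a b : K, (a ≠ 0 ∨ b ≠ 0) ∧ a • f x + b • g x = 0) :
    ∃ w : V, w ≠ 0 ∧ ∀ x : U, (∃ s : K, f x = s • w) ∧ (∃ s : K, g x = s • w) := by
  have hgf : ∀ a b : K, a • g + b • f = 0 → a = 0 ∧ b = 0 := by
    intro a b h
    have := hfg b a (by rw [add_comm]; exact h)
    tauto
  have hdep' : ∀ x : U, ∃ a b : K, (a ≠ 0 ∨ b ≠ 0) ∧ a • g x + b • f x = 0 := by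
    intro x
    obtain ⟨a, b, hab, h⟩ := hdep x
    exact ⟨b, a, by tauto, by rw [add_comm]; exact h⟩
  have hrf := ranklem f g hfg hdep
  have hrg := ranklem g f hgf hdep'
  have hf0 : f ≠ 0 := by
    intro h
    have := (hfg 1 0 (by simp [h])).1
    simp at this
  have hg0 : g ≠ 0 := by
    intro h
    have := (hfg 0 1 (by simp [h])).2
    simp at this
  obtain ⟨x0, hx0⟩ := exists_ne_zero hf0
  obtain ⟨y0, hy0⟩ := exists_ne_zero hg0
  set w := f x0 with hw
  set v := g y0 with hv
  have hfmul : ∀ x : U, ∃ s : K, f x = s • w := by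
    intro x
    obtain ⟨a, b, hab, h⟩ := hrf x x0
    refine dep_resolve (a := b) (b := a) hx0 (by tauto) ?_
    rw [add_comm]; exact h
  have hgmul : ∀ x : U, ∃ s : K, g x = s • v := by
    intro x
    obtain ⟨a, b, hab, h⟩ := hrg x y0
    refine dep_resolve (a := b) (b := a) hy0 (by tauto) ?_
    rw [add_comm]; exact h
  -- v is a multiple of w
  have hvw : ∃ t : K, v = t • w := by
    by_contra hvw
    push_neg at hvw
    have hind : ∀ a b : K, a • w + b • v = 0 → a = 0 ∧ b = 0 := by
      intro a b h
      by_cases hb : b = 0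
      · subst hb
        simp only [zero_smul, add_zero, smul_eq_zero] at h
        exact ⟨by tauto, rfl⟩
      · exact absurd (solve2 hb h) (hvw _)
    -- g x0 = 0
    have hgx0 : g x0 = 0 := by
      obtain ⟨s, hs⟩ := hgmul x0
      obtain ⟨a, b, hab, h⟩ := hdep x0
      rw [hs, ← hw, smul_smul] at h
      obtain ⟨h1, h2⟩ := hind _ _ h
      subst h1
      have hb : b ≠ 0 := by tauto
      have hs0 : s = 0 := by
        rcases mul_eq_zero.mp h2 with h | h
        · exact absurd h hb
        · exact h
      rw [hs, hs0, zero_smul]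
    -- f y0 = 0
    have hfy0 : f y0 = 0 := by
      obtain ⟨s, hs⟩ := hfmul y0
      obtain ⟨a, b, hab, h⟩ := hdep y0
      rw [hs, smul_smul, ← hv] at h
      obtain ⟨h1, h2⟩ := hind _ _ h
      subst h2
      have ha : a ≠ 0 := by tauto
      have hs0 : s = 0 := by
        rcases mul_eq_zero.mp h1 with h | h
        · exact absurd h ha
        · exact h
      rw [hs, hs0, zero_smul]
    obtain ⟨a, b, hab, h⟩ := hdep (x0 + y0)
    rw [map_add, map_add, hfy0, hgx0, add_zero, zero_add, ← hw, ← hv] at h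
    obtain ⟨h1, h2⟩ := hind _ _ h
    tauto
  obtain ⟨t, ht⟩ := hvw
  refine ⟨w, hx0, fun x => ⟨hfmul x, ?_⟩⟩
  obtain ⟨s, hs⟩ := hgmul x
  exact ⟨s * t, by rw [hs, ht, smul_smul]⟩

end aux

theorem stmt1 {K U V : Type*} [Field K] [AddCommGroup U] [Module K U]
    [AddCommGroup V] [Module K V] (S : Submodule K (U →ₗ[K] V))
    (hdim : Module.finrank K S = 2)
    (hLLD : ∀ x : U, ∃ f ∈ S, f ≠ 0 ∧ f x = 0) :
    ∃ D : Submodule K V, Module.finrank K D = 1 ∧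
      ∀ f ∈ S, ∀ x : U, f x ∈ D := by
  classical
  have : FiniteDimensional K S := FiniteDimensional.of_finrank_eq_succ hdim
  let b : Module.Basis (Fin 2) K S := Module.finBasisOfFinrankEq K S hdim
  set f : U →ₗ[K] V := ((b 0 : S) : U →ₗ[K] V) with hf
  set g : U →ₗ[K] V := ((b 1 : S) : U →ₗ[K] V) with hg
  have li : LinearIndependent K (S.subtype ∘ b) :=
    b.linearIndependent.map' S.subtype (Submodule.ker_subtype S)
  have hfg : ∀ a c : K, a • f + c • g = 0 → a = 0 ∧ c = 0 := by
    intro a c h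
    have := Fintype.linearIndependent_iff.mp li ![a, c] ?_
    · exact ⟨this 0, this 1⟩
    · rw [Fin.sum_univ_two]
      simpa using h
  -- representation of elements of S
  have repr : ∀ h ∈ S, ∃ c0 c1 : K, h = c0 • f + c1 • g := by
    intro h hh
    have hsum := congrArg S.subtype (b.sum_repr ⟨h, hh⟩)
    rw [map_sum, Fin.sum_univ_two] at hsum
    refine ⟨b.repr ⟨h, hh⟩ 0, b.repr ⟨h, hh⟩ 1, ?_⟩
    simp only [map_smul, Submodule.subtype_apply] at hsum
    rw [← hf, ← hg] at hsum
    exact hsum.symm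
  have hdep : ∀ x : U, ∃ a c : K, (a ≠ 0 ∨ c ≠ 0) ∧ a • f x + c • g x = 0 := by
    intro x
    obtain ⟨h, hh, hne, hx⟩ := hLLD x
    obtain ⟨c0, c1, hrep⟩ := repr h hh
    refine ⟨c0, c1, ?_, ?_⟩
    · by_contra hc
      push_neg at hc
      exact hne (by rw [hrep, hc.1, hc.2]; simp)
    · have := congrArg (fun φ : U →ₗ[K] V => φ x) hrep
      simp only [LinearMap.add_apply, LinearMap.smul_apply] at this
      rw [← this, hx]
  obtain ⟨w, hw, hmul⟩ := key f g hfg hdep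
  refine ⟨K ∙ w, finrank_span_singleton hw, ?_⟩
  intro h hh x
  obtain ⟨c0, c1, hrep⟩ := repr h hh
  have hx : h x = c0 • f x + c1 • g x := by
    have := congrArg (fun φ : U →ₗ[K] V => φ x) hrep
    simpa using this
  obtain ⟨⟨s, hs⟩, ⟨t, ht⟩⟩ := hmul x
  rw [hx, hs, ht]
  exact Submodule.add_mem _
    (Submodule.smul_mem _ _ (Submodule.mem_span_singleton.mpr ⟨s, rfl⟩))
    (Submodule.smul_mem _ _ (Submodule.mem_span_singleton.mpr ⟨t, rfl⟩))
end

section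
/- Let S be a linear subspace of m×n matrices over a field K with more than urk(S) elements, where urk(S) is the maximal rank of a matrix in S. If A₁,...,Aₛ span S and x₁,...,xₛ are indeterminates, then the rank of the matrix x₁A₁+⋯+xₛAₛ over the field K(x₁,...,xₛ) equals urk(S). -/
open Matrix MvPolynomial

section RankLemmas

variable {E : Type*} [Field E]

lemma my_rank_submatrix_le_cols {a b c : Type*} [Fintype a] [Fintype b] [Fintype c]
    (M : Matrix a b E) (u : c → b) : (M.submatrix id u).rank ≤ M.rank := by
  rw [rank_eq_finrank_span_cols, rank_eq_finrank_span_cols]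
  apply Submodule.finrank_mono
  apply Submodule.span_mono
  rintro _ ⟨j, rfl⟩
  exact ⟨u j, rfl⟩

lemma my_rank_submatrix_le {a b a' b' : Type*} [Fintype a] [Fintype b] [Fintype a'] [Fintype b']
    (M : Matrix a b E) (f : a' → a) (g : b' → b) : (M.submatrix f g).rank ≤ M.rank := by
  have h1 : (M.submatrix f g) = (M.submatrix f id).submatrix id g := by
    simp [Matrix.submatrix_submatrix]
  rw [h1]
  refine (my_rank_submatrix_le_cols _ g).trans ?_
  have h2 : (M.submatrix f id) = (Mᵀ.submatrix id f)ᵀ := by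
    ext i j; simp
  rw [h2, rank_transpose]
  refine (my_rank_submatrix_le_cols _ f).trans ?_
  rw [rank_transpose]

lemma my_le_rank_of_det_ne_zero {a b : Type*} [Fintype a] [Fintype b] {k : ℕ}
    (M : Matrix a b E) (f : Fin k → a) (g : Fin k → b)
    (h : (M.submatrix f g).det ≠ 0) : k ≤ M.rank := by
  have hu : IsUnit (M.submatrix f g) :=
    (Matrix.isUnit_iff_isUnit_det _).2 (isUnit_iff_ne_zero.2 h)
  have h2 := Matrix.rank_of_isUnit _ hu
  calc k = (M.submatrix f g).rank := by rw [h2, Fintype.card_fin]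
    _ ≤ M.rank := my_rank_submatrix_le M f g

lemma my_exists_linearIndependent_comp {W : Type*} [AddCommGroup W] [Module E W]
    [FiniteDimensional E W] {ι : Type*} (v : ι → W) (k : ℕ)
    (hk : k ≤ Module.finrank E (Submodule.span E (Set.range v))) :
    ∃ g : Fin k → ι, LinearIndependent E (v ∘ g) := by
  obtain ⟨t, htv, hts, hti⟩ := exists_linearIndependent E (Set.range v)
  have : Finite t := hti.finite_of_isNoetherian
  have : Fintype t := Fintype.ofFinite t
  have hcard : Module.finrank E (Submodule.span E (Set.range v)) = t.toFinset.card := by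
    rw [← hts]; exact finrank_span_set_eq_card hti
  have hk' : k ≤ t.toFinset.card := hcard ▸ hk
  -- build an injection Fin k → t
  have e : t ≃ Fin t.toFinset.card := by
    refine (Fintype.equivFinOfCardEq ?_)
    simp [Set.toFinset_card]
  let emb : Fin k → t := fun j => e.symm (Fin.castLE hk' j)
  have hembinj : Function.Injective emb := by
    intro x y hxy
    have := e.symm.injective hxy
    exact Fin.castLE_injective hk' this
  choose idx hidx using fun x : t => htv x.2
  refine ⟨fun j => idx (emb j), ?_⟩
  have : v ∘ (fun j => idx (emb j)) = (fun x : t => (x : W)) ∘ emb := by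
    funext j; simp [Function.comp, hidx]
  rw [this]
  exact hti.comp emb hembinj

lemma my_exists_det_ne_zero {m' n' : Type*} [Fintype m'] [Fintype n'] {k : ℕ}
    (M : Matrix m' n' E) (hk : k ≤ M.rank) :
    ∃ (f : Fin k → m') (g : Fin k → n'), (M.submatrix f g).det ≠ 0 := by
  classical
  -- step 1: independent columns
  obtain ⟨g, hg⟩ := my_exists_linearIndependent_comp (Mᵀ : n' → m' → E) k
    (by rw [rank_eq_finrank_span_cols] at hk; exact hk)
  -- B1 = M.submatrix id g : Matrix m' (Fin k)
  set B1 : Matrix m' (Fin k) E := M.submatrix id g with hB1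
  have hB1t : B1ᵀ = Mᵀ ∘ g := by ext j i; simp [hB1]; rfl
  have hrankB1 : B1.rank = k := by
    rw [← rank_transpose, hB1t]
    have := (hg).rank_matrix (M := (Mᵀ ∘ g : Matrix (Fin k) m' E))
    simpa using this
  -- step 2: independent rows of B1, i.e. columns of B1ᵀ
  obtain ⟨f, hf⟩ := my_exists_linearIndependent_comp ((B1ᵀ)ᵀ : m' → Fin k → E) k
    (by have h := rank_eq_finrank_span_cols B1ᵀ; rw [rank_transpose, hrankB1] at h; exact h.le)
  refine ⟨f, g, ?_⟩
  have hsq : M.submatrix f g = Matrix.of (fun j : Fin k => B1 (f j)) := by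
    ext j j'; simp [hB1]
  have hli : LinearIndependent E (fun j : Fin k => (M.submatrix f g) j) := by
    rw [hsq]
    exact hf
  have := Matrix.linearIndependent_rows_iff_isUnit.mp hli
  intro hdet
  replace this : IsUnit (M.submatrix f g).det := (Matrix.isUnit_iff_isUnit_det _).mp this
  rw [hdet, isUnit_zero_iff] at this
  exact one_ne_zero (α := E) this.symm

end RankLemmas



lemma my_mv_eq_zero {K : Type*} [Field K] {r : ℕ} (hK : (r : Cardinal) < Cardinal.mk K) :
    ∀ {s : ℕ} (p : MvPolynomial (Fin s) K), (∀ i, p.degreeOf i ≤ r) →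
      (∀ c : Fin s → K, MvPolynomial.eval c p = 0) → p = 0 := by
  intro s
  induction s with
  | zero =>
    intro p _ heval
    apply (MvPolynomial.isEmptyRingEquiv K (Fin 0)).injective
    rw [map_zero]
    convert heval finZeroElim
    obtain ⟨a, rfl⟩ := (MvPolynomial.isEmptyRingEquiv K (Fin 0)).symm.surjective p
    simp [MvPolynomial.coeff_C]
    exact MvPolynomial.coeff_zero_C a
  | succ s ih =>
    intro p hdeg heval
    apply (MvPolynomial.finSuccEquiv K s).injective
    rw [map_zero]
    set q := MvPolynomial.finSuccEquiv K s p with hq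
    refine Polynomial.ext fun k => ?_
    rw [Polynomial.coeff_zero]
    apply ih
    · intro j
      exact (MvPolynomial.degreeOf_coeff_finSuccEquiv p j k).trans (hdeg j.succ)
    · intro c
      have hu : Polynomial.map (MvPolynomial.eval c) q = 0 := by
        apply Polynomial.eq_zero_of_forall_eval_zero_of_natDegree_lt_card
        · intro y
          rw [← MvPolynomial.eval_eq_eval_mv_eval']
          exact heval _
        · refine lt_of_le_of_lt ?_ hK
          have h1 : (Polynomial.map (MvPolynomial.eval c) q).natDegree ≤ q.natDegree :=
            Polynomial.natDegree_map_le
          have h2 : q.natDegree ≤ r := by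
            rw [hq, MvPolynomial.natDegree_finSuccEquiv]
            exact hdeg 0
          exact_mod_cast h1.trans h2
      have := congrArg (fun u => Polynomial.coeff u k) hu
      simpa [Polynomial.coeff_map] using this



lemma my_det_expand {K : Type*} [CommRing K] {s q : ℕ} (B : Fin s → Matrix (Fin q) (Fin q) K) :
    (∑ t, (X t : MvPolynomial (Fin s) K) • (B t).map C).det
      = ∑ u : Fin q → Fin s, (∏ j, (X (u j) : MvPolynomial (Fin s) K)) *
          C (Matrix.of (fun j j' => B (u j) j j')).det := by
  set R := MvPolynomial (Fin s) K
  let f := (detRowAlternating : (Fin q → R) [⋀^Fin q]→ₗ[R] R).toMultilinearMap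
  let g : Fin q → Fin s → (Fin q → R) := fun j t => (X t : R) • (fun j' => C (B t j j'))
  have hrow : (∑ t, (X t : R) • (B t).map C).det = f (fun j => ∑ t, g j t) := by
    congr 1
    refine Matrix.ext fun j j' => ?_
    simp [g, Matrix.sum_apply, Matrix.smul_apply, Matrix.map_apply, smul_eq_mul]
  rw [hrow, f.map_sum g]
  refine Finset.sum_congr rfl fun u _ => ?_
  have hsmul := f.map_smul_univ (fun j => (X (u j) : R)) (fun j j' => C (B (u j) j j'))
  have : (fun j => g j (u j)) = fun j => (X (u j) : R) • (fun j' => C (B (u j) j j')) := rfl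
  rw [this, hsmul, smul_eq_mul]
  congr 1
  have : f (fun j j' => C (B (u j) j j')) = ((Matrix.of (fun j j' => B (u j) j j')).map C).det :=
    rfl
  rw [this]
  have := RingHom.map_det (C : K →+* MvPolynomial (Fin s) K) (Matrix.of (fun j j' => B (u j) j j'))
  rw [RingHom.mapMatrix_apply] at this
  exact this.symm

section
variable {K : Type*} [CommRing K] {s q : ℕ}

lemma my_prod_X_monomial (u : Fin q → Fin s) (t : Finset (Fin q)) :
    (∏ j ∈ t, (X (u j) : MvPolynomial (Fin s) K))
      = monomial (∑ j ∈ t, Finsupp.single (u j) 1) (1 : K) := by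
  classical
  induction t using Finset.induction with
  | empty => simp
  | insert _ _ h ih =>
    rw [Finset.prod_insert h, ih, Finset.sum_insert h, ← pow_one (X (u _)),
      X_pow_eq_monomial, monomial_mul, one_mul]

end

lemma my_det_degreeOf {K : Type*} [Field K] {s r : ℕ}
    (B : Fin s → Matrix (Fin (r + 1)) (Fin (r + 1)) K)
    (hB : ∀ t, (B t).det = 0) (i : Fin s) :
    ((∑ t, (X t : MvPolynomial (Fin s) K) • (B t).map C).det).degreeOf i ≤ r := by
  classical
  rw [my_det_expand]
  have key : ∀ u : Fin (r + 1) → Fin s,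
      ((∏ j, (X (u j) : MvPolynomial (Fin s) K)) *
        C (Matrix.of (fun j j' => B (u j) j j')).det).degreeOf i ≤ r := by
    intro u
    by_cases hconst : ∀ j, u j = u 0
    · have : (Matrix.of (fun j j' => B (u j) j j')) = B (u 0) := by
        ext j j'
        exact congrFun (congrFun (congrArg B (hconst j)) j) j'
      rw [this, hB, map_zero, mul_zero, degreeOf_zero]
      exact Nat.zero_le r
    · rw [my_prod_X_monomial u Finset.univ, mul_comm, C_mul_monomial, mul_one]
      set e : Fin s →₀ ℕ := ∑ j, Finsupp.single (u j) 1 with he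
      have hei : e i ≤ r := by
        have hj0 : ∃ j₀, u j₀ ≠ i := by
          by_contra hc
          push_neg at hc
          exact hconst fun j => (hc j).trans (hc 0).symm
        obtain ⟨j₀, hj₀⟩ := hj0
        have : e i = ∑ j, (Finsupp.single (u j) 1 : Fin s →₀ ℕ) i := by
          rw [he, Finsupp.finset_sum_apply]
        rw [this, ← Finset.add_sum_erase _ _ (Finset.mem_univ j₀)]
        have h1 : (Finsupp.single (u j₀) 1 : Fin s →₀ ℕ) i = 0 := by
          rw [Finsupp.single_apply, if_neg hj₀]
        rw [h1, zero_add]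
        calc ∑ j ∈ Finset.univ.erase j₀, (Finsupp.single (u j) 1 : Fin s →₀ ℕ) i
            ≤ ∑ j ∈ Finset.univ.erase j₀, 1 := by
              refine Finset.sum_le_sum fun j _ => ?_
              rw [Finsupp.single_apply]
              split <;> simp
          _ = r := by
              rw [Finset.sum_const, smul_eq_mul, mul_one, Finset.card_erase_of_mem
                (Finset.mem_univ j₀), Finset.card_univ, Fintype.card_fin,
                Nat.add_sub_cancel]
      rw [degreeOf_le_iff]
      intro m hm
      have := support_monomial_subset hm
      rw [Finset.mem_singleton] at this
      rw [this]
      exact hei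
  exact Finset.sum_induction _ (fun x : MvPolynomial (Fin s) K => degreeOf i x ≤ r)
    (fun a b ha hb => (degreeOf_add_le _ _ _).trans (max_le ha hb))
    (le_of_eq_of_le (degreeOf_zero i) (Nat.zero_le r)) (fun u _ => key u)

lemma my_det_map {R S : Type*} [CommRing R] [CommRing S] (f : R →+* S) {k : ℕ}
    (M : Matrix (Fin k) (Fin k) R) : (M.map f).det = f M.det := by
  rw [RingHom.map_det, RingHom.mapMatrix_apply]

theorem stmt2 {K : Type*} [Field K] {m n s : ℕ}
    (S : Submodule K (Matrix (Fin m) (Fin n) K)) (r : ℕ)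
    (hub : ∀ M ∈ S, M.rank ≤ r) (hmax : ∃ M ∈ S, M.rank = r)
    (hK : (r : Cardinal) < Cardinal.mk K)
    (A : Fin s → Matrix (Fin m) (Fin n) K)
    (hspan : Submodule.span K (Set.range A) = S) :
    (∑ i : Fin s,
      (algebraMap (MvPolynomial (Fin s) K) (FractionRing (MvPolynomial (Fin s) K))
          (MvPolynomial.X i)) •
        (A i).map ((algebraMap (MvPolynomial (Fin s) K)
            (FractionRing (MvPolynomial (Fin s) K))).comp
          (algebraMap K (MvPolynomial (Fin s) K)))).rank = r := by
  classical
  set R : Type _ := MvPolynomial (Fin s) K with hR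
  set F := FractionRing R with hF
  set ψ : R →+* F := algebraMap R F with hψ
  set P : Matrix (Fin m) (Fin n) R := ∑ t, (X t : R) • (A t).map C with hP
  have hAS : ∀ t, A t ∈ S := fun t => hspan ▸ Submodule.subset_span ⟨t, rfl⟩
  -- the matrix in the statement is P.map ψ
  have hM : (∑ i : Fin s, (ψ (X i)) • (A i).map (ψ.comp (algebraMap K R))) = P.map ψ := by
    ext i j
    simp [hP, Matrix.map_apply, Matrix.sum_apply, Matrix.smul_apply, map_sum, _root_.map_mul,
      MvPolynomial.algebraMap_eq, smul_eq_mul]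
    exact Finset.sum_congr rfl fun x _ => by rw [MvPolynomial.algebraMap_eq]
  rw [hM]
  -- submatrices of P
  have hsub : ∀ (k : ℕ) (f : Fin k → Fin m) (g : Fin k → Fin n),
      P.submatrix f g = ∑ t, (X t : R) • ((A t).submatrix f g).map C := by
    intro k f g
    ext i j
    simp [hP, Matrix.sum_apply, Matrix.smul_apply, Matrix.map_apply, Matrix.submatrix_apply,
      smul_eq_mul]
  -- evaluation of minors of P
  have heval : ∀ (c : Fin s → K) (k : ℕ) (f : Fin k → Fin m) (g : Fin k → Fin n),
      MvPolynomial.eval c ((P.submatrix f g).det)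
        = ((∑ t, c t • A t).submatrix f g).det := by
    intro c k f g
    rw [← my_det_map (MvPolynomial.eval c : R →+* K)]
    congr 1
    ext i j
    simp [hP, Matrix.sum_apply, Matrix.smul_apply, Matrix.map_apply, Matrix.submatrix_apply,
      smul_eq_mul]
  have hsum_mem : ∀ c : Fin s → K, (∑ t, c t • A t) ∈ S := fun c =>
    Submodule.sum_mem _ fun t _ => Submodule.smul_mem _ _ (hAS t)
  -- all (r+1)-minors of P vanish
  have hPdet : ∀ (f : Fin (r + 1) → Fin m) (g : Fin (r + 1) → Fin n),
      (P.submatrix f g).det = 0 := by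
    intro f g
    have hB : ∀ t, ((A t).submatrix f g).det = 0 := by
      intro t
      by_contra hd
      have h1 := my_le_rank_of_det_ne_zero (A t) f g hd
      have h2 := hub _ (hAS t)
      omega
    refine my_mv_eq_zero hK _ (fun i => ?_) (fun c => ?_)
    · rw [hsub]
      exact my_det_degreeOf _ hB i
    · rw [heval]
      by_contra hd
      have h1 := my_le_rank_of_det_ne_zero _ f g hd
      have h2 := hub _ (hsum_mem c)
      omega
  -- upper bound
  have hup : (P.map ψ).rank ≤ r := by
    by_contra h
    push_neg at h
    obtain ⟨f, g, hdet⟩ := my_exists_det_ne_zero (P.map ψ) (k := r + 1) (by omega)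
    apply hdet
    have hc : (P.map ψ).submatrix f g = (P.submatrix f g).map ψ := by
      ext i j; simp [Matrix.map_apply, Matrix.submatrix_apply]
    rw [hc, my_det_map, hPdet, map_zero]
  -- lower bound
  obtain ⟨M₀, hM₀S, hM₀rank⟩ := hmax
  have hM₀mem : M₀ ∈ Submodule.span K (Set.range A) := hspan ▸ hM₀S
  obtain ⟨c, hc⟩ := (Submodule.mem_span_range_iff_exists_fun K).mp hM₀mem
  obtain ⟨f, g, hdet⟩ := my_exists_det_ne_zero M₀ (k := r) hM₀rank.ge
  have h1 : MvPolynomial.eval c ((P.submatrix f g).det) ≠ 0 := by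
    rw [heval, hc]
    exact hdet
  have h2 : (P.submatrix f g).det ≠ 0 := fun h0 => h1 (by rw [h0, map_zero])
  have h3 : ((P.map ψ).submatrix f g).det ≠ 0 := by
    have hcomm : (P.map ψ).submatrix f g = (P.submatrix f g).map ψ := by
      ext i j; simp [Matrix.map_apply, Matrix.submatrix_apply]
    rw [hcomm, my_det_map]
    intro h0
    exact h2 (IsFractionRing.injective R F (by rw [h0, map_zero]))
  have hlow := my_le_rank_of_det_ne_zero (P.map ψ) f g h3
  omega
end

section
/- Flanders-Atkinson lemma: Let 1 ≤ r ≤ min(m,n) with card(K) > r. Let J_r be the m×n matrix with I_r in the top-left block and zeros elsewhere, and let M = [[A,C],[B,D]] be an m×n matrix partitioned accordingly. If every linear combination of J_r and M has rank at most r, then D = 0 and B A^k C = 0 for every natural number k. -/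
set_option maxHeartbeats 1000000

open Polynomial Matrix

namespace FlandersAux

variable {K : Type*} [Field K]


lemma rank_submatrix_le' {m n m' n' : Type*} [Fintype m] [Fintype n] [Fintype m'] [Fintype n']
    [DecidableEq m] [DecidableEq n] [DecidableEq m'] [DecidableEq n']
    (N : Matrix m n K) (ρ : m' → m) (γ : n' → n) :
    (N.submatrix ρ γ).rank ≤ N.rank := by
  have h1 : N.submatrix ρ γ =
      (Matrix.of fun a b => if ρ a = b then (1:K) else 0) * N *
      (Matrix.of fun b a => if γ a = b then (1:K) else 0) := by
    ext a b
    simp [Matrix.mul_apply, ite_mul, mul_ite, Finset.sum_ite_eq, Finset.sum_ite_eq']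
  rw [h1]
  exact le_trans (Matrix.rank_mul_le_left _ _) (Matrix.rank_mul_le_right _ _)

lemma mapC_mul_coeff {m n o : Type*} [Fintype n] (M : Matrix m n K) (N : Matrix n o K[X])
    (k : ℕ) (i : m) (j : o) :
    ((M.map Polynomial.C * N) i j).coeff k
      = (M * Matrix.of fun a b => (N a b).coeff k) i j := by
  simp [Matrix.mul_apply, Polynomial.finset_sum_coeff, Polynomial.coeff_C_mul]

lemma mul_mapC_coeff {m n o : Type*} [Fintype n] (N : Matrix m n K[X]) (M : Matrix n o K)
    (k : ℕ) (i : m) (j : o) :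
    ((N * M.map Polynomial.C) i j).coeff k
      = ((Matrix.of fun a b => (N a b).coeff k) * M) i j := by
  simp [Matrix.mul_apply, Polynomial.finset_sum_coeff, Polynomial.coeff_mul_C]


lemma charmatrix_neg_eq {r : ℕ} (A : Matrix (Fin r) (Fin r) K) :
    charmatrix (-A) = (X : K[X]) • (1 : Matrix (Fin r) (Fin r) K[X]) + A.map Polynomial.C := by
  ext a b
  by_cases hab : a = b <;>
    simp [charmatrix_apply, Matrix.one_apply, Matrix.diagonal_apply, hab]

lemma charmatrix_neg_eval {r : ℕ} (A : Matrix (Fin r) (Fin r) K) (x : K) :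
    (charmatrix (-A)).map (Polynomial.evalRingHom x) = x • (1 : Matrix (Fin r) (Fin r) K) + A := by
  ext a b
  by_cases hab : a = b <;>
    simp [charmatrix_apply, Matrix.one_apply, Matrix.diagonal_apply, hab]

lemma natDegree_det_border_le {r : ℕ} (A : Matrix (Fin r) (Fin r) K) (c : Matrix (Fin r) Unit K)
    (b : Matrix Unit (Fin r) K) (δ : Matrix Unit Unit K) :
    (Matrix.det (Matrix.fromBlocks (charmatrix (-A)) (c.map Polynomial.C)
      (b.map Polynomial.C) (δ.map Polynomial.C))).natDegree ≤ r := by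
  set U := Matrix.fromBlocks (charmatrix (-A)) (c.map Polynomial.C)
      (b.map Polynomial.C) (δ.map Polynomial.C) with hU
  have hle : ∀ a (l : Fin r), (U a (Sum.inl l)).natDegree ≤ 1 := by
    rintro (a | a) l
    · by_cases hal : a = l <;>
        simp [hU, charmatrix_apply, Matrix.diagonal_apply, hal, Polynomial.natDegree_X_sub_C]
    · simp [hU]
  have h0 : ∀ a (u : Unit), (U a (Sum.inr u)).natDegree = 0 := by
    rintro (a | a) u <;> simp [hU]
  rw [Matrix.det_apply']
  refine Polynomial.natDegree_sum_le_of_forall_le _ _ fun σ _ => ?_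
  refine le_trans (Polynomial.natDegree_mul_le) ?_
  have hε : ((Equiv.Perm.sign σ : ℤ) : K[X]).natDegree = 0 := Polynomial.natDegree_intCast _
  rw [hε, zero_add]
  refine le_trans (Polynomial.natDegree_prod_le _ _) ?_
  rw [Fintype.sum_sum_type]
  calc (∑ l : Fin r, (U (σ (Sum.inl l)) (Sum.inl l)).natDegree)
        + ∑ u : Unit, (U (σ (Sum.inr u)) (Sum.inr u)).natDegree
      ≤ (∑ _l : Fin r, 1) + ∑ _u : Unit, 0 := by
        gcongr with l _ u
        · exact hle _ l
        · exact le_of_eq (h0 _ u)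
    _ ≤ r := by simp


lemma border_identity {r : ℕ} (A : Matrix (Fin r) (Fin r) K) (c : Matrix (Fin r) Unit K)
    (b : Matrix Unit (Fin r) K) (δ : Matrix Unit Unit K)
    (hdet : Matrix.det (Matrix.fromBlocks (charmatrix (-A)) (c.map Polynomial.C)
      (b.map Polynomial.C) (δ.map Polynomial.C)) = 0) :
    (b.map Polynomial.C * adjugate (charmatrix (-A)) * c.map Polynomial.C) () ()
      = (-A).charpoly * Polynomial.C (δ () ()) := by
  classical
  set F := FractionRing (Polynomial K)
  set ψ : K[X] →+* F := (algebraMap K[X] F : K[X] →+* F) with hψdef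
  have hψ : Function.Injective ψ := IsFractionRing.injective _ _
  set W := charmatrix (-A) with hWdef
  set W' : Matrix (Fin r) (Fin r) F := W.map ψ with hW'def
  have hdW : W'.det = ψ ((-A).charpoly) := by
    rw [Matrix.charpoly, RingHom.map_det]
    rfl
  have hunit : IsUnit W'.det := by
    rw [hdW, isUnit_iff_ne_zero]
    intro h0
    exact (Matrix.charpoly_monic (-A)).ne_zero (hψ (by simpa using h0))
  haveI : Invertible W' := W'.invertibleOfIsUnitDet hunit
  have h0 : (0 : F) = W'.det *
      Matrix.det (δ.map (ψ.comp Polynomial.C) - b.map (ψ.comp Polynomial.C) * ⅟W' * c.map (ψ.comp Polynomial.C)) := by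
    have e1 : (0 : F) = ψ (Matrix.det (Matrix.fromBlocks W (c.map Polynomial.C)
        (b.map Polynomial.C) (δ.map Polynomial.C))) := by rw [hdet, map_zero]
    rw [e1, RingHom.map_det, RingHom.mapMatrix_apply, Matrix.fromBlocks_map,
      Matrix.det_fromBlocks₁₁]
    simp [Matrix.map_map]
    rfl
  have hd0 : Matrix.det (δ.map (ψ.comp Polynomial.C) - b.map (ψ.comp Polynomial.C) * ⅟W' * c.map (ψ.comp Polynomial.C)) = 0 := by
    rcases mul_eq_zero.mp h0.symm with h | h
    · exact absurd h hunit.ne_zero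
    · exact h
  rw [Matrix.det_unique, Matrix.sub_apply] at hd0
  have hSchur : (δ.map (ψ.comp Polynomial.C)) default default
      = (b.map (ψ.comp Polynomial.C) * ⅟W' * c.map (ψ.comp Polynomial.C)) default default :=
    sub_eq_zero.mp hd0
  have hadj : adjugate W' = W'.det • ⅟W' := by
    calc adjugate W' = ⅟W' * (W' * adjugate W') := by
          rw [← Matrix.mul_assoc, invOf_mul_self, Matrix.one_mul]
      _ = ⅟W' * (W'.det • 1) := by rw [Matrix.mul_adjugate]
      _ = W'.det • ⅟W' := by rw [Matrix.mul_smul, Matrix.mul_one]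
  have hmain : (b.map (ψ.comp Polynomial.C) * adjugate W' * c.map (ψ.comp Polynomial.C)) default default
      = W'.det * (δ.map (ψ.comp Polynomial.C)) default default := by
    rw [hadj, Matrix.mul_smul, Matrix.smul_mul, Matrix.smul_apply, hSchur]
    rfl
  apply hψ
  have lhs : ψ ((b.map Polynomial.C * adjugate W * c.map Polynomial.C) () ())
      = (b.map (ψ.comp Polynomial.C) * adjugate W' * c.map (ψ.comp Polynomial.C)) default default := by
    have e_b : (b.map Polynomial.C).map (ψ : K[X] → F) = b.map (ψ.comp Polynomial.C) := by
      rw [Matrix.map_map]; rfl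
    have e_c : (c.map Polynomial.C).map (ψ : K[X] → F) = c.map (ψ.comp Polynomial.C) := by
      rw [Matrix.map_map]; rfl
    have e_adj : (adjugate W).map (ψ : K[X] → F) = adjugate W' := RingHom.map_adjugate ψ W
    have : (b.map Polynomial.C * adjugate W * c.map Polynomial.C).map (ψ : K[X] → F)
        = b.map (ψ.comp Polynomial.C) * adjugate W' * c.map (ψ.comp Polynomial.C) := by
      rw [Matrix.map_mul (f := ψ), Matrix.map_mul (f := ψ), e_b, e_c, e_adj]
    rw [← this]
    rfl
  rw [lhs, hmain, _root_.map_mul, hdW]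
  rfl


lemma extract {r p q : ℕ} (hr : 1 ≤ r) (A : Matrix (Fin r) (Fin r) K)
    (Cm : Matrix (Fin r) (Fin q) K) (Bm : Matrix (Fin p) (Fin r) K) (Dm : Matrix (Fin p) (Fin q) K)
    (key : Bm.map Polynomial.C * adjugate (charmatrix (-A)) * Cm.map Polynomial.C
      = (-A).charpoly • Dm.map Polynomial.C) :
    Dm = 0 ∧ ∀ k : ℕ, Bm * A ^ k * Cm = 0 := by
  classical
  set W := charmatrix (-A) with hWdef
  set d := (-A).charpoly with hddef
  set P : ℕ → Matrix (Fin r) (Fin r) K :=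
    fun k => Matrix.of fun a b => ((adjugate W) a b).coeff k with hPdef
  -- coefficient extraction from `key`
  have hBPC : ∀ k, d.coeff k • Dm = Bm * P k * Cm := by
    intro k
    ext i j
    have h1 := congrArg (fun M => (M i j).coeff k) key
    beta_reduce at h1
    have e1 : ((Bm.map Polynomial.C * adjugate W * Cm.map Polynomial.C) i j).coeff k
        = (Bm * P k * Cm) i j := by
      rw [mul_mapC_coeff]
      have e2 : (Matrix.of fun a b => ((Bm.map Polynomial.C * adjugate W) a b).coeff k)
          = Bm * P k := by
        ext a b
        exact mapC_mul_coeff Bm (adjugate W) k a b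
      rw [e2]
    have e3 : ((d • Dm.map Polynomial.C) i j).coeff k = d.coeff k * Dm i j := by
      rw [Matrix.smul_apply, Matrix.map_apply, smul_eq_mul, Polynomial.coeff_mul_C]
    rw [e1, e3] at h1
    rw [Matrix.smul_apply, smul_eq_mul, ← h1]
  -- the adjugate recurrence
  have hsplit : (X : K[X]) • adjugate W + (A.map Polynomial.C) * adjugate W
      = d • (1 : Matrix (Fin r) (Fin r) K[X]) := by
    calc (X : K[X]) • adjugate W + (A.map Polynomial.C) * adjugate W
        = ((X : K[X]) • (1 : Matrix (Fin r) (Fin r) K[X]) + A.map Polynomial.C) * adjugate W := by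
          rw [Matrix.add_mul, Matrix.smul_mul, Matrix.one_mul]
      _ = W * adjugate W := by rw [hWdef, charmatrix_neg_eq]
      _ = d • 1 := by rw [Matrix.mul_adjugate, hWdef, hddef, Matrix.charpoly]
  have hrel : ∀ k, P k + A * P (k + 1) = d.coeff (k + 1) • (1 : Matrix (Fin r) (Fin r) K) := by
    intro k
    ext a b
    have h1 := congrArg (fun M => (M a b).coeff (k + 1)) hsplit
    beta_reduce at h1
    have lhs1 : (((X : K[X]) • adjugate W + (A.map Polynomial.C) * adjugate W) a b).coeff (k+1)
        = (P k + A * P (k+1)) a b := by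
      rw [Matrix.add_apply, Polynomial.coeff_add, Matrix.smul_apply, smul_eq_mul,
        Polynomial.coeff_X_mul, mapC_mul_coeff, Matrix.add_apply]
      rfl
    have rhs1 : ((d • (1 : Matrix (Fin r) (Fin r) K[X])) a b).coeff (k+1)
        = (d.coeff (k+1) • (1 : Matrix (Fin r) (Fin r) K)) a b := by
      by_cases hab : a = b <;> simp [Matrix.smul_apply, Matrix.one_apply, hab]
    rw [lhs1, rhs1] at h1
    exact h1
  have hrel0 : A * P 0 = d.coeff 0 • (1 : Matrix (Fin r) (Fin r) K) := by
    ext a b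
    have h1 := congrArg (fun M => (M a b).coeff 0) hsplit
    beta_reduce at h1
    have lhs1 : (((X : K[X]) • adjugate W + (A.map Polynomial.C) * adjugate W) a b).coeff 0
        = (A * P 0) a b := by
      rw [Matrix.add_apply, Polynomial.coeff_add, Matrix.smul_apply, smul_eq_mul,
        Polynomial.mul_coeff_zero, Polynomial.coeff_X_zero, zero_mul, zero_add,
        mapC_mul_coeff]
    have rhs1 : ((d • (1 : Matrix (Fin r) (Fin r) K[X])) a b).coeff 0
        = (d.coeff 0 • (1 : Matrix (Fin r) (Fin r) K)) a b := by
      by_cases hab : a = b <;> simp [Matrix.smul_apply, Matrix.one_apply, hab]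
    rw [lhs1, rhs1] at h1
    exact h1
  have hdeg : d.natDegree = r := by
    rw [hddef, Matrix.charpoly_natDegree_eq_dim, Fintype.card_fin]
  have hcoeffr : d.coeff r = 1 := by
    rw [← hdeg]
    exact (Matrix.charpoly_monic (-A)).coeff_natDegree
  -- vanishing of high coefficients
  have hN : ∀ a b, ((adjugate W) a b).natDegree < r + 1 := by
    intro a b
    rw [Matrix.adjugate_apply, Matrix.det_apply']
    refine Nat.lt_succ_of_le (Polynomial.natDegree_sum_le_of_forall_le _ _ fun σ _ => ?_)
    refine le_trans Polynomial.natDegree_mul_le ?_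
    rw [Polynomial.natDegree_intCast, zero_add]
    refine le_trans (Polynomial.natDegree_prod_le _ _) ?_
    have hent : ∀ l : Fin r, ((W.updateRow b (Pi.single a 1)) (σ l) l).natDegree ≤ 1 := by
      intro l
      rcases eq_or_ne (σ l) b with hσ | hσ
      · rw [hσ, Matrix.updateRow_self]
        rcases eq_or_ne l a with hla | hla <;> simp [Pi.single_apply, hla]
      · rw [Matrix.updateRow_ne hσ, hWdef]
        rcases eq_or_ne (σ l) l with hd | hd <;>
          simp [charmatrix_apply, Matrix.diagonal_apply, hd, Polynomial.natDegree_X_sub_C]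
    calc ∑ l, ((W.updateRow b (Pi.single a 1)) (σ l) l).natDegree
        ≤ ∑ _l : Fin r, 1 := Finset.sum_le_sum fun l _ => hent l
      _ = r := by simp
  set N : ℕ := r + 1 with hNdef
  have hbig : ∀ k, N ≤ k → P k = 0 := by
    intro k hk
    ext a b
    simpa [hPdef] using Polynomial.coeff_eq_zero_of_natDegree_lt (lt_of_lt_of_le (hN a b) hk)
  clear_value N
  have hdesc : ∀ k, r ≤ k → P k = (-A) * P (k + 1) := by
    intro k hk
    have h2 : d.coeff (k + 1) = 0 :=
      Polynomial.coeff_eq_zero_of_natDegree_lt (by rw [hdeg]; omega)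
    have h1 := hrel k
    rw [h2, zero_smul] at h1
    rw [Matrix.neg_mul]
    exact eq_neg_of_add_eq_zero_left h1
  have hiter : ∀ m k, r ≤ k → P k = (-A) ^ m * P (k + m) := by
    intro m
    induction m with
    | zero => intro k hk; simp
    | succ m ih =>
      intro k hk
      have hidx : k + (m + 1) = k + 1 + m := by omega
      rw [hidx, hdesc k hk, ih (k + 1) (by omega), ← Matrix.mul_assoc, ← pow_succ']
  have hvanish : ∀ k, r ≤ k → P k = 0 := by
    intro k hk
    rw [hiter N k hk, hbig (k + N) (by omega), Matrix.mul_zero]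
  have hD : Dm = 0 := by
    have h1 := hBPC r
    rw [hcoeffr, one_smul, hvanish r le_rfl, Matrix.mul_zero, Matrix.zero_mul] at h1
    exact h1
  have hBP : ∀ k, Bm * P k * Cm = 0 := by
    intro k
    rw [← hBPC k, hD, smul_zero]
  have hPr1 : P (r - 1) = 1 := by
    have h1 := hrel (r - 1)
    rw [Nat.sub_add_cancel hr, hvanish r le_rfl, Matrix.mul_zero, add_zero, hcoeffr,
      one_smul] at h1
    exact h1
  have claim : ∀ j k, Bm * (A ^ j * P k) * Cm = 0 := by
    intro j
    induction j with
    | zero => intro k; simpa using hBP k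
    | succ j ih =>
      have hBAC : Bm * A ^ j * Cm = 0 := by
        have h1 := ih (r - 1)
        rwa [hPr1, Matrix.mul_one] at h1
      intro k
      have hs : A ^ (j + 1) * P k = A ^ j * (A * P k) := by rw [pow_succ, Matrix.mul_assoc]
      cases k with
      | zero =>
        rw [hs, hrel0, mul_smul_comm, Matrix.mul_one, Matrix.mul_smul, Matrix.smul_mul,
          hBAC, smul_zero]
      | succ k' =>
        have h1 : A * P (k' + 1) = d.coeff (k' + 1) • 1 - P k' := eq_sub_of_add_eq' (hrel k')
        rw [hs, h1, Matrix.mul_sub, mul_smul_comm, Matrix.mul_one, Matrix.mul_sub,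
          Matrix.sub_mul, Matrix.mul_smul, Matrix.smul_mul, hBAC, smul_zero, ih k', sub_zero]
  refine ⟨hD, fun k => ?_⟩
  have h1 := claim k (r - 1)
  rwa [hPr1, Matrix.mul_one] at h1

end FlandersAux

theorem stmt4 {K : Type*} [Field K] {r p q : ℕ} (hr : 1 ≤ r)
    (hK : (r : Cardinal) < Cardinal.mk K)
    (A : Matrix (Fin r) (Fin r) K) (C : Matrix (Fin r) (Fin q) K)
    (B : Matrix (Fin p) (Fin r) K) (D : Matrix (Fin p) (Fin q) K)
    (h : ∀ α β : K,
      (α • Matrix.fromBlocks (1 : Matrix (Fin r) (Fin r) K) 0 0 0 +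
        β • Matrix.fromBlocks A C B D).rank ≤ r) :
    D = 0 ∧ ∀ k : ℕ, B * A ^ k * C = 0 := by
  classical
  have hrank : ∀ x : K,
      (Matrix.fromBlocks (x • (1 : Matrix (Fin r) (Fin r) K) + A) C B D).rank ≤ r := by
    intro x
    have h1 := h x 1
    rw [one_smul] at h1
    have e : x • (Matrix.fromBlocks (1 : Matrix (Fin r) (Fin r) K) 0 0 0) +
        Matrix.fromBlocks A C B D = Matrix.fromBlocks (x • 1 + A) C B D := by
      rw [Matrix.fromBlocks_smul, Matrix.fromBlocks_add]
      simp
    rwa [e] at h1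
  have hdet0 : ∀ (x : K) (i : Fin p) (j : Fin q),
      Matrix.det (Matrix.fromBlocks (x • (1 : Matrix (Fin r) (Fin r) K) + A)
        (Matrix.of fun a (_ : Unit) => C a j) (Matrix.of fun (_ : Unit) b => B i b)
        (Matrix.of fun (_ : Unit) (_ : Unit) => D i j)) = 0 := by
    intro x i j
    set T := Matrix.fromBlocks (x • (1 : Matrix (Fin r) (Fin r) K) + A)
        (Matrix.of fun a (_ : Unit) => C a j) (Matrix.of fun (_ : Unit) b => B i b)
        (Matrix.of fun (_ : Unit) (_ : Unit) => D i j) with hTdef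
    have hsub : T = (Matrix.fromBlocks (x • 1 + A) C B D).submatrix
        (Sum.map id fun _ : Unit => i) (Sum.map id fun _ : Unit => j) := by
      ext (a | a) (b | b) <;> rfl
    have hrkT : T.rank ≤ r := by
      rw [hsub]
      exact le_trans (FlandersAux.rank_submatrix_le' _ _ _) (hrank x)
    by_contra hne
    have hu : IsUnit T := T.isUnit_iff_isUnit_det.mpr (isUnit_iff_ne_zero.mpr hne)
    have hrk := T.rank_of_isUnit hu
    have hcard : Fintype.card (Fin r ⊕ Unit) = r + 1 := by simp
    rw [hrk, hcard] at hrkT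
    omega
  have hdetpoly : ∀ (i : Fin p) (j : Fin q),
      Matrix.det (Matrix.fromBlocks (charmatrix (-A))
        ((Matrix.of fun a (_ : Unit) => C a j).map Polynomial.C)
        ((Matrix.of fun (_ : Unit) b => B i b).map Polynomial.C)
        ((Matrix.of fun (_ : Unit) (_ : Unit) => D i j).map Polynomial.C)) = 0 := by
    intro i j
    set U := Matrix.fromBlocks (charmatrix (-A))
        ((Matrix.of fun a (_ : Unit) => C a j).map Polynomial.C)
        ((Matrix.of fun (_ : Unit) b => B i b).map Polynomial.C)
        ((Matrix.of fun (_ : Unit) (_ : Unit) => D i j).map Polynomial.C) with hUdef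
    apply Polynomial.eq_zero_of_forall_eval_zero_of_natDegree_lt_card
    · intro x
      have h1 := RingHom.map_det (Polynomial.evalRingHom x) U
      rw [RingHom.mapMatrix_apply] at h1
      have h2 : U.map (Polynomial.evalRingHom x)
          = Matrix.fromBlocks (x • (1 : Matrix (Fin r) (Fin r) K) + A)
            (Matrix.of fun a (_ : Unit) => C a j) (Matrix.of fun (_ : Unit) b => B i b)
            (Matrix.of fun (_ : Unit) (_ : Unit) => D i j) := by
        have e1 : ((Matrix.of fun a (_ : Unit) => C a j).map Polynomial.C).map
            (Polynomial.evalRingHom x) = Matrix.of fun a (_ : Unit) => C a j := by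
          ext a b; simp
        have e2 : ((Matrix.of fun (_ : Unit) b => B i b).map Polynomial.C).map
            (Polynomial.evalRingHom x) = Matrix.of fun (_ : Unit) b => B i b := by
          ext a b; simp
        have e3 : ((Matrix.of fun (_ : Unit) (_ : Unit) => D i j).map Polynomial.C).map
            (Polynomial.evalRingHom x) = Matrix.of fun (_ : Unit) (_ : Unit) => D i j := by
          ext a b; simp
        rw [hUdef, Matrix.fromBlocks_map, FlandersAux.charmatrix_neg_eval, e1, e2, e3]
      have h3 : Polynomial.eval x U.det = Polynomial.evalRingHom x U.det := rfl
      rw [h3, h1, h2, hdet0 x i j]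
    · have hle : (U.det.natDegree : Cardinal) ≤ (r : Cardinal) :=
        Nat.cast_le.mpr (FlandersAux.natDegree_det_border_le A _ _ _)
      exact lt_of_le_of_lt hle hK
  have key : B.map Polynomial.C * adjugate (charmatrix (-A)) * C.map Polynomial.C
      = (-A).charpoly • D.map Polynomial.C := by
    ext i j
    have h1 := FlandersAux.border_identity A (Matrix.of fun a (_ : Unit) => C a j)
      (Matrix.of fun (_ : Unit) b => B i b) (Matrix.of fun (_ : Unit) (_ : Unit) => D i j)
      (hdetpoly i j)
    have e : (B.map Polynomial.C * adjugate (charmatrix (-A)) * C.map Polynomial.C) i j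
        = ((Matrix.of fun (_ : Unit) b => B i b).map Polynomial.C * adjugate (charmatrix (-A))
            * (Matrix.of fun a (_ : Unit) => C a j).map Polynomial.C) () () := by
      simp [Matrix.mul_apply]
    rw [e, h1]
    simp [Matrix.smul_apply]
  exact FlandersAux.extract hr A C B D key
end

section
/- Let S be a finite-dimensional subspace of L(U,V), and let x₀ ∈ U be such that the rank of the evaluation map φ : f ↦ f(x₀) on S is maximal among all evaluation maps f ↦ f(x), x ∈ U. Assume card(K) > rk φ. Then for every f ∈ S with f(x₀) = 0, the image of f is contained in the image of φ, i.e. f(x) ∈ {g(x₀) : g ∈ S} for all x ∈ U. -/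
open LinearMap Module Matrix Polynomial Submodule

theorem stmt5 {K U V : Type*} [Field K] [AddCommGroup U] [Module K U]
    [AddCommGroup V] [Module K V] (S : Submodule K (U →ₗ[K] V))
    [FiniteDimensional K S] (x₀ : U)
    (hopt : ∀ x : U, LinearMap.rank ((LinearMap.applyₗ x) ∘ₗ S.subtype) ≤
      LinearMap.rank ((LinearMap.applyₗ x₀) ∘ₗ S.subtype))
    (hK : ((Module.finrank K
        (LinearMap.range ((LinearMap.applyₗ x₀) ∘ₗ S.subtype)) : ℕ) : Cardinal)
      < Cardinal.mk K) :
    ∀ f ∈ S, f x₀ = 0 → ∀ x : U,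
      f x ∈ LinearMap.range ((LinearMap.applyₗ x₀) ∘ₗ S.subtype) := by
  classical
  intro f hfS hf0 x
  set φ := (LinearMap.applyₗ x₀) ∘ₗ S.subtype with hφ
  set W := LinearMap.range φ with hWdef
  by_contra hb
  set r := Module.finrank K W with hrdef
  set b := f x with hbdef
  have hb0 : b ≠ 0 := fun h => hb (h ▸ W.zero_mem)
  -- basis of W
  let w : Basis (Fin r) K W := Module.finBasis K W
  have hmem : ∀ i, ((w i : V)) ∈ W := fun i => (w i).2
  choose g hg using hmem
  have hg' : ∀ i, (g i : U →ₗ[K] V) x₀ = (w i : V) := hg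
  set a : Fin r → V := fun i => (g i : U →ₗ[K] V) x with hadef
  -- linearly independent family e
  set e : Fin r ⊕ Fin 1 → V := Sum.elim (fun i => (w i : V)) (fun _ => b) with hedef
  have hspanw : Submodule.span K (Set.range fun i => (w i : V)) = W := by
    have : (Set.range fun i => (w i : V)) = W.subtype '' (Set.range w) := by
      rw [← Set.range_comp]; rfl
    rw [this, ← Submodule.map_span, w.span_eq, Submodule.map_top, Submodule.range_subtype]
  have he : LinearIndependent K e := by
    rw [hedef, linearIndependent_sum, Sum.elim_comp_inl, Sum.elim_comp_inr]
    refine ⟨w.linearIndependent.map' W.subtype W.ker_subtype, ?_, ?_⟩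
    · exact LinearIndependent.of_subsingleton 0 hb0
    · have h5 : (Set.range fun _ : Fin 1 => b) = {b} := Set.range_const
      rw [h5, hspanw]
      exact (Submodule.disjoint_span_singleton' hb0).mpr hb
  -- dual family
  set E := Submodule.span K (Set.range e) with hEdef
  obtain ⟨F, hF⟩ := E.exists_isCompl
  let bE : Basis (Fin r ⊕ Fin 1) K E := Basis.span he
  set μ : Fin r ⊕ Fin 1 → (V →ₗ[K] K) :=
    fun j => (bE.coord j) ∘ₗ (E.linearProjOfIsCompl F hF) with hμdef
  have hμ : ∀ i j, μ j (e i) = if i = j then 1 else 0 := by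
    intro i j
    have h2 : ((bE i : E) : V) = e i := congrArg Subtype.val (Basis.span_apply he i)
    have h1 : (E.linearProjOfIsCompl F hF) (e i) = bE i := by
      rw [← h2]; exact Submodule.linearProjOfIsCompl_apply_left hF (bE i)
    simp only [hμdef, LinearMap.comp_apply, h1, Basis.coord_apply, bE.repr_self_apply]
  -- the family of vectors at s
  set v : K → (Fin r ⊕ Fin 1) → V :=
    fun s => Sum.elim (fun i => s • (w i : V) + a i) (fun _ => b) with hvdef
  have hμw : ∀ i j, μ j ((w i : V)) = if (Sum.inl i : Fin r ⊕ Fin 1) = j then 1 else 0 :=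
    fun i j => hμ (Sum.inl i) j
  have hμb : ∀ j, μ j b = if (Sum.inr 0 : Fin r ⊕ Fin 1) = j then 1 else 0 :=
    fun j => hμ (Sum.inr 0) j
  -- determinant vanishing
  set A2 : Matrix (Fin r) (Fin r) K := Matrix.of fun i j => μ (Sum.inl j) (a i) with hA2
  have hdet : ∀ s : K, (s • (1 : Matrix (Fin r) (Fin r) K) + A2).det = 0 := by
    intro s
    set y := s • x₀ + x with hy
    set Rs := LinearMap.range ((LinearMap.applyₗ y) ∘ₗ S.subtype) with hRs
    have hvmem : ∀ i, v s i ∈ Rs := by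
      rintro (i | i)
      · refine ⟨g i, ?_⟩
        show (g i : U →ₗ[K] V) y = v s (Sum.inl i)
        rw [hy, map_add, LinearMap.map_smul, hg']
        simp [hvdef, hadef]
      · refine ⟨⟨f, hfS⟩, ?_⟩
        show f y = v s (Sum.inr i)
        rw [hy, map_add, LinearMap.map_smul, hf0]
        simp [hvdef, hbdef]
    have hRsrank : Module.finrank K Rs ≤ r := by
      apply Module.finrank_le_of_rank_le
      calc Module.rank K Rs ≤ LinearMap.rank φ := hopt y
      _ = (r : Cardinal) := by
          rw [hrdef, Module.finrank_eq_rank]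
    have hnli : ¬ LinearIndependent K (v s) := by
      intro hli
      have hli' : LinearIndependent K (fun i => (⟨v s i, hvmem i⟩ : Rs)) :=
        hli.of_comp Rs.subtype
      have := hli'.fintype_card_le_finrank
      simp only [Fintype.card_sum, Fintype.card_fin] at this
      omega
    obtain ⟨c, hcsum, i0, hi0⟩ := Fintype.not_linearIndependent_iff.mp hnli
    have hc0 : c ≠ 0 := fun h => hi0 (by rw [h]; rfl)
    set M : Matrix (Fin r ⊕ Fin 1) (Fin r ⊕ Fin 1) K :=
      Matrix.of fun i j => μ j (v s i) with hM
    have hvm : c ᵥ* M = 0 := by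
      ext j
      have h3 : (c ᵥ* M) j = ∑ i, c i * μ j (v s i) := rfl
      have h4 : ∑ i, c i * μ j (v s i) = μ j (∑ i, c i • v s i) := by
        rw [map_sum]
        refine Finset.sum_congr rfl fun i _ => ?_
        rw [LinearMap.map_smul, smul_eq_mul]
      rw [h3, h4, hcsum, map_zero, Pi.zero_apply]
    have hdetM : M.det = 0 :=
      Matrix.exists_vecMul_eq_zero_iff.mp ⟨c, hc0, hvm⟩
    have hblock : M = Matrix.fromBlocks
        (s • (1 : Matrix (Fin r) (Fin r) K) + A2)
        (Matrix.of fun i (_ : Fin 1) => μ (Sum.inr 0) (a i)) 0 1 := by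
      ext i j
      rcases i with i | i <;> rcases j with j | j
      · simp only [hM, Matrix.of_apply, hvdef, Sum.elim_inl, map_add,
          LinearMap.map_smul, Matrix.fromBlocks_apply₁₁, Matrix.add_apply,
          Matrix.smul_apply, Matrix.one_apply, hA2, smul_eq_mul, hμw]
        simp [Sum.inl.injEq]
      · have hj : j = 0 := Subsingleton.elim _ _
        simp only [hM, Matrix.of_apply, hvdef, Sum.elim_inl, map_add,
          LinearMap.map_smul, Matrix.fromBlocks_apply₁₂, hj, smul_eq_mul, hμw]
        simp
      · simp only [hM, Matrix.of_apply, hvdef, Sum.elim_inr,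
          Matrix.fromBlocks_apply₂₁, Matrix.zero_apply, hμb]
        simp
      · have hi : i = 0 := Subsingleton.elim _ _
        have hj : j = 0 := Subsingleton.elim _ _
        simp only [hM, Matrix.of_apply, hvdef, Sum.elim_inr,
          Matrix.fromBlocks_apply₂₂, hi, hj, hμb]
        simp [Matrix.one_apply]
    rw [hblock, Matrix.det_fromBlocks_zero₂₁, Matrix.det_one, mul_one] at hdetM
    exact hdetM
  -- polynomial argument
  set p : Polynomial K := (-A2).charpoly with hp
  have hmap : ∀ s : K, (Matrix.charmatrix (-A2)).map (Polynomial.evalRingHom s)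
      = s • (1 : Matrix (Fin r) (Fin r) K) + A2 := by
    intro s
    ext i j
    by_cases hij : i = j
    · subst hij
      simp [Matrix.charmatrix_apply_eq, Matrix.one_apply]
    · simp [Matrix.charmatrix_apply_ne _ _ _ hij, Matrix.one_apply, hij]
  have heval : ∀ s : K, p.eval s = 0 := by
    intro s
    have h1 : p.eval s = ((Polynomial.evalRingHom s : K[X] →+* K)) p := rfl
    rw [h1, hp, Matrix.charpoly, RingHom.map_det, RingHom.mapMatrix_apply, hmap s, hdet s]
  have hpz : p = 0 := by
    apply Polynomial.eq_zero_of_forall_eval_zero_of_natDegree_lt_card p heval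
    rw [hp, Matrix.charpoly_natDegree_eq_dim, Fintype.card_fin]
    exact hK
  exact (Matrix.charpoly_monic (-A2)).ne_zero hpz
end

section
/- Let S be an n-dimensional c-LLD subspace of L(U,V) over a field K with card(K) > n − c. Then there exist a subspace T of S with dim T ≥ c and a subspace V₀ of V with dim V₀ ≤ n − c such that the image of every f ∈ T is contained in V₀. -/
open Module LinearMap Polynomial

theorem stmt7 {K U V : Type*} [Field K] [AddCommGroup U] [Module K U]
    [AddCommGroup V] [Module K V] {n c : ℕ} (S : Submodule K (U →ₗ[K] V))
    (hdim : Module.finrank K S = n) (hc1 : 1 ≤ c) (hcn : c ≤ n)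
    (hK : ((n - c : ℕ) : Cardinal) < Cardinal.mk K)
    (hLLD : ∀ x : U,
      c ≤ Module.finrank K ↥(S ⊓ LinearMap.ker (LinearMap.applyₗ x))) :
    ∃ T : Submodule K (U →ₗ[K] V), T ≤ S ∧ c ≤ Module.finrank K T ∧
      ∃ V₀ : Submodule K V, Module.finrank K V₀ ≤ n - c ∧
        ∀ f ∈ T, ∀ x : U, f x ∈ V₀ := by
  classical
  haveI hSfd : FiniteDimensional K S :=
    Module.finite_of_finrank_pos (by rw [hdim]; omega)
  set ev : U → (↥S →ₗ[K] V) := fun x => (LinearMap.applyₗ x).comp S.subtype with hev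
  have hker : ∀ x : U, Module.finrank K ↥(LinearMap.ker (ev x)) =
      Module.finrank K ↥(S ⊓ LinearMap.ker (LinearMap.applyₗ x)) := by
    intro x
    have h1 : LinearMap.ker (ev x)
        = Submodule.comap S.subtype (S ⊓ LinearMap.ker (LinearMap.applyₗ x)) := by
      ext ⟨g, hg⟩
      simp [ev, hg]
    rw [h1]
    exact (Submodule.comapSubtypeEquivOfLe inf_le_left).finrank_eq
  have hrn : ∀ x : U, Module.finrank K ↥(LinearMap.range (ev x)) +
      Module.finrank K ↥(LinearMap.ker (ev x)) = n := by
    intro x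
    rw [LinearMap.finrank_range_add_finrank_ker, hdim]
  have hre : ∀ x : U, Module.finrank K ↥(LinearMap.range (ev x)) ≤ n - c := by
    intro x
    have h1 := hLLD x
    have h2 := hrn x
    have h3 := hker x
    omega
  obtain ⟨x₀, hx₀⟩ : ∃ x₀ : U, ∀ x : U,
      Module.finrank K ↥(LinearMap.range (ev x)) ≤
        Module.finrank K ↥(LinearMap.range (ev x₀)) := by
    have hne : (Set.range fun x => Module.finrank K ↥(LinearMap.range (ev x))).Nonempty :=
      ⟨_, 0, rfl⟩
    have hbdd : BddAbove (Set.range fun x => Module.finrank K ↥(LinearMap.range (ev x))) :=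
      ⟨n - c, by rintro _ ⟨x, rfl⟩; exact hre x⟩
    obtain ⟨x₀, hx₀⟩ := Nat.sSup_mem hne hbdd
    exact ⟨x₀, fun x => (le_csSup hbdd ⟨x, rfl⟩).trans hx₀.ge⟩
  refine ⟨S ⊓ LinearMap.ker (LinearMap.applyₗ x₀), inf_le_left, hLLD x₀,
    LinearMap.range (ev x₀), ?_, ?_⟩
  · have h1 := hLLD x₀
    have h2 := hrn x₀
    have h3 := hker x₀
    omega
  intro f hf x
  by_contra hfx
  obtain ⟨hfS, hfk⟩ := hf
  have hfx₀ : f x₀ = 0 := hfk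
  set V₀ := LinearMap.range (ev x₀) with hV₀
  set r := Module.finrank K ↥V₀ with hr
  have hrnc : r ≤ n - c := hre x₀
  haveI : FiniteDimensional K ↥V₀ := Module.Finite.range _
  let b₀ : Basis (Fin r) K ↥V₀ := Module.finBasis K ↥V₀
  have hgch : ∀ i : Fin r, ∃ g : ↥S, (g : U →ₗ[K] V) x₀ = (b₀ i : V) := by
    intro i
    obtain ⟨g, hg⟩ := (b₀ i).2
    exact ⟨g, hg⟩
  choose g hg using hgch
  -- the family w : basis of V₀ together with f x
  let w : Option (Fin r) → V := fun o => Option.casesOn' o (f x) (fun i => (b₀ i : V))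
  have hspan : Submodule.span K (Set.range fun i : Fin r => (b₀ i : V)) = V₀ := by
    have : (Set.range fun i : Fin r => (b₀ i : V)) = V₀.subtype '' Set.range b₀ := by
      rw [← Set.range_comp]; rfl
    rw [this, Submodule.span_image, b₀.span_eq, Submodule.map_top, Submodule.range_subtype]
  have hvli : LinearIndependent K (fun i : Fin r => (b₀ i : V)) :=
    b₀.linearIndependent.map' V₀.subtype (Submodule.ker_subtype _)
  have hWli : LinearIndependent K w :=
    linearIndependent_option'.2 ⟨hvli, by rwa [hspan]⟩
  set W' := Submodule.span K (Set.range w) with hW'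
  let bW : Basis (Option (Fin r)) K ↥W' := Basis.span hWli
  obtain ⟨Q, hQ⟩ := Submodule.exists_isCompl W'
  let π : V →ₗ[K] ↥W' := Submodule.linearProjOfIsCompl W' Q hQ
  let ψ : Option (Fin r) → (V →ₗ[K] K) := fun j => (bW.coord j).comp π
  have hψw : ∀ j i, ψ j (w i) = if i = j then 1 else 0 := by
    intro j i
    have hwi : w i ∈ W' := Submodule.subset_span ⟨i, rfl⟩
    have hπ : π (w i) = bW i := by
      have h1 : π (⟨w i, hwi⟩ : W') = ⟨w i, hwi⟩ :=
        Submodule.linearProjOfIsCompl_apply_left hQ ⟨w i, hwi⟩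
      have h2 : (bW i : V) = w i := congrArg Subtype.val (Basis.span_apply hWli i)
      apply Subtype.ext
      have h3 : π (w i) = π (⟨w i, hwi⟩ : W') := rfl
      rw [h3, h1]
      exact h2.symm
    have : ψ j (w i) = bW.repr (bW i) j := by
      simp only [ψ, LinearMap.comp_apply, hπ, Basis.coord_apply]
    rw [this, Basis.repr_self, Finsupp.single_apply]
  -- evaluations of the chosen operators
  have hψg : ∀ j i, ψ (some j) ((g i : U →ₗ[K] V) x₀) = if i = j then 1 else 0 := by
    intro j i
    have := hψw (some j) (some i)
    simp only [hg i] at *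
    simpa [w] using this
  have hψf : ∀ j, ψ (some j) (f x) = 0 := by
    intro j
    have := hψw (some j) none
    simpa [w] using this
  have hfxne : f x ≠ 0 := by
    intro h
    exact hfx (h ▸ V₀.zero_mem)
  set M : Matrix (Fin r) (Fin r) K := fun j i => ψ (some j) ((g i : U →ₗ[K] V) x) with hM
  have hdet : ∀ s : K, (M + s • 1).det = 0 := by
    intro s
    set y := x + s • x₀ with hy
    obtain ⟨cv, hc0, hcsum⟩ : ∃ cv : Option (Fin r) → K, cv ≠ 0 ∧
        (∑ i : Option (Fin r),
          cv i • ((Option.casesOn' i ⟨f, hfS⟩ g : ↥S) : U →ₗ[K] V) y) = 0 := by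
      by_contra hcon
      push_neg at hcon
      let G : Option (Fin r) → ↥S := fun o => Option.casesOn' o ⟨f, hfS⟩ g
      let vy : Option (Fin r) → ↥(LinearMap.range (ev y)) :=
        fun i => ⟨(G i : U →ₗ[K] V) y, ⟨G i, rfl⟩⟩
      let Φ : (Option (Fin r) → K) →ₗ[K] ↥(LinearMap.range (ev y)) :=
        Fintype.linearCombination K vy
      have hΦinj : Function.Injective Φ := by
        rw [← LinearMap.ker_eq_bot, LinearMap.ker_eq_bot']
        intro cv hcv
        by_contra hne
        refine hcon cv hne ?_
        have := congrArg (Subtype.val) hcv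
        simpa [Φ, Fintype.linearCombination_apply, vy, G] using this
      have hle := LinearMap.finrank_le_finrank_of_injective hΦinj
      have h1 : Module.finrank K (Option (Fin r) → K) = r + 1 := by
        simp [Module.finrank_pi]
      have h2 := hx₀ y
      omega
    set a : Fin r → K := fun i => cv (some i) with ha
    set b : K := cv none with hb
    have hfy : f y = f x := by
      simp [hy, map_add, map_smul, hfx₀]
    have hsum2 : b • f x + ∑ i : Fin r, a i • (g i : U →ₗ[K] V) y = 0 := by
      rw [← hfy]
      rw [Fintype.sum_option] at hcsum
      simpa [Option.casesOn'] using hcsum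
    have hane : a ≠ 0 := by
      intro h0
      have hb0 : b • f x = 0 := by
        have := hsum2
        rw [h0] at this
        simpa using this
      have hb' : b = 0 := by
        rcases smul_eq_zero.mp hb0 with h | h
        · exact h
        · exact absurd h hfxne
      apply hc0
      funext o
      cases o with
      | none => exact hb'
      | some i => exact congrFun h0 i
    have hmv : (M + s • (1 : Matrix (Fin r) (Fin r) K)).mulVec a = 0 := by
      funext j
      have happ := congrArg (ψ (some j)) hsum2
      rw [map_add, map_smul, map_sum, hψf j, smul_zero, zero_add, map_zero] at happ
      have hterm : ∀ i : Fin r, ψ (some j) (a i • (g i : U →ₗ[K] V) y)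
          = (M + s • (1 : Matrix (Fin r) (Fin r) K)) j i * a i := by
        intro i
        have hgy : (g i : U →ₗ[K] V) y = (g i : U →ₗ[K] V) x + s • (g i : U →ₗ[K] V) x₀ := by
          simp [hy, map_add, map_smul]
        rw [map_smul, hgy, map_add, map_smul, hψg j i]
        simp only [Matrix.add_apply, Matrix.smul_apply, Matrix.one_apply, hM, smul_eq_mul]
        by_cases hij : i = j
        · subst hij; simp only [← hM, Matrix.add_apply, Matrix.smul_apply]; simp [hM, mul_comm]
        · have : ¬ (j = i) := fun h => hij h.symm
          simp only [← hM, Matrix.add_apply, Matrix.smul_apply]; simp [hM, hij, this, mul_comm, Matrix.one_apply]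
      rw [Finset.sum_congr rfl (fun i _ => hterm i)] at happ
      simpa [Matrix.mulVec, dotProduct] using happ
    exact Matrix.exists_mulVec_eq_zero_iff.mp ⟨a, hane, hmv⟩
  -- the characteristic polynomial of -M has too many roots
  set p : Polynomial K := Matrix.charpoly (-M) with hp
  have hpm : p.Monic := Matrix.charpoly_monic _
  have hpd : p.natDegree = r := by
    rw [hp, Matrix.charpoly_natDegree_eq_dim, Fintype.card_fin]
  have hpe : ∀ s : K, p.eval s = (M + s • 1).det := by
    intro s
    have h1 : p.eval s = ((Matrix.charmatrix (-M)).map (Polynomial.evalRingHom s)).det := by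
      rw [hp, Matrix.charpoly, ← RingHom.mapMatrix_apply, ← RingHom.map_det]
      rfl
    rw [h1]
    congr 1
    ext j i
    by_cases hij : j = i
    · subst hij
      simp [Matrix.charmatrix_apply_eq, Matrix.one_apply]
      ring
    · simp [Matrix.charmatrix_apply_ne _ _ _ hij, Matrix.one_apply, hij]
  have hp0 : p ≠ 0 := hpm.ne_zero
  have hplt : (p.natDegree : Cardinal) < Cardinal.mk K := by
    rw [hpd]
    exact lt_of_le_of_lt (by exact_mod_cast Nat.cast_le.mpr hrnc) hK
  have : p = 0 :=
    Polynomial.eq_zero_of_forall_eval_zero_of_natDegree_lt_card p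
      (fun s => by rw [hpe, hdet]) hplt
  exact hp0 this
end

section
/- Let K be a finite field with q elements and S an n-dimensional c-LLD subspace of L(U,V) with 1 ≤ c ≤ n−1. Then at least q^c elements of S have rank at most n − c. -/
open Module Submodule LinearMap Finset

section Aux
variable {K U V : Type*} [Field K] [Fintype K] [AddCommGroup U] [Module K U]
  [AddCommGroup V] [Module K V]

private lemma final_arith (q u c n m t : ℕ) (hq : 2 ≤ q) (hc : 1 ≤ c)
    (hmdef : m = n - c + 1) (hcn : c + 1 ≤ n) (hum : m ≤ u) (ht1 : 1 ≤ t) (htn : t ≤ q ^ n)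
    (hineq : q ^ u * q ^ c ≤ q ^ u + (t - 1) * q ^ (u - 1) + (q ^ n - t) * q ^ (u - m)) :
    q ^ c ≤ t := by
  by_contra hlt
  push_neg at hlt
  set a := q ^ (u - m) with ha
  set b := q ^ (n - c) with hb
  have hu1 : q ^ u = a * (b * q) := by
    rw [ha, hb, ← pow_succ, ← pow_add]; congr 1; omega
  have hu2 : q ^ (u - 1) = a * b := by
    rw [ha, hb, ← pow_add]; congr 1; omega
  have hn1 : q ^ n = b * q ^ c := by
    rw [hb, ← pow_add]; congr 1; omega
  have ha1 : 1 ≤ a := Nat.one_le_pow _ _ (by omega)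
  have hb1 : q ≤ b := by
    rw [hb]
    calc q = q ^ 1 := (pow_one q).symm
    _ ≤ q ^ (n - c) := Nat.pow_le_pow_right (by omega) (by omega)
  have hqc : q ≤ q ^ c := by
    calc q = q ^ 1 := (pow_one q).symm
    _ ≤ q ^ c := Nat.pow_le_pow_right (by omega) (by omega)
  rw [hu1, hu2, hn1] at hineq
  have hineq2 : b * q * q ^ c ≤ b * q + (t - 1) * b + (b * q ^ c - t) := by
    apply Nat.le_of_mul_le_mul_left ?_ (show 0 < a by omega)
    calc a * (b * q * q ^ c) = a * (b * q) * q ^ c := by ring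
    _ ≤ a * (b * q) + (t - 1) * (a * b) + (b * q ^ c - t) * a := hineq
    _ = a * (b * q + (t - 1) * b + (b * q ^ c - t)) := by ring
  have htb : t ≤ b * q ^ c := by rw [← hn1]; exact htn
  zify [ht1, htb] at hineq2
  have hlt' : (t : ℤ) ≤ (q : ℤ) ^ c - 1 := by
    have : (t : ℤ) < (q : ℤ) ^ c := by exact_mod_cast hlt
    omega
  have h1 : (t : ℤ) ≤ (b : ℤ) * ((q : ℤ) + t - 1 + (q : ℤ) ^ c - q * q ^ c) := by nlinarith
  have h2 : (q : ℤ) + t - 1 + (q : ℤ) ^ c - q * q ^ c ≤ 0 := by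
    have hp : (0 : ℤ) ≤ ((q : ℤ) - 2) * ((q : ℤ) ^ c - 1) := by
      apply mul_nonneg <;> [skip; skip] <;>
        · have : (2 : ℤ) ≤ q := by exact_mod_cast hq
          have : (2 : ℤ) ≤ (q : ℤ) ^ c := by exact_mod_cast hqc.trans' hq
          omega
    nlinarith
  have h3 : (b : ℤ) * ((q : ℤ) + t - 1 + (q : ℤ) ^ c - q * q ^ c) ≤ 0 :=
    mul_nonpos_of_nonneg_of_nonpos (by positivity) h2
  have : (1 : ℤ) ≤ t := by exact_mod_cast ht1
  linarith


private lemma myFinite (M : Type*) [AddCommGroup M] [Module K M] [FiniteDimensional K M] :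
    Finite M :=
  Finite.of_equiv _ (Module.finBasis K M).equivFun.toEquiv.symm

private lemma card_pow (M : Type*) [AddCommGroup M] [Module K M] [FiniteDimensional K M] :
    Nat.card M = Fintype.card K ^ Module.finrank K M := by
  classical
  rw [Nat.card_congr (Module.finBasis K M).equivFun.toEquiv]
  simp [Nat.card_eq_fintype_card]

private lemma exists_good (m : ℕ) (hm1 : 1 ≤ m) (f : U →ₗ[K] V) :
    ∃ W : Submodule K U, FiniteDimensional K W ∧
      (f ≠ 0 → ∃ x ∈ W, f x ≠ 0) ∧
      ((m : Cardinal) ≤ LinearMap.rank f → m ≤ finrank K (W.map f)) := by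
  classical
  by_cases hr : (m : Cardinal) ≤ LinearMap.rank f
  · obtain ⟨s, hcard, hind⟩ := LinearMap.le_rank_iff_exists_linearIndependent_finset.mp hr
    refine ⟨span K (s : Set U), FiniteDimensional.span_of_finite K s.finite_toSet, ?_, fun _ => ?_⟩
    · intro _
      have hne : s.Nonempty := by
        rw [← Finset.card_pos, hcard]; omega
      obtain ⟨x, hx⟩ := hne
      refine ⟨x, Submodule.subset_span hx, ?_⟩
      exact hind.ne_zero (⟨x, hx⟩ : (s : Set U))
    · -- m ≤ finrank of map
      have hmem : ∀ x : (s : Set U), f x ∈ (span K (s : Set U)).map f := by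
        intro x
        exact Submodule.mem_map_of_mem (Submodule.subset_span x.2)
      set w := fun x : (s : Set U) => (⟨f ↑x, hmem x⟩ : ↥((span K (s : Set U)).map f)) with hw
      have hwind : LinearIndependent K w := by
        apply LinearIndependent.of_comp ((span K (s : Set U)).map f).subtype
        convert hind
        rfl
      have := hwind.fintype_card_le_finrank
      rwa [← hcard, ← Fintype.card_coe s]
  · by_cases hf : f = 0
    · exact ⟨⊥, inferInstance, fun h => absurd hf h, fun h => absurd h hr⟩
    · obtain ⟨x, hx⟩ := DFunLike.ne_iff.mp hf
      refine ⟨span K {x}, FiniteDimensional.span_of_finite K (Set.finite_singleton x),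
        fun _ => ⟨x, Submodule.mem_span_singleton_self x, by simpa using hx⟩,
        fun h => absurd h hr⟩


end Aux

theorem stmt8 {K U V : Type*} [Field K] [Fintype K] [AddCommGroup U] [Module K U]
    [AddCommGroup V] [Module K V] {n c : ℕ} (S : Submodule K (U →ₗ[K] V))
    (hdim : Module.finrank K S = n) (hc1 : 1 ≤ c) (hcn : c ≤ n - 1)
    (hLLD : ∀ x : U,
      c ≤ Module.finrank K ↥(S ⊓ LinearMap.ker (LinearMap.applyₗ x))) :
    (Fintype.card K) ^ c ≤
      {f : U →ₗ[K] V | f ∈ S ∧ LinearMap.rank f ≤ ((n - c : ℕ) : Cardinal)}.ncard := by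
  classical
  have hq2 : 2 ≤ Fintype.card K := Fintype.one_lt_card
  have hn : c + 1 ≤ n := by omega
  haveI hSfd : FiniteDimensional K ↥S :=
    FiniteDimensional.of_finrank_pos (by rw [hdim]; omega)
  haveI : Finite ↥S := myFinite (K := K) _
  haveI : Fintype ↥S := Fintype.ofFinite _
  set q := Fintype.card K with hq
  set m : ℕ := n - c + 1 with hm
  choose W hWfd hW1 hW2 using exists_good (K := K) (U := U) (V := V) m (by omega)
  haveI : ∀ f : ↥S, FiniteDimensional K (W (f : U →ₗ[K] V)) := fun f => hWfd _
  set U₀ : Submodule K U := ⨆ f : ↥S, W (f : U →ₗ[K] V) with hU₀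
  haveI hU₀fd : FiniteDimensional K ↥U₀ := Submodule.finiteDimensional_iSup _
  haveI : Finite ↥U₀ := myFinite (K := K) _
  haveI : Fintype ↥U₀ := Fintype.ofFinite _
  have hWle : ∀ f : ↥S, W (f : U →ₗ[K] V) ≤ U₀ :=
    fun f => le_iSup (fun f : ↥S => W (f : U →ₗ[K] V)) f
  set u := finrank K ↥U₀ with hu
  set TF : Finset ↥S :=
    univ.filter (fun f => LinearMap.rank (f : U →ₗ[K] V) ≤ ((n - c : ℕ) : Cardinal)) with hTF
  have hTFmem : ∀ f : ↥S,
      f ∈ TF ↔ LinearMap.rank (f : U →ₗ[K] V) ≤ ((n - c : ℕ) : Cardinal) := by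
    intro f; simp [hTF]
  have hseteq : {f : U →ₗ[K] V | f ∈ S ∧ LinearMap.rank f ≤ ((n - c : ℕ) : Cardinal)}
      = ↑(TF.image Subtype.val) := by
    ext g
    simp only [Set.mem_setOf_eq, Finset.coe_image, Set.mem_image, Finset.mem_coe]
    constructor
    · rintro ⟨hg1, hg2⟩
      exact ⟨⟨g, hg1⟩, (hTFmem _).2 hg2, rfl⟩
    · rintro ⟨f, hf, rfl⟩
      exact ⟨f.2, (hTFmem f).1 hf⟩
  rw [hseteq, Set.ncard_coe_finset, Finset.card_image_of_injective _ Subtype.val_injective]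
  have hcardS : Fintype.card ↥S = q ^ n := by
    rw [← Nat.card_eq_fintype_card, card_pow (K := K), hdim]
  have hcardE : Fintype.card ↥U₀ = q ^ u := by
    rw [← Nat.card_eq_fintype_card, card_pow (K := K), hu]
  have hTFcard_le : TF.card ≤ q ^ n :=
    (Finset.card_le_univ TF).trans hcardS.le
  have h0TF : (0 : ↥S) ∈ TF := by
    rw [hTFmem]
    have h0 : ((0 : ↥S) : U →ₗ[K] V) = 0 := rfl
    rw [h0, LinearMap.rank_zero]
    exact zero_le
  have ht1 : 1 ≤ TF.card := Finset.card_pos.2 ⟨0, h0TF⟩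
  by_cases hall : TF = univ
  · rw [hall, Finset.card_univ, hcardS]
    exact Nat.pow_le_pow_right (by omega) (by omega)
  obtain ⟨f₀, hf₀⟩ : ∃ f : ↥S, f ∉ TF := by
    by_contra h; push_neg at h; exact hall (Finset.eq_univ_iff_forall.2 h)
  -- counting functions
  set cnt : ↥S → ℕ :=
    fun f => (univ.filter (fun x : ↥U₀ => (f : U →ₗ[K] V) (x : U) = 0)).card with hcntdef
  set cntx : ↥U₀ → ℕ :=
    fun x => (univ.filter (fun f : ↥S => (f : U →ₗ[K] V) (x : U) = 0)).card with hcntxdef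
  have hswap : ∑ f : ↥S, cnt f = ∑ x : ↥U₀, cntx x := by
    simp only [hcntdef, hcntxdef, Finset.card_filter]
    exact Finset.sum_comm
  -- lower bound for each x
  have hlow : ∀ x : ↥U₀, q ^ c ≤ cntx x := by
    intro x
    set P := Submodule.comap S.subtype (LinearMap.ker (LinearMap.applyₗ (x : U))) with hP
    have hPrank : c ≤ finrank K ↥P := by
      have hPeq : P = Submodule.comap S.subtype
          (S ⊓ LinearMap.ker (LinearMap.applyₗ (x : U))) := by
        rw [Submodule.comap_inf, Submodule.comap_subtype_self, top_inf_eq]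
      have e := Submodule.comapSubtypeEquivOfLe
        (inf_le_left : S ⊓ LinearMap.ker (LinearMap.applyₗ (x : U)) ≤ S)
      rw [hPeq, e.finrank_eq]
      exact hLLD (x : U)
    have hcard : q ^ c ≤ Nat.card ↥P := by
      rw [card_pow (K := K)]
      exact Nat.pow_le_pow_right (by omega) hPrank
    have hle : Nat.card ↥P ≤ cntx x := by
      rw [Nat.card_eq_fintype_card]
      have hx : cntx x = Fintype.card {f : ↥S // (f : U →ₗ[K] V) (x : U) = 0} :=
        (Fintype.card_subtype _).symm
      rw [hx]
      apply Fintype.card_le_of_injective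
        (fun g : ↥P => (⟨g.1, by
          have hg := g.2
          simp only [hP, Submodule.mem_comap, LinearMap.mem_ker] at hg
          simpa using hg⟩ : {f : ↥S // (f : U →ₗ[K] V) (x : U) = 0}))
      intro a b hab
      exact Subtype.ext (congrArg Subtype.val hab)
    exact hcard.trans hle
  -- per f card formula
  have hcnt : ∀ f : ↥S,
      cnt f = q ^ (finrank K ↥(LinearMap.ker ((f : U →ₗ[K] V).domRestrict U₀))) := by
    intro f
    have e : {x : ↥U₀ // (f : U →ₗ[K] V) (x : U) = 0}
        ≃ ↥(LinearMap.ker ((f : U →ₗ[K] V).domRestrict U₀)) :=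
      Equiv.subtypeEquivRight (by intro x; simp [LinearMap.mem_ker])
    have h1 : cnt f = Fintype.card {x : ↥U₀ // (f : U →ₗ[K] V) (x : U) = 0} :=
      (Fintype.card_subtype _).symm
    rw [h1, ← Nat.card_eq_fintype_card, Nat.card_congr e, card_pow (K := K)]
  -- kernel dimension bounds
  have hb1 : ∀ f : ↥S, f ≠ 0 →
      finrank K ↥(LinearMap.ker ((f : U →ₗ[K] V).domRestrict U₀)) ≤ u - 1 := by
    intro f hf
    have hfv : (f : U →ₗ[K] V) ≠ 0 := fun h => hf (Subtype.ext h)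
    obtain ⟨x, hxW, hx0⟩ := hW1 (f : U →ₗ[K] V) hfv
    have hxU : x ∈ U₀ := hWle f hxW
    have hne : LinearMap.ker ((f : U →ₗ[K] V).domRestrict U₀) ≠ ⊤ := by
      intro h
      have hmem : (⟨x, hxU⟩ : ↥U₀) ∈ LinearMap.ker ((f : U →ₗ[K] V).domRestrict U₀) := by
        rw [h]; exact Submodule.mem_top
      rw [LinearMap.mem_ker, LinearMap.domRestrict_apply] at hmem
      exact hx0 hmem
    have := Submodule.finrank_lt (K := K) hne
    omega
  have hb2 : ∀ f : ↥S, f ∉ TF →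
      finrank K ↥(LinearMap.ker ((f : U →ₗ[K] V).domRestrict U₀)) ≤ u - m ∧ m ≤ u := by
    intro f hf
    rw [hTFmem] at hf
    have hrk : ((n - c : ℕ) : Cardinal) < LinearMap.rank (f : U →ₗ[K] V) := not_le.mp hf
    have hrk2 : ((m : ℕ) : Cardinal) ≤ LinearMap.rank (f : U →ₗ[K] V) := by
      have h := Order.succ_le_of_lt hrk
      rwa [← Cardinal.nat_succ] at h
    have h1 : m ≤ finrank K ↥((W (f : U →ₗ[K] V)).map (f : U →ₗ[K] V)) :=
      hW2 (f : U →ₗ[K] V) hrk2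
    haveI : FiniteDimensional K ↥(U₀.map (f : U →ₗ[K] V)) := Module.Finite.map _ _
    have h2 : finrank K ↥((W (f : U →ₗ[K] V)).map (f : U →ₗ[K] V))
        ≤ finrank K ↥(U₀.map (f : U →ₗ[K] V)) :=
      Submodule.finrank_mono (Submodule.map_mono (hWle f))
    have h3 : U₀.map (f : U →ₗ[K] V) = LinearMap.range ((f : U →ₗ[K] V).domRestrict U₀) :=
      (LinearMap.range_domRestrict _ _).symm
    have h4 := LinearMap.finrank_range_add_finrank_ker ((f : U →ₗ[K] V).domRestrict U₀)
    rw [← h3] at h4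
    rw [← hu] at h4
    omega
  have hum : m ≤ u := (hb2 f₀ hf₀).2
  -- assemble upper bound
  have hupper : ∑ f : ↥S, cnt f
      ≤ q ^ u + (TF.card - 1) * q ^ (u - 1) + (q ^ n - TF.card) * q ^ (u - m) := by
    have hsplit : ∑ f : ↥S, cnt f = ∑ f ∈ univ \ TF, cnt f + ∑ f ∈ TF, cnt f :=
      (Finset.sum_sdiff (Finset.subset_univ TF)).symm
    have h0 : ∑ f ∈ TF, cnt f = cnt 0 + ∑ f ∈ TF.erase 0, cnt f :=
      (Finset.add_sum_erase TF cnt h0TF).symm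
    have hA : cnt 0 ≤ q ^ u := by
      rw [hcnt 0]
      exact Nat.pow_le_pow_right (by omega) (Submodule.finrank_le _)
    have hB : ∑ f ∈ TF.erase 0, cnt f ≤ (TF.card - 1) * q ^ (u - 1) := by
      refine le_trans (Finset.sum_le_card_nsmul _ _ (q ^ (u - 1)) ?_) ?_
      · intro f hf
        rw [hcnt f]
        exact Nat.pow_le_pow_right (by omega) (hb1 f (Finset.ne_of_mem_erase hf))
      · rw [smul_eq_mul, Finset.card_erase_of_mem h0TF]
    have hC : ∑ f ∈ univ \ TF, cnt f ≤ (q ^ n - TF.card) * q ^ (u - m) := by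
      refine le_trans (Finset.sum_le_card_nsmul _ _ (q ^ (u - m)) ?_) ?_
      · intro f hf
        rw [hcnt f]
        exact Nat.pow_le_pow_right (by omega)
          ((hb2 f (Finset.mem_sdiff.mp hf).2).1)
      · rw [smul_eq_mul, Finset.card_sdiff_of_subset (Finset.subset_univ TF), Finset.card_univ, hcardS]
    omega
  -- assemble lower bound
  have hlower : q ^ u * q ^ c ≤ ∑ x : ↥U₀, cntx x := by
    have := Finset.card_nsmul_le_sum univ cntx (q ^ c) (fun x _ => hlow x)
    rwa [Finset.card_univ, hcardE, smul_eq_mul] at this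
  exact final_arith q u c n m TF.card hq2 hc1 hm hn hum ht1 hTFcard_le
    (by rw [hswap] at hupper; exact hlower.trans hupper)
end

section
/- Let L be a field extension of K of finite degree d, and V a finite-dimensional L-vector space. For every K-linear subspace W of V whose K-dimension is a multiple of d, there exists an L-linear subspace W' of V with V = W ⊕ W' (as K-vector spaces). -/
open Module Submodule Polynomial

-- Pencil lemma: if φ has max rank r among the pencil φ + t•ψ, and ψ maps some
-- kernel vector of φ outside range φ, contradiction (K infinite).
lemma pencil_lemma {K : Type*} [Field K] [Infinite K] {A Q : Type*}
    [AddCommGroup A] [Module K A] [AddCommGroup Q] [Module K Q] [FiniteDimensional K Q]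
    (φ ψ : A →ₗ[K] Q) {r : ℕ} (hr : Module.finrank K (LinearMap.range φ) = r)
    (hmax : ∀ t : K, Module.finrank K (LinearMap.range (φ + t • ψ)) ≤ r)
    {x : A} (hx : φ x = 0) (hψx : ψ x ∉ LinearMap.range φ) : False := by
  classical
  -- basis of range φ and preimages
  let bR : Basis (Fin r) K (LinearMap.range φ) :=
    (Module.finBasis K (LinearMap.range φ)).reindex (finCongr hr)
  have hby : ∀ i : Fin r, ∃ y : A, φ y = (bR i : Q) := fun i => (bR i).2
  choose y hy using hby
  -- the family z
  set z : Fin (r+1) → Q := Fin.cons (ψ x) (fun i => φ (y i)) with hz_def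
  have htail_indep : LinearIndependent K (fun i : Fin r => φ (y i)) := by
    have : (fun i : Fin r => φ (y i)) = (LinearMap.range φ).subtype ∘ (fun i => bR i) := by
      funext i; simp [hy]
    rw [this]
    exact bR.linearIndependent.map' _ (Submodule.ker_subtype _)
  have htail_span : Submodule.span K (Set.range (fun i : Fin r => φ (y i)))
      = LinearMap.range φ := by
    have h1 : (Set.range (fun i : Fin r => φ (y i)))
        = (LinearMap.range φ).subtype '' (Set.range (fun i => bR i)) := by
      rw [← Set.range_comp]
      exact congrArg Set.range (funext fun i => by simp [hy])
    rw [h1, ← Submodule.map_span, bR.span_eq, Submodule.map_subtype_top]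
  have hz : LinearIndependent K z := by
    rw [hz_def, linearIndependent_fin_cons]
    exact ⟨htail_indep, by rw [htail_span]; exact hψx⟩
  -- a coordinate functional Λ with Λ (z j) = Pi.single j 1
  have hzmem : ∀ j, z j ∈ Submodule.span K (Set.range z) :=
    fun j => Submodule.subset_span (Set.mem_range_self j)
  set S : Submodule K Q := Submodule.span K (Set.range z) with hS_def
  let bS : Basis (Fin (r+1)) K S := Basis.span hz
  obtain ⟨Cc, hC⟩ := Submodule.exists_isCompl S
  set proj : Q →ₗ[K] S := S.linearProjOfIsCompl Cc hC with hproj_def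
  set Λ : Q →ₗ[K] (Fin (r+1) → K) :=
    (Finsupp.linearEquivFunOnFinite K K (Fin (r+1))).toLinearMap.comp
      (bS.repr.toLinearMap.comp proj) with hΛ_def
  have hΛz : ∀ j, Λ (z j) = Pi.single j 1 := by
    intro j
    have h1 : proj (z j) = bS j := by
      have h2 : proj (z j) = ⟨z j, hzmem j⟩ :=
        Submodule.linearProjOfIsCompl_apply_left hC ⟨z j, hzmem j⟩
      have h3 : bS j = ⟨z j, hzmem j⟩ := Basis.span_apply hz j
      rw [h2, h3]
    simp only [hΛ_def, LinearMap.comp_apply, LinearEquiv.coe_toLinearMap, h1,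
      Basis.repr_self, Finsupp.linearEquivFunOnFinite_single]
  -- polynomial matrix: row j gives coordinates of the j-th vector of the pencil family
  set N : Matrix (Fin (r+1)) (Fin (r+1)) (Polynomial K) := fun j =>
    Fin.cases (fun i => Polynomial.C (Λ (ψ x) i))
      (fun j' i => Polynomial.C (Λ (φ (y j')) i) + Polynomial.X * Polynomial.C (Λ (ψ (y j')) i))
      j with hN_def
  have hN0 : N.map (Polynomial.eval 0) = (1 : Matrix (Fin (r+1)) (Fin (r+1)) K) := by
    ext j i
    rw [Matrix.map_apply]
    refine Fin.cases ?_ (fun j' => ?_) j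
    · have : z 0 = ψ x := by rw [hz_def]; rfl
      simp only [hN_def, Matrix.map_apply, ← this, hΛz, Matrix.one_apply, Pi.single_apply,
        eq_comm, Fin.cases_zero]
      split_ifs <;> simp
    · have : z j'.succ = φ (y j') := by rw [hz_def]; simp
      simp only [hN_def, Matrix.map_apply, ← this, hΛz, Matrix.one_apply, Pi.single_apply,
        eq_comm, Fin.cases_succ]
      split_ifs <;> simp
  set p : Polynomial K := N.det with hp_def
  have hp0 : Polynomial.eval 0 p = 1 := by
    have := RingHom.map_det (Polynomial.evalRingHom (0 : K)) N
    simp only [hp_def]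
    rw [show (Polynomial.eval 0 N.det) = (Polynomial.evalRingHom (0:K)) N.det from rfl, this,
      RingHom.mapMatrix_apply]
    have h4 : N.map (Polynomial.evalRingHom (0:K)) = N.map (Polynomial.eval 0) := rfl
    rw [h4, hN0, Matrix.det_one]
  have hpne : p ≠ 0 := fun h => by simp [h] at hp0
  -- pick t₀ ≠ 0 with eval t₀ p ≠ 0
  obtain ⟨t₀, ht₀mem⟩ := Infinite.exists_notMem_finset (Polynomial.X * p).roots.toFinset
  have hXp : (Polynomial.X * p) ≠ 0 := mul_ne_zero Polynomial.X_ne_zero hpne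
  have hevalXp : Polynomial.eval t₀ (Polynomial.X * p) ≠ 0 := by
    intro h
    exact ht₀mem (Multiset.mem_toFinset.2 (Polynomial.mem_roots'.2 ⟨hXp, h⟩))
  have ht₀ : t₀ ≠ 0 := by
    intro h; apply hevalXp; simp [h]
  have hpt₀ : Polynomial.eval t₀ p ≠ 0 := by
    intro h; apply hevalXp; simp [h]
  -- the evaluated matrix is invertible, so its rows are independent
  set M : Matrix (Fin (r+1)) (Fin (r+1)) K := N.map (Polynomial.eval t₀) with hM_def
  have hdetM : M.det = Polynomial.eval t₀ p := by
    have h5 := RingHom.map_det (Polynomial.evalRingHom t₀) N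
    simp only [hp_def]
    rw [show (Polynomial.eval t₀ N.det) = (Polynomial.evalRingHom t₀) N.det from rfl, h5,
      RingHom.mapMatrix_apply]
    rfl
  have hMunit : IsUnit M := (Matrix.isUnit_iff_isUnit_det M).2
    (isUnit_iff_ne_zero.2 (by rw [hdetM]; exact hpt₀))
  have hrows : LinearIndependent K (fun j => M j) :=
    Matrix.linearIndependent_rows_iff_isUnit.2 hMunit
  -- rows of M are the Λ-coordinates of the pencil family u
  set u : Fin (r+1) → Q := Fin.cons (ψ x) (fun j' => (φ + t₀ • ψ) (y j')) with hu_def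
  have hMu : (fun j => M j) = (⇑Λ) ∘ u := by
    funext j
    refine Fin.cases ?_ (fun j' => ?_) j <;> funext i
      <;> rw [hM_def, Matrix.map_apply]
    · simp [hM_def, hN_def, hu_def, Matrix.map_apply, Function.comp]
    · simp only [hM_def, hN_def, hu_def, Matrix.map_apply, Function.comp_apply,
        Fin.cases_succ, Fin.cons_succ, Polynomial.eval_add, Polynomial.eval_mul,
        Polynomial.eval_C, Polynomial.eval_X, LinearMap.add_apply, LinearMap.smul_apply,
        map_add, map_smul]
      simp [Pi.add_apply, Pi.smul_apply, smul_eq_mul]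
  have hu : LinearIndependent K u := by
    rw [hMu] at hrows
    exact LinearIndependent.of_comp Λ hrows
  -- scale the first member of the family by t₀
  set w : Fin (r+1) → Kˣ := fun j => if j = 0 then Units.mk0 t₀ ht₀ else 1 with hw_def
  have hu' : LinearIndependent K (w • u) := hu.units_smul w
  have hmem : ∀ j, (w • u) j ∈ LinearMap.range (φ + t₀ • ψ) := by
    intro j
    refine Fin.cases ?_ (fun j' => ?_) j
    · refine ⟨x, ?_⟩
      simp [hw_def, hu_def, hx, Units.smul_def]
    · refine ⟨y j', ?_⟩
      simp [hw_def, hu_def, Units.smul_def, Fin.succ_ne_zero]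
  have hspan : Submodule.span K (Set.range (w • u)) ≤ LinearMap.range (φ + t₀ • ψ) := by
    rw [Submodule.span_le]
    rintro q ⟨j, rfl⟩
    exact hmem j
  have hge : r + 1 ≤ Module.finrank K (LinearMap.range (φ + t₀ • ψ)) := by
    have h6 := finrank_span_eq_card hu'
    simp only [Fintype.card_fin] at h6
    calc r + 1 = Module.finrank K (Submodule.span K (Set.range (w • u))) := h6.symm
    _ ≤ Module.finrank K (LinearMap.range (φ + t₀ • ψ)) := Submodule.finrank_mono hspan
  have := hmax t₀
  omega

lemma exists_transversal {K L : Type*} [Field K] [Field L] [Algebra K L]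
    [FiniteDimensional K L] {V : Type*} [AddCommGroup V] [Module L V] [FiniteDimensional L V]
    [Module K V] [IsScalarTower K L V] (W : Submodule K V)
    (hle : Module.finrank K W + Module.finrank K L ≤ Module.finrank K V) :
    ∃ v : V, v ≠ 0 ∧ ∀ ℓ : L, ℓ • v ∈ W → ℓ = 0 := by
  classical
  haveI : FiniteDimensional K V := FiniteDimensional.trans K L V
  set b : L →ₗ[K] V →ₗ[K] (V ⧸ W) := LinearMap.mk₂ K (fun ℓ v => W.mkQ (ℓ • v))
    (fun ℓ₁ ℓ₂ v => by show W.mkQ ((ℓ₁ + ℓ₂) • v) = _; rw [add_smul, map_add])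
    (fun c ℓ v => by show W.mkQ ((c • ℓ) • v) = _; rw [smul_assoc, map_smul])
    (fun ℓ v₁ v₂ => by show W.mkQ (ℓ • (v₁ + v₂)) = _; rw [smul_add, map_add])
    (fun c ℓ v => by show W.mkQ (ℓ • c • v) = _; rw [smul_comm ℓ c v, map_smul]) with hb_def
  have hbapp : ∀ (ℓ : L) (v : V), b.flip v ℓ = W.mkQ (ℓ • v) := fun ℓ v => rfl
  by_contra hcon
  push_neg at hcon
  have h : ∀ v : V, v ≠ 0 → ∃ ℓ : L, ℓ • v ∈ W ∧ ℓ ≠ 0 := by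
    intro v hv
    obtain ⟨ℓ, hℓ⟩ := hcon v hv
    exact ⟨ℓ, hℓ⟩
  have hd1 : 1 ≤ Module.finrank K L := Module.finrank_pos
  -- every b.flip v has nontrivial kernel
  have key : ∀ v : V, LinearMap.ker (b.flip v) ≠ ⊥ := by
    intro v
    by_cases hv : v = 0
    · subst hv
      rw [Submodule.ne_bot_iff]
      exact ⟨1, by rw [LinearMap.mem_ker, hbapp, smul_zero, map_zero], one_ne_zero⟩
    · obtain ⟨ℓ, hℓW, hℓ⟩ := h v hv
      rw [Submodule.ne_bot_iff]
      exact ⟨ℓ, by rw [LinearMap.mem_ker, hbapp, Submodule.mkQ_apply,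
        Submodule.Quotient.mk_eq_zero]; exact hℓW, hℓ⟩
  cases finite_or_infinite K with
  | inl hfin =>
    -- counting argument over a finite field
    haveI : Finite L := Module.finite_of_finite K
    haveI : Finite V := Module.finite_of_finite K
    letI : Fintype K := Fintype.ofFinite K
    letI : Fintype L := Fintype.ofFinite L
    letI : Fintype V := Fintype.ofFinite V
    letI : Fintype W := Fintype.ofFinite W
    have hchoice : ∀ v : {v : V // v ≠ 0}, ∃ ℓ : L, ℓ • (v : V) ∈ W ∧ ℓ ≠ 0 :=
      fun v => h v v.2
    choose g hg1 hg2 using hchoice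
    set F : {v : V // v ≠ 0} → {ℓ : L // ℓ ≠ 0} × {w : W // w ≠ 0} := fun v =>
      (⟨g v, hg2 v⟩, ⟨⟨g v • (v : V), hg1 v⟩, by
        intro hzero
        have : g v • (v : V) = 0 := congrArg Subtype.val hzero
        exact smul_ne_zero (hg2 v) v.2 this⟩) with hF_def
    have hFinj : Function.Injective F := by
      intro u v huv
      have e1 : g u = g v := congrArg (fun p => (p.1 : L)) huv
      have e2 : g u • (u : V) = g v • (v : V) := congrArg (fun p => ((p.2 : W) : V)) huv
      rw [e1] at e2
      exact Subtype.ext (smul_right_injective V (hg2 v) e2)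
    have hcard := Fintype.card_le_of_injective F hFinj
    rw [Fintype.card_prod] at hcard
    have c1 : Fintype.card {v : V // v ≠ 0} = Fintype.card V - 1 := by
      rw [Fintype.card_subtype_compl (· = (0 : V)), Fintype.card_subtype_eq]
    have c2 : Fintype.card {ℓ : L // ℓ ≠ 0} = Fintype.card L - 1 := by
      rw [Fintype.card_subtype_compl (· = (0 : L)), Fintype.card_subtype_eq]
    have c3 : Fintype.card {w : W // w ≠ 0} = Fintype.card W - 1 := by
      rw [Fintype.card_subtype_compl (· = (0 : W)), Fintype.card_subtype_eq]
    rw [c1, c2, c3] at hcard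
    have cV : Fintype.card V = Fintype.card K ^ Module.finrank K V := card_eq_pow_finrank
    have cL : Fintype.card L = Fintype.card K ^ Module.finrank K L := card_eq_pow_finrank
    have cW : Fintype.card W = Fintype.card K ^ Module.finrank K W := card_eq_pow_finrank
    rw [cV, cL, cW] at hcard
    set q := Fintype.card K with hq_def
    have hq : 2 ≤ q := Fintype.one_lt_card
    set A := q ^ Module.finrank K L with hA_def
    set B := q ^ Module.finrank K W with hB_def
    have hA : 2 ≤ A := le_trans hq (Nat.le_self_pow (by omega) q)
    have hB : 1 ≤ B := Nat.one_le_pow _ _ (by omega)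
    have hAB : A * B ≤ q ^ Module.finrank K V := by
      rw [hA_def, hB_def, ← pow_add]
      exact Nat.pow_le_pow_right (by omega) (by omega)
    obtain ⟨a, ha⟩ := Nat.exists_eq_add_of_le hA
    obtain ⟨bb, hbb⟩ := Nat.exists_eq_add_of_le hB
    have hexp : (A - 1) * (B - 1) + A + B = A * B + 1 := by
      have e1 : A - 1 = a + 1 := by omega
      have e2 : B - 1 = bb := by omega
      rw [e1, e2, ha, hbb]; ring
    set G := A * B with hG_def
    omega
  | inr hinf =>
    -- the rank set
    set s : Set ℕ := {k | ∃ v : V, Module.finrank K (LinearMap.range (b.flip v)) = k}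
      with hs_def
    have hs0 : s.Nonempty := ⟨_, ⟨0, rfl⟩⟩
    have hsbdd : BddAbove s := by
      refine ⟨Module.finrank K L, ?_⟩
      rintro k ⟨v, rfl⟩
      exact LinearMap.finrank_range_le _
    obtain ⟨v₀, hv₀⟩ : sSup s ∈ s := Nat.sSup_mem hs0 hsbdd
    set r := sSup s with hr_def
    set φ := b.flip v₀ with hφ_def
    have hmax : ∀ v : V, Module.finrank K (LinearMap.range (b.flip v)) ≤ r :=
      fun v => le_csSup hsbdd ⟨v, rfl⟩
    obtain ⟨x, hxker, hxne⟩ : ∃ x ∈ LinearMap.ker φ, x ≠ 0 :=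
      (Submodule.ne_bot_iff _).1 (key v₀)
    have hallmem : ∀ v : V, b.flip v x ∈ LinearMap.range φ := by
      intro v
      by_contra hnot
      refine pencil_lemma φ (b.flip v) hv₀ (fun t => ?_) (LinearMap.mem_ker.1 hxker) hnot
      have e : φ + t • b.flip v = b.flip (v₀ + t • v) := by
        rw [map_add, map_smul]
      rw [e]
      exact hmax _
    have hRtop : LinearMap.range φ = ⊤ := by
      rw [Submodule.eq_top_iff']
      intro qq
      obtain ⟨u, rfl⟩ := W.mkQ_surjective qq
      have hm := hallmem (x⁻¹ • u)
      rw [hbapp, smul_smul, mul_inv_cancel₀ hxne, one_smul] at hm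
      exact hm
    have h1 : Module.finrank K (V ⧸ W) = r := by
      rw [← hv₀, hRtop, finrank_top]
    have h2 := LinearMap.finrank_range_add_finrank_ker φ
    have h3 : 0 < Module.finrank K (LinearMap.ker φ) := by
      rw [Module.finrank_pos_iff]
      obtain ⟨x', hx', hx'ne⟩ := (Submodule.ne_bot_iff _).1 (key v₀)
      exact ⟨⟨⟨x', hx'⟩, 0, by simp [hx'ne]⟩⟩
    have h4 := Submodule.finrank_quotient_add_finrank W
    rw [hv₀] at h2
    omega

universe uV

lemma main_aux {d : ℕ} (K L : Type*) [Field K] [Field L] [Algebra K L]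
    [FiniteDimensional K L] (hd : Module.finrank K L = d) :
    ∀ (n : ℕ) (V : Type uV) [AddCommGroup V] [Module L V] [FiniteDimensional L V]
    [Module K V] [IsScalarTower K L V], Module.finrank L V ≤ n →
    ∀ W : Submodule K V, d ∣ Module.finrank K W →
    ∃ W' : Submodule L V, IsCompl W (W'.restrictScalars K) := by
  intro n
  induction n with
  | zero =>
    intro V _ _ _ _ _ hn W _
    have h0 : Module.finrank L V = 0 := Nat.le_zero.1 hn
    have hsub : Subsingleton V := by
      rw [← Module.finrank_zero_iff (R := L)]; exact h0
    have hW_top : W = ⊤ := by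
      rw [eq_top_iff]
      intro x _
      have : x = (0 : V) := Subsingleton.elim _ _
      rw [this]; exact W.zero_mem
    refine ⟨⊥, ?_⟩
    rw [Submodule.restrictScalars_bot, hW_top]
    exact isCompl_top_bot
  | succ n ih =>
    intro V _ _ _ _ _ hn W hWdvd
    haveI : FiniteDimensional K V := FiniteDimensional.trans K L V
    by_cases htop : W = ⊤
    · refine ⟨⊥, ?_⟩
      rw [Submodule.restrictScalars_bot, htop]
      exact isCompl_top_bot
    · have hd1 : 0 < d := hd ▸ Module.finrank_pos
      have hKV : Module.finrank K V = d * Module.finrank L V := by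
        rw [← Module.finrank_mul_finrank K L V, hd]
      have hlt : Module.finrank K W < Module.finrank K V :=
        Submodule.finrank_lt htop
      have hle : Module.finrank K W + Module.finrank K L ≤ Module.finrank K V := by
        rw [hd]
        obtain ⟨k, hk⟩ := hWdvd
        have hk' : k < Module.finrank L V := by
          by_contra hc
          push_neg at hc
          have : Module.finrank K V ≤ Module.finrank K W := by
            rw [hk, hKV]
            exact Nat.mul_le_mul_left d hc
          omega
        have h8 : d * (k + 1) ≤ d * Module.finrank L V := Nat.mul_le_mul_left d hk'
        have h9 : d * (k + 1) = d * k + d := by ring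
        rw [hk, hKV]
        omega
      obtain ⟨v, hvne, hv⟩ := exists_transversal W hle
      set P : Submodule L V := Submodule.span L {v} with hP_def
      have hxP : ∀ x ∈ W, x ∈ P → x = 0 := by
        intro x hxW hxP
        obtain ⟨ℓ, hℓ⟩ := Submodule.mem_span_singleton.1 hxP
        rw [← hℓ] at hxW ⊢
        rw [hv ℓ hxW, zero_smul]
      -- fuel for the quotient
      have hfuel : Module.finrank L (V ⧸ P) ≤ n := by
        have hq := Submodule.finrank_quotient_add_finrank P
        have hP1 : Module.finrank L P = 1 := finrank_span_singleton hvne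
        omega
      set f : V →ₗ[K] V ⧸ P := LinearMap.restrictScalars K P.mkQ with hf_def
      have hfapp : ∀ x : V, f x = P.mkQ x := fun x => rfl
      set Wb := W.map f with hWb_def
      have hWbrank : Module.finrank K Wb = Module.finrank K W := by
        have hker : LinearMap.ker (f.comp W.subtype) = ⊥ := by
          rw [Submodule.eq_bot_iff]
          rintro ⟨x, hxW⟩ hx
          have hx0 : P.mkQ x = 0 := hx
          rw [Submodule.mkQ_apply, Submodule.Quotient.mk_eq_zero] at hx0
          exact Subtype.ext (hxP x hxW hx0)
        have hrange : LinearMap.range (f.comp W.subtype) = Wb := by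
          rw [LinearMap.range_comp, Submodule.range_subtype]
        have hrn := LinearMap.finrank_range_add_finrank_ker (f.comp W.subtype)
        rw [hker, hrange] at hrn
        simpa using hrn
      obtain ⟨Wb', hWb'⟩ := ih (V ⧸ P) hfuel Wb (by rw [hWbrank]; exact hWdvd)
      refine ⟨Wb'.comap P.mkQ, ?_⟩
      constructor
      · -- disjoint
        rw [Submodule.disjoint_def]
        intro x hxW hx'
        have hmem1 : f x ∈ Wb := Submodule.mem_map.2 ⟨x, hxW, rfl⟩
        have hmem2 : P.mkQ x ∈ Wb' := hx'
        have hx0 : f x = 0 := by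
          refine Submodule.disjoint_def.1 hWb'.disjoint (f x) hmem1 ?_
          rw [Submodule.restrictScalars_mem]
          exact hmem2
        have : P.mkQ x = 0 := hx0
        rw [Submodule.mkQ_apply, Submodule.Quotient.mk_eq_zero] at this
        exact hxP x hxW this
      · -- codisjoint
        rw [codisjoint_iff]
        rw [Submodule.eq_top_iff']
        intro x
        have hx : P.mkQ x ∈ Wb ⊔ Wb'.restrictScalars K := by
          rw [codisjoint_iff.1 hWb'.codisjoint]
          trivial
        obtain ⟨y, hy, z, hz, hyz⟩ := Submodule.mem_sup.1 hx
        obtain ⟨w, hw, rfl⟩ := Submodule.mem_map.1 hy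
        have hz' : P.mkQ (x - w) = z := by
          have h7 : P.mkQ x = P.mkQ w + z := by rw [← hyz]; rfl
          rw [map_sub, h7]
          abel
        refine Submodule.mem_sup.2 ⟨w, hw, x - w, ?_, by abel⟩
        rw [Submodule.restrictScalars_mem, Submodule.mem_comap, hz']
        rw [Submodule.restrictScalars_mem] at hz
        exact hz

theorem stmt10 {d : ℕ} (K L : Type*) [Field K] [Field L] [Algebra K L]
    [FiniteDimensional K L] (hd : Module.finrank K L = d)
    (V : Type*) [AddCommGroup V] [Module L V] [FiniteDimensional L V]
    [Module K V] [IsScalarTower K L V]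
    (W : Submodule K V) (hW : d ∣ Module.finrank K W) :
    ∃ W' : Submodule L V, IsCompl W (W'.restrictScalars K) := by
  exact main_aux K L hd (Module.finrank L V) V le_rfl W hW
end

section
/- Let M be a linear subspace of Mat_{m,n}(K) with urk(M) < n and card(K) > urk(M). Then there exists a nonzero vector x ∈ K^n such that dim(Mx) ≤ urk(M), where Mx := {Mx : M ∈ M}. -/
open Module Polynomial

private lemma aux_not_li {K : Type*} [Field K] {V : Type*} [AddCommGroup V] [Module K V]
    {s : ℕ} (u : Fin s → V) (W : Submodule K V) [Module.Finite K W]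
    (hmem : ∀ j, u j ∈ W) (hlt : Module.finrank K W < s) :
    ¬ LinearIndependent K u := by
  intro h
  have h1 : Module.finrank K (Submodule.span K (Set.range u)) = s := by
    rw [finrank_span_eq_card h, Fintype.card_fin]
  have h2 : Submodule.span K (Set.range u) ≤ W :=
    Submodule.span_le.mpr (by rintro _ ⟨j, rfl⟩; exact hmem j)
  have h3 := Submodule.finrank_mono h2
  omega

private lemma aux_det_zero {K : Type*} [Field K] {s : ℕ} (N : Matrix (Fin s) (Fin s) K)
    (h : ¬ LinearIndependent K (fun j => fun i => N i j)) : N.det = 0 := by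
  by_contra hd
  exact h (Matrix.linearIndependent_cols_iff_isUnit.mpr
    ((Matrix.isUnit_iff_isUnit_det N).mpr (isUnit_iff_ne_zero.mpr hd)))

private lemma aux_deg {K : Type*} [CommRing K] {s : ℕ}
    (N : Matrix (Fin s) (Fin s) K[X]) (d : Fin s → ℕ)
    (hd : ∀ i j, (N i j).natDegree ≤ d j) :
    N.det.natDegree ≤ ∑ j, d j := by
  rw [Matrix.det_apply]
  apply Polynomial.natDegree_sum_le_of_forall_le
  intro σ _
  have h1 : (∏ i, N (σ i) i).natDegree ≤ ∑ j, d j :=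
    (Polynomial.natDegree_prod_le _ _).trans (Finset.sum_le_sum fun i _ => hd (σ i) i)
  calc (Equiv.Perm.sign σ • ∏ i, N (σ i) i).natDegree
      = ((((Equiv.Perm.sign σ : ℤ) : K[X])) * ∏ i, N (σ i) i).natDegree := by
        rw [Units.smul_def, zsmul_eq_mul]
    _ ≤ (((Equiv.Perm.sign σ : ℤ) : K[X])).natDegree + (∏ i, N (σ i) i).natDegree :=
        Polynomial.natDegree_mul_le
    _ ≤ ∑ j, d j := by
        rw [Polynomial.natDegree_intCast]; simpa using h1

set_option maxHeartbeats 2000000 in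
theorem stmt13 {K : Type*} [Field K] {m n : ℕ}
    (M : Submodule K (Matrix (Fin m) (Fin n) K)) (r : ℕ)
    (hub : ∀ A ∈ M, A.rank ≤ r) (hmax : ∃ A ∈ M, A.rank = r)
    (hrn : r < n) (hK : (r : Cardinal) < Cardinal.mk K) :
    ∃ x : Fin n → K, x ≠ 0 ∧
      Module.finrank K
        ↥(Submodule.span K ((fun A : Matrix (Fin m) (Fin n) K => A.mulVec x) '' M))
        ≤ r := by
  classical
  obtain ⟨A, hAM, hAr⟩ := hmax
  have hrankdef : A.rank = finrank K (LinearMap.range A.mulVecLin) := rfl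
  -- kernel vector
  have hker : LinearMap.ker A.mulVecLin ≠ ⊥ := by
    intro hbot
    have h1 := LinearMap.finrank_range_add_finrank_ker A.mulVecLin
    rw [hbot, finrank_bot, add_zero] at h1
    have h2 : finrank K (Fin n → K) = n := by simp
    rw [h2] at h1
    omega
  obtain ⟨x, hxker, hx0⟩ := Submodule.exists_mem_ne_zero_of_ne_bot hker
  have hAx : A.mulVec x = 0 := LinearMap.mem_ker.mp hxker
  refine ⟨x, hx0, ?_⟩
  have hWfin : finrank K (LinearMap.range A.mulVecLin) = r := by rw [← hrankdef, hAr]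
  have key : ∀ B ∈ M, B.mulVec x ∈ LinearMap.range A.mulVecLin := by
    intro B hBM
    by_contra hBx
    -- basis of the range of A
    let b : Basis (Fin r) K (LinearMap.range A.mulVecLin) :=
      Module.finBasisOfFinrankEq K _ hWfin
    choose y hy using fun i : Fin r => (b i).2
    set v : Fin (r+1) → (Fin m → K) :=
      Fin.cons (B.mulVec x) (fun i => (b i : Fin m → K)) with hvdef
    have hspanb : Submodule.span K (Set.range (fun i : Fin r => (b i : Fin m → K)))
        = LinearMap.range A.mulVecLin := by
      have h1 : (fun i : Fin r => (b i : Fin m → K))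
          = (LinearMap.range A.mulVecLin).subtype ∘ b := rfl
      rw [h1, Set.range_comp, Submodule.span_image, b.span_eq, Submodule.map_subtype_top]
    have hvli : LinearIndependent K v := by
      rw [hvdef]
      refine linearIndependent_fin_cons.mpr ⟨?_, ?_⟩
      · exact b.linearIndependent.map' _ (LinearMap.range A.mulVecLin).ker_subtype
      · rw [hspanb]; exact hBx
    -- left inverse P
    set Vm : Matrix (Fin m) (Fin (r+1)) K := Matrix.of fun i j => v j i with hVmdef
    have hVker : LinearMap.ker Vm.mulVecLin = ⊥ := by
      rw [LinearMap.ker_eq_bot']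
      intro c hc
      have hsum : ∑ j, c j • v j = 0 := by
        ext i
        have h0 := congrFun hc i
        simp only [Matrix.mulVecLin_apply, Matrix.mulVec, dotProduct,
          Matrix.of_apply, Pi.zero_apply] at h0
        simpa [hVmdef, Finset.sum_apply, mul_comm] using h0
      have h1 := Fintype.linearIndependent_iff.mp hvli c hsum
      funext i; exact h1 i
    obtain ⟨P, hPf⟩ := Vm.mulVecLin.exists_leftInverse_of_injective hVker
    have hPv : ∀ j, P (v j) = Pi.single j (1:K) := by
      intro j
      have h1 : Vm.mulVecLin (Pi.single j 1) = v j := by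
        ext i
        simp [hVmdef, Matrix.mulVecLin_apply, Matrix.mulVec_single]
      rw [← h1]
      have h2 := LinearMap.congr_fun hPf (Pi.single j 1)
      simpa using h2
    set z : Fin (r+1) → (Fin n → K) := Fin.cons x y with hzdef
    have hz0 : z 0 = x := rfl
    have hzs : ∀ i : Fin r, z i.succ = y i := fun i => rfl
    have hPA0 : P (A.mulVec (z 0)) = 0 := by
      rw [hz0, hAx, map_zero]
    have hPAs : ∀ i : Fin r, P (A.mulVec (z i.succ)) = Pi.single (i.succ) (1:K) := by
      intro i
      have h1 : A.mulVec (z i.succ) = v i.succ := by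
        rw [hzs i]
        have := hy i
        simpa [hvdef, Matrix.mulVecLin_apply] using this
      rw [h1, hPv]
    have hPB0 : P (B.mulVec (z 0)) = Pi.single (0 : Fin (r+1)) (1:K) := by
      have h1 : B.mulVec (z 0) = v 0 := rfl
      rw [h1, hPv]
    -- dependency among P (B z j)
    have hrankB : finrank K (Submodule.map P (LinearMap.range B.mulVecLin)) ≤ r :=
      le_trans (Submodule.finrank_map_le P _) (hub B hBM)
    have hdep : ¬ LinearIndependent K (fun j => P (B.mulVec (z j))) :=
      aux_not_li _ (Submodule.map P (LinearMap.range B.mulVecLin))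
        (fun j => Submodule.mem_map_of_mem (LinearMap.mem_range_self _ (z j)))
        (lt_of_le_of_lt hrankB (Nat.lt_succ_self r))
    obtain ⟨c, hcsum, j₀, hcj₀⟩ := Fintype.not_linearIndependent_iff.mp hdep
    set w : Fin n → K := ∑ j, c j • z j with hwdef
    have hmv : ∀ (Cm : Matrix (Fin m) (Fin n) K), Cm.mulVec w = ∑ j, c j • Cm.mulVec (z j) := by
      intro Cm
      show Cm.mulVecLin w = _
      rw [hwdef, map_sum]
      simp [Matrix.mulVecLin_apply]
    have hPBw : P (B.mulVec w) = 0 := by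
      rw [hmv B, map_sum]
      simpa [map_smul] using hcsum
    have hPAw : P (A.mulVec w) = ∑ j, c j • P (A.mulVec (z j)) := by
      rw [hmv A, map_sum]
      simp [map_smul]
    -- polynomial matrices
    set Q : Matrix (Fin (r+1)) (Fin (r+1)) K[X] :=
      Matrix.of (fun i j => C ((P (A.mulVec (z j))) i) + X * C ((P (B.mulVec (z j))) i))
      with hQdef
    set T : Matrix (Fin (r+1)) (Fin (r+1)) K[X] :=
      Q.updateCol j₀ (fun i => C ((P (A.mulVec w)) i)) with hTdef
    have hTQ : T.det = C (c j₀) * Q.det := by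
      have hcol : (fun i => C ((P (A.mulVec w)) i)) = fun k => ∑ j, C (c j) • Q k j := by
        funext k
        have hBzero : ∑ j, c j * (P (B.mulVec (z j))) k = 0 := by
          have h0 := congrFun hcsum k
          simpa [Finset.sum_apply] using h0
        have hL : (P (A.mulVec w)) k = ∑ j, c j * (P (A.mulVec (z j))) k := by
          rw [hPAw]; simp [Finset.sum_apply]
        rw [hL]
        calc C (∑ j, c j * (P (A.mulVec (z j))) k)
            = C (∑ j, c j * (P (A.mulVec (z j))) k)
              + X * C (∑ j, c j * (P (B.mulVec (z j))) k) := by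
              rw [hBzero, map_zero, mul_zero, add_zero]
          _ = ∑ j, C (c j) • Q k j := by
              rw [map_sum, map_sum, Finset.mul_sum, ← Finset.sum_add_distrib]
              refine Finset.sum_congr rfl fun j _ => ?_
              simp only [hQdef, Matrix.of_apply, smul_eq_mul, map_mul]
              ring
      rw [hTdef, hcol]
      have h1 := Matrix.det_updateCol_sum Q j₀ (fun j => C (c j))
      simpa [smul_eq_mul] using h1
    -- evaluations vanish
    have hTeval : ∀ t : K, T.det.eval t = 0 := by
      intro t
      have hmap : T.det.eval t = (T.map (Polynomial.evalRingHom t)).det := by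
        have h1 := RingHom.map_det (Polynomial.evalRingHom t) T
        simpa using h1
      rw [hmap]
      apply aux_det_zero
      set z' : Fin (r+1) → (Fin n → K) := Function.update z j₀ w with hz'def
      have hcols : (fun j => fun i => (T.map (Polynomial.evalRingHom t)) i j)
          = fun j => P ((A + t • B).mulVec (z' j)) := by
        funext j
        by_cases hj : j = j₀
        · subst hj
          funext i
          rw [hz'def]
          simp only [Matrix.map_apply, hTdef, Matrix.updateCol_self,
            Function.update_self, coe_evalRingHom, eval_C]
          rw [Matrix.add_mulVec, Matrix.smul_mulVec, map_add, map_smul, hPBw]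
          simp
        · funext i
          rw [hz'def]
          simp only [Matrix.map_apply, hTdef, Matrix.updateCol_ne hj,
            Function.update_of_ne hj, hQdef, Matrix.of_apply, coe_evalRingHom,
            eval_add, eval_mul, eval_C, eval_X]
          rw [Matrix.add_mulVec, Matrix.smul_mulVec, map_add, map_smul]
          simp
      rw [hcols]
      exact aux_not_li _ (Submodule.map P (LinearMap.range (A + t • B).mulVecLin))
        (fun j => Submodule.mem_map_of_mem (LinearMap.mem_range_self _ (z' j)))
        (lt_of_le_of_lt
          (le_trans (Submodule.finrank_map_le _ _)
            (hub _ (M.add_mem hAM (M.smul_mem t hBM))))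
          (Nat.lt_succ_self r))
    -- degree bound
    have hdeg : T.det.natDegree ≤ r := by
      have hbounds : ∀ i j, ((T i j).natDegree) ≤ (if j = j₀ then 0 else 1) := by
        intro i j
        by_cases hj : j = j₀
        · rw [if_pos hj, hj, hTdef, Matrix.updateCol_self]
          simp
        · rw [if_neg hj, hTdef]
          rw [Matrix.updateCol_ne hj]
          refine le_trans (Polynomial.natDegree_add_le _ _) ?_
          refine max_le (by simp) ?_
          refine le_trans Polynomial.natDegree_mul_le ?_
          simp
      have h1 := aux_deg T (fun j => if j = j₀ then 0 else 1) hbounds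
      have h2 : (∑ j : Fin (r+1), if j = j₀ then (0:ℕ) else 1) = r := by
        rw [Finset.sum_ite, Finset.sum_const, Finset.sum_const]
        simp [Finset.filter_eq', Finset.filter_ne']
      rw [h2] at h1
      exact h1
    have hT0 : T.det = 0 := by
      apply Polynomial.eq_zero_of_forall_eval_zero_of_natDegree_lt_card _ hTeval
      calc (T.det.natDegree : Cardinal) ≤ (r : Cardinal) := by exact_mod_cast hdeg
        _ < Cardinal.mk K := hK
    have hQ0 : Q.det = 0 := by
      have hc : (C (c j₀) : K[X]) ≠ 0 := fun h => hcj₀ (by simpa using h)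
      have h1 := hTQ
      rw [hT0] at h1
      exact (mul_eq_zero.mp h1.symm).resolve_left hc
    -- factor X out of column 0
    set e0 : Fin (r+1) → K := Pi.single (0:Fin (r+1)) (1:K) with he0
    have hQcol0 : ∀ i, Q i 0 = X * C (e0 i) := by
      intro i
      simp only [hQdef, Matrix.of_apply]
      rw [hPA0, hPB0]
      simp
    set q : K[X] :=
      (Q.updateCol 0 (fun i => C (e0 i))).det with hqdef
    have hfactor : Q.det = X * q := by
      have h1 : Q = Q.updateCol 0 ((X : K[X]) • fun i : Fin (r+1) => C (e0 i)) := by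
        refine Matrix.ext fun i j => ?_
        by_cases hj : j = 0
        · subst hj
          rw [Matrix.updateCol_self, Pi.smul_apply, smul_eq_mul]
          exact hQcol0 i
        · rw [Matrix.updateCol_ne hj]
      conv_lhs => rw [h1]
      rw [Matrix.det_updateCol_smul, hqdef]
    have hq0 : q.eval 0 = 1 := by
      have hmap : q.eval 0 =
          ((Q.updateCol 0 (fun i => C (e0 i))).map
            (Polynomial.evalRingHom 0)).det := by
        have h1 := RingHom.map_det (Polynomial.evalRingHom 0)
          (Q.updateCol 0 (fun i => C (e0 i)))
        simpa [hqdef] using h1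
      rw [hmap]
      have h2 : ((Q.updateCol 0 (fun i => C (e0 i))).map
          (Polynomial.evalRingHom 0)) = 1 := by
        ext i j
        induction j using Fin.cases with
        | zero =>
          simp only [Matrix.map_apply, Matrix.updateCol_self, coe_evalRingHom, eval_C,
            Matrix.one_apply, he0, Pi.single_apply]
        | succ j' =>
          have hne : (j'.succ : Fin (r+1)) ≠ 0 := Fin.succ_ne_zero j'
          rw [Matrix.map_apply, Matrix.updateCol_ne hne]
          simp only [hQdef, Matrix.of_apply, coe_evalRingHom, eval_add, eval_mul,
            eval_C, eval_X, zero_mul, add_zero]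
          rw [hPAs j']
          simp [Matrix.one_apply, Pi.single_apply]
      rw [h2, Matrix.det_one]
    have hXq : (X : K[X]) * q = 0 := by rw [← hfactor, hQ0]
    rcases mul_eq_zero.mp hXq with h | h
    · exact Polynomial.X_ne_zero h
    · rw [h] at hq0; simp at hq0
  have hspan : Submodule.span K ((fun A : Matrix (Fin m) (Fin n) K => A.mulVec x) '' M)
      ≤ LinearMap.range A.mulVecLin := by
    rw [Submodule.span_le]
    rintro _ ⟨B, hBM, rfl⟩
    exact key B hBM
  calc finrank K _ ≤ finrank K (LinearMap.range A.mulVecLin) := Submodule.finrank_mono hspan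
    _ = r := hWfin
end

section
/- Let S be a non-reflexive n-dimensional subspace of L(U,V) between finite-dimensional spaces, with card(K) > n ≥ 2. Then S contains a nonzero operator of rank at most 2n−2. -/
open Polynomial Module

set_option linter.unusedSectionVars false
set_option linter.unusedVariables false
set_option maxHeartbeats 1600000


theorem coeff_mul_top {K : Type*} [CommRing K] (p q : K[X]) (d e : ℕ)
    (hp : p.natDegree ≤ d) (hq : q.natDegree ≤ e) :
    (p * q).coeff (d + e) = p.coeff d * q.coeff e := by
  rw [Polynomial.coeff_mul]
  rw [Finset.sum_eq_single (d, e)]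
  · rintro ⟨i, j⟩ hij hne
    rw [Finset.HasAntidiagonal.mem_antidiagonal] at hij
    rcases lt_or_ge d i with h | h
    · rw [Polynomial.coeff_eq_zero_of_natDegree_lt (lt_of_le_of_lt hp h), zero_mul]
    · have hid : i ≠ d ∨ j ≠ e := by
        by_contra hc
        push_neg at hc
        exact hne (by rw [Prod.ext_iff]; exact ⟨hc.1, hc.2⟩)
      have : e < j := by rcases hid with h' | h' <;> omega
      rw [Polynomial.coeff_eq_zero_of_natDegree_lt (lt_of_le_of_lt hq this), mul_zero]
  · intro h
    exact (h (Finset.HasAntidiagonal.mem_antidiagonal.2 rfl)).elim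

theorem coeff_prod_top {K : Type*} [CommRing K] {ι : Type*} (s : Finset ι)
    (f : ι → K[X]) (d : ι → ℕ) (h : ∀ j ∈ s, (f j).natDegree ≤ d j) :
    (∏ j ∈ s, f j).coeff (∑ j ∈ s, d j) = ∏ j ∈ s, (f j).coeff (d j) := by
  classical
  induction s using Finset.induction with
  | empty => simp
  | insert _ _ hx ih =>
    rename_i a s'
    rw [Finset.prod_insert hx, Finset.sum_insert hx, Finset.prod_insert hx]
    rw [coeff_mul_top _ _ _ _ (h a (Finset.mem_insert_self a s'))
      (le_trans (Polynomial.natDegree_prod_le _ _) (Finset.sum_le_sum (fun j hj => h j (Finset.mem_insert_of_mem hj))))]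
    rw [ih (fun j hj => h j (Finset.mem_insert_of_mem hj))]

theorem natDegree_prod_le' {K : Type*} [CommRing K] {ι : Type*} (s : Finset ι)
    (f : ι → K[X]) (d : ι → ℕ) (h : ∀ j ∈ s, (f j).natDegree ≤ d j) :
    (∏ j ∈ s, f j).natDegree ≤ ∑ j ∈ s, d j :=
  le_trans (Polynomial.natDegree_prod_le _ _) (Finset.sum_le_sum h)



-- natDegree of det with columnwise degree bounds
theorem natDegree_det_le_sum {K : Type*} [CommRing K] {m : ℕ}
    (M : Matrix (Fin m) (Fin m) K[X]) (d : Fin m → ℕ)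
    (h : ∀ i j, (M i j).natDegree ≤ d j) :
    M.det.natDegree ≤ ∑ j, d j := by
  rw [Matrix.det_apply']
  refine le_trans (Polynomial.natDegree_sum_le _ _) ?_
  rw [Finset.fold_max_le]
  constructor
  · exact Nat.zero_le _
  · intro σ _
    refine le_trans (Polynomial.natDegree_mul_le) ?_
    have h1 : (((Equiv.Perm.sign σ : ℤ) : K[X])).natDegree = 0 := Polynomial.natDegree_intCast _
    rw [h1, zero_add]
    exact le_trans (Polynomial.natDegree_prod_le _ _)
      (Finset.sum_le_sum (fun j _ => h (σ j) j))

-- coefficient of det at top total degree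
theorem coeff_det_top {K : Type*} [CommRing K] {m : ℕ}
    (M : Matrix (Fin m) (Fin m) K[X]) (d : Fin m → ℕ)
    (h : ∀ i j, (M i j).natDegree ≤ d j) :
    M.det.coeff (∑ j, d j) = (Matrix.of fun i j => (M i j).coeff (d j)).det := by
  rw [Matrix.det_apply', Matrix.det_apply', Polynomial.finset_sum_coeff]
  refine Finset.sum_congr rfl ?_
  intro σ _
  have h1 : (((Equiv.Perm.sign σ : ℤ) : K[X])) = Polynomial.C ((Equiv.Perm.sign σ : ℤ) : K) := by
    simp
  rw [h1, Polynomial.coeff_C_mul, coeff_prod_top Finset.univ _ d (fun j _ => h (σ j) j)]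
  simp



section dual
variable {K V : Type*} [Field K] [AddCommGroup V] [Module K V]

theorem exists_dual_family {m : ℕ} {v : Fin m → V} (hv : LinearIndependent K v) :
    ∃ φ : Fin m → (V →ₗ[K] K), ∀ i j, φ i (v j) = if i = j then 1 else 0 := by
  classical
  let T : (Fin m → K) →ₗ[K] V := ∑ i : Fin m, (LinearMap.proj i).smulRight (v i)
  have hT : ∀ c, T c = ∑ i : Fin m, c i • v i := by
    intro c
    simp [T, LinearMap.sum_apply]
  have hTsingle : ∀ j, T (Pi.single j 1) = v j := by
    intro j
    rw [hT]
    rw [Finset.sum_eq_single j]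
    · simp
    · intro i _ hij
      rw [Pi.single_apply]
      simp [hij]
    · intro h; exact (h (Finset.mem_univ j)).elim
  have hker : LinearMap.ker T = ⊥ := by
    rw [LinearMap.ker_eq_bot']
    intro c hc
    rw [hT] at hc
    have := linearIndependent_iff'.1 hv Finset.univ c (by simpa using hc)
    funext i
    exact this i (Finset.mem_univ i)
  obtain ⟨g, hg⟩ := T.exists_leftInverse_of_injective hker
  refine ⟨fun i => (LinearMap.proj i) ∘ₗ g, fun i j => ?_⟩
  have : g (v j) = Pi.single j 1 := by
    rw [← hTsingle j]
    have := LinearMap.congr_fun hg (Pi.single j 1)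
    simpa using this
  simp only [LinearMap.comp_apply, this, LinearMap.proj_apply]
  rw [Pi.single_apply]

theorem det_eq_zero_of_not_linearIndependent {m : ℕ} {w : Fin m → V}
    (hw : ¬ LinearIndependent K w) (φ : Fin m → (V →ₗ[K] K)) :
    (Matrix.of fun i j => φ i (w j)).det = 0 := by
  classical
  rw [← Matrix.exists_mulVec_eq_zero_iff]
  obtain ⟨c, hc, i0, hi0⟩ := Fintype.not_linearIndependent_iff.1 hw
  refine ⟨c, ?_, ?_⟩
  · intro h; exact hi0 (congrFun h i0)
  · funext i
    have : (∑ j : Fin m, c j • w j) = 0 := hc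
    have h2 : φ i (∑ j : Fin m, c j • w j) = 0 := by rw [this]; simp
    rw [map_sum] at h2
    simp only [map_smul, smul_eq_mul] at h2
    simpa [Matrix.mulVec, dotProduct, mul_comm] using h2

end dual


section engine
variable {K V : Type*} [Field K] [AddCommGroup V] [Module K V]

theorem coreSnoc {m : ℕ} (hK : (m : Cardinal) < Cardinal.mk K)
    (a b : Fin m → V) (w : V)
    (H1 : ∀ l : K, l ≠ 0 → ¬ LinearIndependent K (Fin.snoc (fun i => a i + l • b i) w : Fin (m+1) → V))
    (H2 : ¬ LinearIndependent K (Fin.snoc b w : Fin (m+1) → V)) :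
    ¬ LinearIndependent K (Fin.snoc a w : Fin (m+1) → V) := by
  classical
  intro ha
  obtain ⟨φ, hφ⟩ := exists_dual_family ha
  set va : Fin (m+1) → V := Fin.snoc a w with hva
  set vb : Fin (m+1) → V := Fin.snoc b 0 with hvb
  set M : Matrix (Fin (m+1)) (Fin (m+1)) K[X] :=
    Matrix.of (fun i j => C (φ i (va j)) + X * C (φ i (vb j))) with hM
  set D : K[X] := M.det with hD
  set d : Fin (m+1) → ℕ := fun j => if j = Fin.last m then 0 else 1 with hd
  have hsumd : (∑ j, d j) = m := by
    rw [Fin.sum_univ_castSucc]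
    simp [hd, fun j : Fin m => (Fin.castSucc_lt_last j).ne]
  have hdeg_entry : ∀ i j, (M i j).natDegree ≤ d j := by
    intro i j
    by_cases hj : j = Fin.last m
    · subst hj
      have : vb (Fin.last m) = 0 := by simp [hvb]
      simp [hM, hd, this]
    · simp only [hd, if_neg hj]
      refine le_trans (Polynomial.natDegree_add_le _ _) ?_
      simp only [Polynomial.natDegree_C, max_le_iff]
      refine ⟨(by simp), le_trans (Polynomial.natDegree_mul_le) ?_⟩
      simp [Polynomial.natDegree_X_le]
  -- evaluation of D
  have heval : ∀ l : K, Polynomial.eval l D =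
      (Matrix.of fun i j => φ i (va j + l • vb j)).det := by
    intro l
    rw [hD, ← Polynomial.coe_evalRingHom, RingHom.map_det]
    congr 1
    funext i j
    simp [hM, RingHom.mapMatrix_apply, Matrix.map_apply]
    ring
  have hvav : ∀ l : K, (fun j => va j + l • vb j)
      = (Fin.snoc (fun i => a i + l • b i) w : Fin (m+1) → V) := by
    intro l
    funext j
    refine Fin.lastCases ?_ ?_ j
    · simp [hva, hvb]
    · intro j'
      simp [hva, hvb]
  -- D vanishes at nonzero l
  have hroot : ∀ l : K, l ≠ 0 → Polynomial.eval l D = 0 := by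
    intro l hl
    rw [heval l]
    have := H1 l hl
    rw [← hvav l] at this
    exact det_eq_zero_of_not_linearIndependent this φ
  -- eval at 0 is 1
  have heval0 : Polynomial.eval 0 D = 1 := by
    rw [heval 0]
    have : (Matrix.of fun i j => φ i (va j + (0:K) • vb j)) = (1 : Matrix (Fin (m+1)) (Fin (m+1)) K) := by
      funext i j
      simp [hφ i j, Matrix.one_apply]
    rw [this, Matrix.det_one]
  -- coeff m of D is zero
  have hcoeffm : D.coeff m = 0 := by
    have hh := coeff_det_top M d hdeg_entry
    rw [hsumd] at hh
    rw [hD, hh]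
    have : (Matrix.of fun i j => (M i j).coeff (d j))
        = Matrix.of (fun i j => φ i ((Fin.snoc b w : Fin (m+1) → V) j)) := by
      funext i j
      by_cases hj : j = Fin.last m
      · subst hj
        simp [hM, hd, hva, hvb]
      · obtain ⟨j', rfl⟩ := Fin.exists_castSucc_eq.2 hj
        simp [hM, hd, hj, hva, hvb]
    rw [this]
    exact det_eq_zero_of_not_linearIndependent H2 φ
  have hdegD : D.natDegree ≤ m := by
    have hh := natDegree_det_le_sum M d hdeg_entry
    rw [hsumd] at hh
    exact hD ▸ hh
  -- conclude D = 0
  have hDzero : D = 0 := by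
    by_contra hDne
    have hdeglt : D.natDegree < m := by
      rcases lt_or_eq_of_le hdegD with h | h
      · exact h
      · exfalso
        have : D.leadingCoeff = 0 := by rw [Polynomial.leadingCoeff, h]; exact hcoeffm
        exact hDne (Polynomial.leadingCoeff_eq_zero.1 this)
    rcases finite_or_infinite K with hfin | hinf
    · have : Fintype K := Fintype.ofFinite K
      have hcard : m < Fintype.card K := by
        have := hK
        rw [Cardinal.mk_fintype] at this
        exact_mod_cast this
      have hcard2 : D.natDegree < Fintype.card {x : K // x ≠ 0} := by
        have : Fintype.card {x : K // x ≠ 0} = Fintype.card K - 1 := by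
          simp [Fintype.card_subtype_compl]
        omega
      exact hDne (Polynomial.eq_zero_of_natDegree_lt_card_of_eval_eq_zero D
        (Subtype.val_injective) (fun i => hroot i.1 i.2) hcard2)
    · refine hDne (Polynomial.eq_zero_of_infinite_isRoot D ?_)
      have : {x : K | x ≠ 0}.Infinite := Set.Finite.infinite_compl (Set.finite_singleton 0)
      exact this.mono (fun x hx => hroot x hx)
  rw [hDzero] at heval0
  simp at heval0


theorem core0 {m : ℕ} (hK : (m : Cardinal) < Cardinal.mk K)
    (a b : Fin m → V)
    (H1 : ∀ l : K, l ≠ 0 → ¬ LinearIndependent K (fun i => a i + l • b i))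
    (H2 : ¬ LinearIndependent K b) :
    ¬ LinearIndependent K a := by
  classical
  intro ha
  obtain ⟨φ, hφ⟩ := exists_dual_family ha
  set M : Matrix (Fin m) (Fin m) K[X] :=
    Matrix.of (fun i j => C (φ i (a j)) + X * C (φ i (b j))) with hM
  set D : K[X] := M.det with hD
  have hdeg_entry : ∀ i j, (M i j).natDegree ≤ (fun _ : Fin m => 1) j := by
    intro i j
    refine le_trans (Polynomial.natDegree_add_le _ _) ?_
    simp only [Polynomial.natDegree_C, max_le_iff]
    refine ⟨(by simp), le_trans (Polynomial.natDegree_mul_le) ?_⟩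
    simp [Polynomial.natDegree_X_le]
  have hsumd : (∑ _j : Fin m, 1) = m := by simp
  have heval : ∀ l : K, Polynomial.eval l D =
      (Matrix.of fun i j => φ i (a j + l • b j)).det := by
    intro l
    rw [hD, ← Polynomial.coe_evalRingHom, RingHom.map_det]
    congr 1
    funext i j
    simp [hM, RingHom.mapMatrix_apply, Matrix.map_apply]
    ring
  have hroot : ∀ l : K, l ≠ 0 → Polynomial.eval l D = 0 := by
    intro l hl
    rw [heval l]
    exact det_eq_zero_of_not_linearIndependent (H1 l hl) φ
  have heval0 : Polynomial.eval 0 D = 1 := by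
    rw [heval 0]
    have : (Matrix.of fun i j => φ i (a j + (0:K) • b j)) = (1 : Matrix (Fin m) (Fin m) K) := by
      funext i j
      simp [hφ i j, Matrix.one_apply]
    rw [this, Matrix.det_one]
  have hcoeffm : D.coeff m = 0 := by
    have hh := coeff_det_top M (fun _ => 1) hdeg_entry
    rw [hsumd] at hh
    rw [hD, hh]
    have : (Matrix.of fun i j => (M i j).coeff 1) = Matrix.of (fun i j => φ i (b j)) := by
      funext i j
      simp [hM]
    rw [this]
    exact det_eq_zero_of_not_linearIndependent H2 φ
  have hdegD : D.natDegree ≤ m := by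
    have hh := natDegree_det_le_sum M (fun _ => 1) hdeg_entry
    rw [hsumd] at hh
    exact hD ▸ hh
  have hDzero : D = 0 := by
    by_contra hDne
    have hdeglt : D.natDegree < m := by
      rcases lt_or_eq_of_le hdegD with h | h
      · exact h
      · exfalso
        have : D.leadingCoeff = 0 := by rw [Polynomial.leadingCoeff, h]; exact hcoeffm
        exact hDne (Polynomial.leadingCoeff_eq_zero.1 this)
    rcases finite_or_infinite K with hfin | hinf
    · have : Fintype K := Fintype.ofFinite K
      have hcard : m < Fintype.card K := by
        have := hK
        rw [Cardinal.mk_fintype] at this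
        exact_mod_cast this
      have hcard2 : D.natDegree < Fintype.card {x : K // x ≠ 0} := by
        have : Fintype.card {x : K // x ≠ 0} = Fintype.card K - 1 := by
          simp [Fintype.card_subtype_compl]
        omega
      exact hDne (Polynomial.eq_zero_of_natDegree_lt_card_of_eval_eq_zero D
        (Subtype.val_injective) (fun i => hroot i.1 i.2) hcard2)
    · refine hDne (Polynomial.eq_zero_of_infinite_isRoot D ?_)
      have : {x : K | x ≠ 0}.Infinite := Set.Finite.infinite_compl (Set.finite_singleton 0)
      exact this.mono (fun x hx => hroot x hx)
  rw [hDzero] at heval0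
  simp at heval0


end engine


section helpers
variable {K U V : Type*} [Field K] [AddCommGroup U] [Module K U]
  [AddCommGroup V] [Module K V] [FiniteDimensional K U] [FiniteDimensional K V]

-- dependence from finrank bound
theorem dep_of_finrank {k : ℕ} (W : Submodule K V) (v : Fin k → V)
    (hv : ∀ i, v i ∈ W) (hk : finrank K W < k) : ¬ LinearIndependent K v := by
  intro h
  have h' : LinearIndependent K (fun i => (⟨v i, hv i⟩ : W)) := by
    apply LinearIndependent.of_comp W.subtype
    exact h
  have := h'.fintype_card_le_finrank
  simp at this
  omega

-- general rank-nullity for image of a submodule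
theorem finrank_map_add_inf_ker {V' : Type*} [AddCommGroup V'] [Module K V']
    (g : V →ₗ[K] V') (p : Submodule K V) :
    finrank K p = finrank K (p.map g) + finrank K (p ⊓ LinearMap.ker g : Submodule K V) := by
  have h1 := LinearMap.finrank_range_add_finrank_ker (g.domRestrict p)
  have h2 : LinearMap.range (g.domRestrict p) = p.map g := by
    rw [LinearMap.range_domRestrict]
  have h3 : finrank K (LinearMap.ker (g.domRestrict p)) = finrank K (p ⊓ LinearMap.ker g : Submodule K V) := by
    have e1 : LinearMap.ker (g.domRestrict p) = Submodule.comap p.subtype (p ⊓ LinearMap.ker g) := by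
      ext z
      simp [LinearMap.mem_ker, Submodule.mem_comap, z.2]
    rw [e1]
    exact (Submodule.comapSubtypeEquivOfLe inf_le_left).finrank_eq
  rw [← h1, h2, h3]

-- existence of maximizer of evaluation rank
theorem exists_max_ev (T : Submodule K (U →ₗ[K] V)) :
    ∃ (r : ℕ) (x0 : U), (∀ x : U, finrank K (T.map (LinearMap.applyₗ x)) ≤ r) ∧
      finrank K (T.map (LinearMap.applyₗ x0)) = r := by
  have hbdd : BddAbove (Set.range fun x : U => finrank K (T.map (LinearMap.applyₗ x))) := by
    refine ⟨finrank K V, ?_⟩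
    rintro k ⟨x, rfl⟩
    exact Submodule.finrank_le _
  have hne : (Set.range fun x : U => finrank K (T.map (LinearMap.applyₗ x))).Nonempty := ⟨_, ⟨0, rfl⟩⟩
  obtain ⟨x0, hx0⟩ := Nat.sSup_mem hne hbdd
  exact ⟨_, x0, fun x => le_csSup hbdd ⟨x, rfl⟩, hx0⟩

theorem mem_evmap {T : Submodule K (U →ₗ[K] V)} {x : U} {v : V} :
    v ∈ T.map (LinearMap.applyₗ x) ↔ ∃ s ∈ T, s x = v := by
  simp [Submodule.mem_map]

end helpers


section lemAsec
variable {K U V : Type*} [Field K] [AddCommGroup U] [Module K U]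
  [AddCommGroup V] [Module K V] [FiniteDimensional K U] [FiniteDimensional K V]

theorem lemA {T : Submodule K (U →ₗ[K] V)} {r : ℕ}
    (hK : (r : Cardinal) < Cardinal.mk K)
    (hmax : ∀ x : U, finrank K (T.map (LinearMap.applyₗ x)) ≤ r)
    {x0 : U} (hx0 : finrank K (T.map (LinearMap.applyₗ x0)) = r)
    {f : U →ₗ[K] V} (hfT : f ∈ T) (hf0 : f x0 = 0) (x : U) :
    f x ∈ T.map (LinearMap.applyₗ x0) := by
  classical
  set P := T.map (LinearMap.applyₗ x0) with hP
  have hPr : finrank K P = r := hx0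
  let B : Basis (Fin r) K P := (Module.finBasis K P).reindex (finCongr hPr)
  set u : Fin r → V := fun i => (B i : V) with hu
  have hu_indep : LinearIndependent K u := by
    have := B.linearIndependent
    have h2 := this.map' P.subtype P.ker_subtype
    exact h2
  have hu_memP : ∀ i, u i ∈ P := fun i => (B i).2
  have hspan_le : Submodule.span K (Set.range u) ≤ P := by
    rw [Submodule.span_le]
    rintro _ ⟨i, rfl⟩
    exact hu_memP i
  -- pick preimages
  have hpre : ∀ i : Fin r, ∃ s, s ∈ T ∧ s x0 = u i := by
    intro i
    have := hu_memP i
    rw [hP, Submodule.mem_map] at this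
    obtain ⟨s, hsT, hsv⟩ := this
    exact ⟨s, hsT, hsv⟩
  choose hs hsT hsx0 using hpre
  by_contra hnot
  have hfx_not_span : f x ∉ Submodule.span K (Set.range u) := fun hmem => hnot (hspan_le hmem)
  have hsnoc : LinearIndependent K (Fin.snoc u (f x) : Fin (r+1) → V) :=
    linearIndependent_fin_snoc.2 ⟨hu_indep, hfx_not_span⟩
  refine coreSnoc hK u (fun i => hs i x) (f x) ?_ ?_ hsnoc
  · intro l hl
    apply dep_of_finrank (T.map (LinearMap.applyₗ (x0 + l • x)))
    · intro i
      refine Fin.lastCases ?_ ?_ i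
      · rw [Fin.snoc_last]
        have hfval : f (x0 + l • x) = l • f x := by
          rw [map_add, map_smul, hf0, zero_add]
        have : f x = l⁻¹ • (f (x0 + l • x)) := by
          rw [hfval, smul_smul, inv_mul_cancel₀ hl, one_smul]
        rw [this]
        exact Submodule.smul_mem _ _ ⟨f, hfT, rfl⟩
      · intro i
        rw [Fin.snoc_castSucc]
        have : u i + l • hs i x = (hs i) (x0 + l • x) := by
          rw [map_add, map_smul, hsx0]
        rw [this]
        exact ⟨hs i, hsT i, rfl⟩
    · exact lt_of_le_of_lt (hmax _) (Nat.lt_succ_self r)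
  · apply dep_of_finrank (T.map (LinearMap.applyₗ x))
    · intro i
      refine Fin.lastCases ?_ ?_ i
      · rw [Fin.snoc_last]
        exact ⟨f, hfT, rfl⟩
      · intro i
        rw [Fin.snoc_castSucc]
        exact ⟨hs i, hsT i, rfl⟩
    · exact lt_of_le_of_lt (hmax _) (Nat.lt_succ_self r)


end lemAsec

section ph2
variable {K U V : Type*} [Field K] [AddCommGroup U] [Module K U]
  [AddCommGroup V] [Module K V] [FiniteDimensional K U] [FiniteDimensional K V]

theorem exists_basis_family {M : Type*} [AddCommGroup M] [Module K M]
    (S : Submodule K M) [FiniteDimensional K S] {n : ℕ} (h : finrank K S = n) :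
    ∃ σ : Fin n → M, (∀ i, σ i ∈ S) ∧ LinearIndependent K σ ∧
      ∀ s ∈ S, ∃ c : Fin n → K, (∑ i, c i • σ i) = s := by
  classical
  let B : Basis (Fin n) K S := (Module.finBasis K S).reindex (finCongr h)
  refine ⟨fun i => (B i : M), fun i => (B i).2, ?_, ?_⟩
  · exact B.linearIndependent.map' S.subtype S.ker_subtype
  · intro s hs
    refine ⟨fun i => B.repr ⟨s, hs⟩ i, ?_⟩
    have := B.sum_repr ⟨s, hs⟩
    calc (∑ i, (B.repr ⟨s, hs⟩) i • (B i : M))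
        = ((∑ i, (B.repr ⟨s, hs⟩) i • B i : S) : M) := by
          rw [Submodule.coe_sum]
          simp
      _ = s := by rw [this]



theorem quot_bound (s : U →ₗ[K] V) (W : Submodule K V) (X : Submodule K (V ⧸ W))
    (h : ∀ z : U, W.mkQ (s z) ∈ X) :
    finrank K (LinearMap.range s) ≤ finrank K X + finrank K W := by
  have h1 : LinearMap.range s ≤ Submodule.comap W.mkQ X := by
    rintro _ ⟨z, rfl⟩
    exact h z
  have h2 : finrank K (Submodule.comap W.mkQ X) ≤ finrank K X + finrank K W := by
    have h3 := finrank_map_add_inf_ker (W.mkQ) (Submodule.comap W.mkQ X)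
    have h4 : finrank K ((Submodule.comap W.mkQ X).map W.mkQ) ≤ finrank K X :=
      Submodule.finrank_mono (Submodule.map_comap_le _ _)
    have h5 : finrank K (Submodule.comap W.mkQ X ⊓ LinearMap.ker W.mkQ : Submodule K V) ≤ finrank K W := by
      refine Submodule.finrank_mono ?_
      rw [Submodule.ker_mkQ]
      exact inf_le_right
    omega
  exact le_trans (Submodule.finrank_mono h1) h2





theorem phase2 {n : ℕ} (hn : 1 ≤ n) (hK : (n : Cardinal) < Cardinal.mk K)
    (S : Submodule K (U →ₗ[K] V)) (hdim : finrank K S = n)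
    (f : U →ₗ[K] V) (hf : f ≠ 0) (hwit : ∀ x : U, ∃ s ∈ S, s x = f x)
    (W : Submodule K V) (hfW : LinearMap.range f ≤ W) {ρW : ℕ} (hW : finrank K W ≤ ρW) :
    ∃ s ∈ S, s ≠ 0 ∧ finrank K (LinearMap.range s) ≤ (n - 1) + ρW := by
  classical
  set q := W.mkQ with hq
  have hfWmem : ∀ z : U, q (f z) = 0 := by
    intro z
    rw [hq, Submodule.mkQ_apply]
    exact (Submodule.Quotient.mk_eq_zero W).2 (hfW ⟨z, rfl⟩)
  by_cases hker : ∃ s ∈ S, s ≠ 0 ∧ ∀ z : U, q (s z) = 0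
  · obtain ⟨s, hsS, hsne, hs0⟩ := hker
    refine ⟨s, hsS, hsne, ?_⟩
    have : LinearMap.range s ≤ W := by
      rintro _ ⟨z, rfl⟩
      have := hs0 z
      rw [hq, Submodule.mkQ_apply] at this
      exact (Submodule.Quotient.mk_eq_zero W).1 this
    exact le_trans (Submodule.finrank_mono this) (by omega)
  · push_neg at hker
    -- local singularity of q ∘ S
    obtain ⟨σf, hσS, hσind, hσspan⟩ := exists_basis_family S hdim
    have hcomb : ∀ s ∈ S, s ≠ 0 → ∃ c : Fin n → K, (∑ i, c i • σf i) = s ∧ ∃ i, c i ≠ 0 := by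
      intro s hs hne
      obtain ⟨c, hc⟩ := hσspan s hs
      refine ⟨c, hc, ?_⟩
      by_contra hc0
      push_neg at hc0
      apply hne
      rw [← hc]
      simp [hc0]
    have locsing : ∀ x : U, ∃ s, s ∈ S ∧ s ≠ 0 ∧ q (s x) = 0 := by
      intro x
      by_cases hfx : f x = 0
      · obtain ⟨y, hy⟩ : ∃ y, f y ≠ 0 := by
          by_contra h
          push_neg at h
          exact hf (LinearMap.ext (by simpa using h))
        by_contra hno
        push_neg at hno
        have Hx : LinearIndependent K (fun i => q (σf i x)) := by
          by_contra hdep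
          obtain ⟨c, hc, i0, hi0⟩ := Fintype.not_linearIndependent_iff.1 hdep
          set s : U →ₗ[K] V := ∑ i, c i • σf i with hs
          have hsS : s ∈ S := Submodule.sum_mem _ (fun i _ => Submodule.smul_mem _ _ (hσS i))
          have hsne : s ≠ 0 := by
            intro h0
            have := Fintype.linearIndependent_iff.1 hσind c (by rw [← hs, h0]) i0
            exact hi0 this
          refine hno s hsS hsne ?_
          have : s x = ∑ i, c i • (σf i x) := by
            rw [hs]
            simp [LinearMap.sum_apply]
          rw [this, map_sum]
          simpa using hc
        -- dependence at points x + l y for l ≠ 0, and at y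
        have hdep_at : ∀ z : U, f z ≠ 0 → ¬ LinearIndependent K (fun i => q (σf i z)) := by
          intro z hz
          obtain ⟨s, hsS, hsz⟩ := hwit z
          have hsne : s ≠ 0 := by
            intro h0
            rw [h0] at hsz
            exact hz (by simpa using hsz.symm)
          obtain ⟨c, hcs, i0, hi0⟩ := hcomb s hsS hsne
          rw [Fintype.not_linearIndependent_iff]
          refine ⟨c, ?_, i0, hi0⟩
          have hsum : (∑ i, c i • (σf i z)) = s z := by
            rw [← hcs]
            simp [LinearMap.sum_apply]
          calc (∑ i, c i • q (σf i z)) = q (∑ i, c i • σf i z) := by rw [map_sum]; simp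
            _ = q (s z) := by rw [hsum]
            _ = q (f z) := by rw [hsz]
            _ = 0 := hfWmem z
        refine (core0 hK (fun i => q (σf i x)) (fun i => q (σf i y)) ?_ ?_) Hx
        · intro l hl
          have hz : f (x + l • y) ≠ 0 := by
            rw [map_add, map_smul, hfx, zero_add]
            simp [hl, hy]
          have := hdep_at (x + l • y) hz
          have heq : (fun i => q (σf i (x + l • y))) = fun i => q (σf i x) + l • q (σf i y) := by
            funext i
            rw [map_add, map_smul, map_add, map_smul]
          rw [heq] at this
          exact this
        · exact hdep_at y hy
      · obtain ⟨s, hsS, hsx⟩ := hwit x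
        refine ⟨s, hsS, ?_, ?_⟩
        · intro h0
          rw [h0] at hsx
          exact hfx (by simpa using hsx.symm)
        · rw [hsx]
          exact hfWmem x
    -- the quotient operator space
    set Pi : (U →ₗ[K] V) →ₗ[K] (U →ₗ[K] V ⧸ W) := LinearMap.llcomp K U V (V ⧸ W) q with hPi
    have hPiapp : ∀ (s : U →ₗ[K] V) (z : U), (Pi s) z = q (s z) := fun s z => rfl
    set S' : Submodule K (U →ₗ[K] V ⧸ W) := S.map Pi with hS'
    have hinj : ∀ s ∈ S, Pi s = 0 → s = 0 := by
      intro s hs h0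
      by_contra hne
      obtain ⟨z, hz⟩ := hker s hs hne
      apply hz
      rw [← hPiapp s z, h0]
      rfl
    obtain ⟨r', x', hmax', hx'⟩ := exists_max_ev S'
    -- each evaluation of S' is singular
    have hsing : ∀ x : U, ∃ s, s ∈ S ∧ Pi s ≠ 0 ∧ (Pi s) x = 0 := by
      intro x
      obtain ⟨s, hsS, hsne, hs0⟩ := locsing x
      refine ⟨s, hsS, ?_, ?_⟩
      · intro h0
        exact hsne (hinj s hsS h0)
      · rw [hPiapp]
        exact hs0
    have hmaxn : ∀ x : U, finrank K (S'.map (LinearMap.applyₗ x)) ≤ n - 1 := by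
      intro x
      obtain ⟨s, hsS, hsne, hs0⟩ := hsing x
      have hrn := finrank_map_add_inf_ker (LinearMap.applyₗ (R := K) x) S'
      have hS'dim : finrank K S' = n := by
        have h1 := finrank_map_add_inf_ker Pi S
        have h2 : (S ⊓ LinearMap.ker Pi : Submodule K (U →ₗ[K] V)) = ⊥ := by
          rw [eq_bot_iff]
          rintro s ⟨hs1, hs2⟩
          have := hinj s hs1 hs2
          simp [this]
        rw [h2] at h1
        have h3 : finrank K (⊥ : Submodule K (U →ₗ[K] V)) = 0 := by simp
        rw [h3] at h1
        rw [hS']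
        omega
      have hker' : finrank K (S' ⊓ LinearMap.ker (LinearMap.applyₗ (R := K) x) : Submodule K (U →ₗ[K] V ⧸ W)) ≠ 0 := by
        intro h0
        rw [Submodule.finrank_eq_zero] at h0
        have hmem : Pi s ∈ S' ⊓ LinearMap.ker (LinearMap.applyₗ (R := K) x) :=
          Submodule.mem_inf.2 ⟨⟨s, hsS, rfl⟩, LinearMap.mem_ker.2 hs0⟩
        rw [h0] at hmem
        exact hsne (by simpa using hmem)
      rw [hS'dim] at hrn
      omega
    have hr' : r' ≤ n - 1 := by
      rw [← hx']
      exact hmaxn x'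
    obtain ⟨s, hsS, hsne0, hs0⟩ := hsing x'
    have hKr' : (r' : Cardinal) < Cardinal.mk K :=
      lt_of_le_of_lt (by exact_mod_cast Nat.cast_le.2 (le_trans hr' (Nat.sub_le n 1))) hK
    have hmem : ∀ z : U, (Pi s) z ∈ S'.map (LinearMap.applyₗ x') := by
      intro z
      exact lemA hKr' hmax' hx' ⟨s, hsS, rfl⟩ hs0 z
    refine ⟨s, hsS, ?_, ?_⟩
    · intro h0
      apply hsne0
      rw [h0]
      simp
    · have hb := quot_bound s W (S'.map (LinearMap.applyₗ x')) (fun z => hmem z)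
      have : finrank K (S'.map (LinearMap.applyₗ x')) ≤ n - 1 := hmaxn x'
      omega


end ph2

section main
variable {K U V : Type*} [Field K] [AddCommGroup U] [Module K U]
  [AddCommGroup V] [Module K V] [FiniteDimensional K U] [FiniteDimensional K V]

theorem stmt15' {n : ℕ} (hn : 2 ≤ n) (hK : (n : Cardinal) < Cardinal.mk K)
    (S : Submodule K (U →ₗ[K] V)) (hdim : Module.finrank K S = n)
    (hnonrefl : ∃ g : U →ₗ[K] V, g ∉ S ∧ ∀ x : U, ∃ f ∈ S, f x = g x) :
    ∃ f ∈ S, f ≠ 0 ∧ LinearMap.rank f ≤ ((2 * n - 2 : ℕ) : Cardinal) := by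
  classical
  by_contra hcon
  push_neg at hcon
  -- translate to finrank
  have hbig : ∀ s : U →ₗ[K] V, s ∈ S → s ≠ 0 → ¬ (finrank K (LinearMap.range s) ≤ 2 * n - 2) := by
    intro s hsS hsne hle
    have h1 := hcon s hsS hsne
    have h2 : LinearMap.rank s = (finrank K (LinearMap.range s) : Cardinal) := by
      rw [LinearMap.rank]
      exact (Module.finrank_eq_rank K _).symm
    rw [h2] at h1
    have := h1.trans_le (Nat.cast_le.2 hle)
    exact lt_irrefl _ this
  obtain ⟨g, hgS, hgwit⟩ := hnonrefl
  have hgne : g ≠ 0 := by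
    intro h0
    exact hgS (h0 ▸ S.zero_mem)
  set T : Submodule K (U →ₗ[K] V) := S ⊔ Submodule.span K {g} with hT
  have hST : S ≤ T := le_sup_left
  have hgT : g ∈ T := Submodule.mem_sup_right (Submodule.mem_span_singleton_self g)
  have hTinf : S ⊓ Submodule.span K {g} = ⊥ := by
    rw [eq_bot_iff]
    rintro v ⟨hv1, hv2⟩
    obtain ⟨c, rfl⟩ := Submodule.mem_span_singleton.1 hv2
    rcases eq_or_ne c 0 with rfl | hc
    · simp
    · exfalso
      apply hgS
      have : c⁻¹ • (c • g) ∈ S := Submodule.smul_mem _ _ hv1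
      rwa [smul_smul, inv_mul_cancel₀ hc, one_smul] at this
  have hTdim : finrank K T = n + 1 := by
    have := Submodule.finrank_sup_add_finrank_inf_eq S (Submodule.span K {g})
    rw [hTinf, hdim, finrank_span_singleton hgne, ← hT] at this
    have hb : finrank K (⊥ : Submodule K (U →ₗ[K] V)) = 0 := by simp
    rw [hb] at this
    omega
  -- witnesses for all elements of T
  have hwitT : ∀ t ∈ T, ∀ x : U, ∃ s ∈ S, s x = t x := by
    intro t ht x
    obtain ⟨s', hs', z, hz, hsum⟩ := Submodule.mem_sup.1 ht
    obtain ⟨c, rfl⟩ := Submodule.mem_span_singleton.1 hz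
    obtain ⟨sg, hsgS, hsgx⟩ := hgwit x
    refine ⟨s' + c • sg, Submodule.add_mem _ hs' (Submodule.smul_mem _ _ hsgS), ?_⟩
    rw [← hsum]
    simp [hsgx]
  -- evaluations of T equal evaluations of S
  have hTx : ∀ x : U, T.map (LinearMap.applyₗ x) = S.map (LinearMap.applyₗ x) := by
    intro x
    apply le_antisymm
    · rintro _ ⟨t, htT, rfl⟩
      obtain ⟨s, hsS, hsx⟩ := hwitT t htT x
      exact ⟨s, hsS, hsx⟩
    · exact Submodule.map_mono hST
  have hTxn : ∀ x : U, finrank K (T.map (LinearMap.applyₗ x)) ≤ n := by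
    intro x
    rw [hTx x]
    have := Submodule.finrank_map_le (LinearMap.applyₗ x) S
    omega
  obtain ⟨r, x0, hmax, hx0⟩ := exists_max_ev T
  have hrn : r ≤ n := by rw [← hx0]; exact hTxn x0
  have hKr : (r : Cardinal) < Cardinal.mk K :=
    lt_of_le_of_lt (Nat.cast_le.2 hrn) hK
  have hrk0 := finrank_map_add_inf_ker (LinearMap.applyₗ (R := K) x0) T
  set P : Submodule K V := T.map (LinearMap.applyₗ x0) with hP
  set T0 : Submodule K (U →ₗ[K] V) := T ⊓ LinearMap.ker (LinearMap.applyₗ x0) with hT0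
  have hT0dim : finrank K T0 = n + 1 - r := by
    rw [hTdim, hx0] at hrk0
    omega
  -- Lemma A for T
  have hlemT : ∀ f ∈ T, f x0 = 0 → ∀ x : U, f x ∈ P :=
    fun f hf h0 x => lemA hKr hmax hx0 hf h0 x
  -- elements of T vanishing at x0 have small rank
  have hT0rank : ∀ f ∈ T0, finrank K (LinearMap.range f) ≤ r := by
    intro f hf
    have h1 : LinearMap.range f ≤ P := by
      rintro _ ⟨x, rfl⟩
      exact hlemT f hf.1 (LinearMap.mem_ker.1 hf.2) x
    exact le_trans (Submodule.finrank_mono h1) (le_of_eq hx0)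
  by_cases hTS : ∃ t, t ∈ T0 ⊓ S ∧ t ≠ 0
  · obtain ⟨t, ⟨htT0, htS⟩, htne⟩ := hTS
    refine hbig t htS htne ?_
    have := hT0rank t htT0
    omega
  · -- here T0 ⊓ S = ⊥, r = n, and we get the distinguished witness h
    push_neg at hTS
    have hT0S : T0 ⊓ S = ⊥ := by
      rw [eq_bot_iff]
      intro t ht
      by_contra htne
      exact htne (hTS t ht)
    have hT0le1 : finrank K T0 ≤ 1 := by
      have := Submodule.finrank_sup_add_finrank_inf_eq T0 S
      rw [hT0S, hdim] at this
      have hb : finrank K (⊥ : Submodule K (U →ₗ[K] V)) = 0 := by simp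
      rw [hb] at this
      have h2 : finrank K (T0 ⊔ S : Submodule K (U →ₗ[K] V)) ≤ n + 1 := by
        rw [← hTdim]
        exact Submodule.finrank_mono (sup_le (inf_le_left) hST)
      omega
    have hreq : r = n := by omega
    have hT0dim1 : finrank K T0 = 1 := by omega
    have hT0ne : T0 ≠ ⊥ := by
      intro h0
      rw [h0] at hT0dim1
      simp at hT0dim1
    obtain ⟨h, hhT0, hhne⟩ := Submodule.exists_mem_ne_zero_of_ne_bot hT0ne
    have hhT : h ∈ T := hhT0.1
    have hhx0 : h x0 = 0 := LinearMap.mem_ker.1 hhT0.2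
    have hwith : ∀ x, ∃ s ∈ S, s x = h x := fun x => hwitT h hhT x
    have him : ∀ x, h x ∈ P := fun x => hlemT h hhT hhx0 x
    have hPn : finrank K P = n := by rw [hx0, hreq]
    by_cases hrh : finrank K (LinearMap.range h) ≤ n - 1
    · obtain ⟨s, hsS, hsne, hsr⟩ := phase2 (by omega) hK S hdim h hhne hwith
        (LinearMap.range h) le_rfl hrh
      exact hbig s hsS hsne (by omega)
    · have hrangeP : LinearMap.range h ≤ P := by
        rintro _ ⟨x, rfl⟩
        exact him x
      have hrhn : finrank K (LinearMap.range h) = n := by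
        have h1 : finrank K (LinearMap.range h) ≤ n :=
          le_trans (Submodule.finrank_mono hrangeP) (le_of_eq hPn)
        omega
      have hrangeEq : LinearMap.range h = P :=
        Submodule.eq_of_le_of_finrank_le hrangeP (by rw [hPn, hrhn])
      -- evaluation at x0 as an equivalence S ≃ P
      have hmemP : ∀ s : S, (s : U →ₗ[K] V) x0 ∈ P := fun s => ⟨(s : U →ₗ[K] V), hST s.2, rfl⟩
      set e : S →ₗ[K] P :=
        LinearMap.codRestrict P ((LinearMap.applyₗ x0).domRestrict S) hmemP with he
      have heapp : ∀ s : S, ((e s : V)) = (s : U →ₗ[K] V) x0 := fun s => rfl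
      have heinj : Function.Injective e := by
        intro s1 s2 heq
        have hv : (s1 : U →ₗ[K] V) x0 = (s2 : U →ₗ[K] V) x0 := by
          rw [← heapp s1, ← heapp s2, heq]
        have hker : (LinearMap.applyₗ (R := K) x0) ((s1 : U →ₗ[K] V) - (s2 : U →ₗ[K] V)) = 0 := by
          have : ((s1 : U →ₗ[K] V) - (s2 : U →ₗ[K] V)) x0 = 0 := by
            rw [LinearMap.sub_apply, hv, sub_self]
          simpa using this
        have hd : ((s1 : U →ₗ[K] V) - (s2 : U →ₗ[K] V)) ∈ T0 ⊓ S :=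
          ⟨⟨hST (Submodule.sub_mem _ s1.2 s2.2), LinearMap.mem_ker.2 hker⟩,
            Submodule.sub_mem _ s1.2 s2.2⟩
        rw [hT0S] at hd
        have : (s1 : U →ₗ[K] V) - (s2 : U →ₗ[K] V) = 0 := hd
        exact Subtype.ext (by rwa [sub_eq_zero] at this)
      have hesurj : Function.Surjective e :=
        (LinearMap.injective_iff_surjective_of_finrank_eq_finrank (by rw [hdim, hPn])).1 heinj
      set eq : S ≃ₗ[K] P := LinearEquiv.ofBijective e ⟨heinj, hesurj⟩ with heq
      set θe : P ≃ₗ[K] S := eq.symm with hθe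
      have hθ1 : ∀ p : P, ((θe p : U →ₗ[K] V)) x0 = (p : V) := by
        intro p
        have h1 : e (θe p) = p := eq.apply_symm_apply p
        calc (θe p : U →ₗ[K] V) x0 = ((e (θe p) : P) : V) := (heapp _).symm
          _ = (p : V) := by rw [h1]
      have hθ2 : ∀ s : S, θe (e s) = s := fun s => eq.symm_apply_apply s
      -- section of h
      set h' : U →ₗ[K] P := LinearMap.codRestrict P h him with hh'
      have hh'surj : Function.Surjective h' := by
        intro p
        have hmem : (p : V) ∈ LinearMap.range h := by rw [hrangeEq]; exact p.2
        obtain ⟨x, hx⟩ := hmem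
        exact ⟨x, Subtype.ext hx⟩
      obtain ⟨τ, hτ⟩ := h'.exists_rightInverse_of_surjective (LinearMap.range_eq_top.2 hh'surj)
      have hτapp : ∀ b : P, h' (τ b) = b := by
        intro b
        have := LinearMap.congr_fun hτ b
        simpa using this
      have hhτ : ∀ b : P, h (τ b) = (b : V) := fun b => congrArg Subtype.val (hτapp b)
      -- the canonical witness family
      set Θ : U →ₗ[K] (U →ₗ[K] V) := S.subtype ∘ₗ θe.toLinearMap ∘ₗ h' with hΘ
      have hΘapp : ∀ z, Θ z = (θe (h' z) : U →ₗ[K] V) := fun z => rfl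
      have hΘS : ∀ z, Θ z ∈ S := fun z => (θe (h' z)).2
      have hΘx0 : ∀ z, (Θ z) x0 = h z := by
        intro z
        rw [hΘapp, hθ1 (h' z)]
        rfl
      have hΘsurj : ∀ s ∈ S, ∃ z, Θ z = s := by
        intro s hs
        refine ⟨τ (e ⟨s, hs⟩), ?_⟩
        rw [hΘapp, hτapp, hθ2]
      -- basis family of S evaluated at x0
      obtain ⟨σf, hσS, hσind, hσspan⟩ := exists_basis_family S hdim
      set u : Fin n → V := fun i => σf i x0 with hu
      have huP : ∀ i, u i ∈ P := fun i => ⟨σf i, hST (hσS i), rfl⟩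
      have huind : LinearIndependent K u := by
        rw [Fintype.linearIndependent_iff]
        intro c hc
        have hsum : (∑ i, c i • σf i) x0 = 0 := by
          rw [LinearMap.sum_apply]
          simpa [LinearMap.smul_apply] using hc
        have hmem : (∑ i, c i • σf i) ∈ T0 ⊓ S := by
          refine ⟨⟨hST ?_, LinearMap.mem_ker.2 (by simpa using hsum)⟩, ?_⟩ <;>
            exact Submodule.sum_mem _ (fun i _ => Submodule.smul_mem _ _ (hσS i))
        rw [hT0S] at hmem
        have h0 : (∑ i, c i • σf i) = 0 := hmem
        exact Fintype.linearIndependent_iff.1 hσind c h0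
      have huspan : ∀ v, v ∈ P → v ∈ Submodule.span K (Set.range u) := by
        intro v hv
        rw [hP, hTx x0] at hv
        obtain ⟨s, hsS, rfl⟩ := hv
        obtain ⟨c, hc⟩ := hσspan s hsS
        have : (LinearMap.applyₗ (R := K) x0) s = ∑ i, c i • u i := by
          rw [← hc]
          simp [LinearMap.sum_apply, hu]
        rw [this]
        exact Submodule.sum_mem _ (fun i _ =>
          Submodule.smul_mem _ _ (Submodule.subset_span ⟨i, rfl⟩))
      have hspanu_le : Submodule.span K (Set.range u) ≤ P := by
        rw [Submodule.span_le]
        rintro _ ⟨i, rfl⟩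
        exact huP i
      -- C5 : the crucial quadratic membership
      have hC5 : ∀ z : U, ∀ s' : U →ₗ[K] V, s' ∈ S → s' x0 = h z → s' z ∈ P := by
        intro z s' hs'S hs'x0
        by_contra hnot
        have hsnoc : LinearIndependent K (Fin.snoc u (s' z) : Fin (n+1) → V) :=
          linearIndependent_fin_snoc.2 ⟨huind, fun hmem => hnot (hspanu_le hmem)⟩
        refine coreSnoc hK u (fun i => σf i z) (s' z) ?_ ?_ hsnoc
        · intro l hl
          apply dep_of_finrank (T.map (LinearMap.applyₗ (x0 + l • z)))
          · intro i
            refine Fin.lastCases ?_ (fun i => ?_) i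
            · rw [Fin.snoc_last]
              have e1 : s' (x0 + l • z) = h z + l • s' z := by
                rw [map_add, map_smul, hs'x0]
              have e2 : h (x0 + l • z) = l • h z := by
                rw [map_add, map_smul, hhx0, zero_add]
              have e3 : s' z = l⁻¹ • s' (x0 + l • z) - (l⁻¹ * l⁻¹) • h (x0 + l • z) := by
                rw [e1, e2, smul_add, smul_smul, smul_smul]
                rw [inv_mul_cancel₀ hl, one_smul, mul_assoc, inv_mul_cancel₀ hl, mul_one]
                abel
              rw [e3]
              exact Submodule.sub_mem _
                (Submodule.smul_mem _ _ ⟨s', hST hs'S, rfl⟩)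
                (Submodule.smul_mem _ _ ⟨h, hhT, rfl⟩)
            · rw [Fin.snoc_castSucc]
              have e4 : u i + l • σf i z = σf i (x0 + l • z) := by
                rw [map_add, map_smul]
              rw [e4]
              exact ⟨σf i, hST (hσS i), rfl⟩
          · have := hmax (x0 + l • z)
            omega
        · apply dep_of_finrank (T.map (LinearMap.applyₗ z))
          · intro i
            refine Fin.lastCases ?_ (fun i => ?_) i
            · rw [Fin.snoc_last]
              exact ⟨s', hST hs'S, rfl⟩
            · rw [Fin.snoc_castSucc]
              exact ⟨σf i, hST (hσS i), rfl⟩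
          · have := hmax z
            omega
      -- diagonal of Θ lands in P
      have hdiag : ∀ z : U, (Θ z) z ∈ P := fun z => hC5 z (Θ z) (hΘS z) (hΘx0 z)
      have hpolar : ∀ z w : U, (Θ z) w + (Θ w) z ∈ P := by
        intro z w
        have h1 := hdiag (z + w)
        have h2 := hdiag z
        have h3 := hdiag w
        have e : (Θ z) w + (Θ w) z = (Θ (z + w)) (z + w) - (Θ z) z - (Θ w) w := by
          rw [map_add]
          simp only [LinearMap.add_apply, map_add]
          abel
        rw [e]
        exact Submodule.sub_mem _ (Submodule.sub_mem _ h1 h2) h3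
      -- everything in S maps the kernel of h into P
      have hSZ : ∀ w : U, h w = 0 → ∀ s ∈ S, s w ∈ P := by
        intro w hw s hs
        obtain ⟨z, hz⟩ := hΘsurj s hs
        have hΘw : Θ w = 0 := by
          rw [hΘapp]
          have hw' : h' w = 0 := Subtype.ext hw
          rw [hw']
          simp
        have hpz := hpolar z w
        rw [hΘw] at hpz
        simp only [LinearMap.zero_apply, add_zero] at hpz
        rwa [hz] at hpz
      -- decomposition along the section τ
      have hwz : ∀ z : U, h (z - τ (h' z)) = 0 := by
        intro z
        rw [map_sub, hhτ (h' z)]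
        show h z - ((h' z : P) : V) = 0
        rw [sub_eq_zero]
        rfl
      have hdecomp : ∀ b : P, ∀ z : U,
          (Θ (τ b)) z = (Θ (τ b)) (τ (h' z)) + (Θ (τ b)) (z - τ (h' z)) := by
        intro b z
        rw [← map_add]
        congr 1
        abel
      -- the quotient pairing
      set Lmap : P → (P →ₗ[K] V ⧸ P) := fun b => P.mkQ ∘ₗ (Θ (τ b)) ∘ₗ τ with hLmap
      have hLapp : ∀ b a : P, Lmap b a = P.mkQ ((Θ (τ b)) (τ a)) := fun b a => rfl
      have hL15 : ∀ b : P, Lmap b b = 0 := by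
        intro b
        rw [hLapp, Submodule.mkQ_apply]
        exact (Submodule.Quotient.mk_eq_zero P).2 (hdiag (τ b))
      have halt : ∀ a b : P, Lmap a b = - Lmap b a := by
        intro a b
        have hp : P.mkQ ((Θ (τ a)) (τ b)) + P.mkQ ((Θ (τ b)) (τ a)) = 0 := by
          rw [← map_add, Submodule.mkQ_apply]
          exact (Submodule.Quotient.mk_eq_zero P).2 (hpolar (τ a) (τ b))
        rw [hLapp, hLapp]
        exact eq_neg_of_add_eq_zero_left hp
      -- nonvanishing of the canonical elements
      have hsbne : ∀ b : P, b ≠ 0 → Θ (τ b) ≠ 0 := by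
        intro b hb h0
        apply hb
        have : (Θ (τ b)) x0 = h (τ b) := hΘx0 (τ b)
        rw [h0, hhτ b] at this
        exact Subtype.ext (by simpa using this.symm)
      -- covering: values of Θ (τ b) modulo P come from Lmap b
      have hcover : ∀ b : P, ∀ z : U, P.mkQ ((Θ (τ b)) z) = Lmap b (h' z) := by
        intro b z
        rw [hdecomp b z, map_add]
        have h2 : P.mkQ ((Θ (τ b)) (z - τ (h' z))) = 0 := by
          rw [Submodule.mkQ_apply]
          exact (Submodule.Quotient.mk_eq_zero P).2
            (hSZ _ (hwz z) _ (hΘS (τ b)))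
        rw [h2, add_zero, hLapp]
      -- rank of the pairing maps
      have hrankL : ∀ b : P, b ≠ 0 → n - 1 ≤ finrank K (LinearMap.range (Lmap b)) := by
        intro b hb
        have hsne := hsbne b hb
        have hbigb := hbig (Θ (τ b)) (hΘS (τ b)) hsne
        have hq := quot_bound (Θ (τ b)) P (LinearMap.range (Lmap b))
          (fun z => by rw [hcover b z]; exact ⟨h' z, rfl⟩)
        rw [hPn] at hq
        omega
      have hkone : ∀ b : P, b ≠ 0 → ∀ a : P, Lmap b a = 0 → ∃ γ : K, γ • b = a := by
        intro b hb a ha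
        have hrn2 := LinearMap.finrank_range_add_finrank_ker (Lmap b)
        rw [hPn] at hrn2
        have hrb := hrankL b hb
        have hker1 : finrank K (LinearMap.ker (Lmap b)) ≤ 1 := by omega
        have hsple : Submodule.span K {b} ≤ LinearMap.ker (Lmap b) :=
          (Submodule.span_singleton_le_iff_mem _ _).2 (LinearMap.mem_ker.2 (hL15 b))
        have hspfr : finrank K (Submodule.span K {b}) = 1 := finrank_span_singleton hb
        have hEq : Submodule.span K {b} = LinearMap.ker (Lmap b) :=
          Submodule.eq_of_le_of_finrank_le hsple (by omega)
        have : a ∈ Submodule.span K {b} := by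
          rw [hEq]
          exact LinearMap.mem_ker.2 ha
        exact Submodule.mem_span_singleton.1 this
      -- the witness equation
      have h19 : ∀ b : P, b ≠ 0 → ∀ w : U, h w = 0 →
          ∃ γ : K, γ ≠ 0 ∧ γ • ((Θ (τ b)) (τ b) + (Θ (τ b)) w) = (b : V) := by
        intro b hb w hw
        have hz0 : h (τ b + w) = (b : V) := by rw [map_add, hhτ b, hw, add_zero]
        obtain ⟨s, hsS, hsv⟩ := hwith (τ b + w)
        rw [hz0] at hsv
        set a : P := e ⟨s, hsS⟩ with ha
        have hsa : Θ (τ a) = s := by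
          rw [hΘapp, hτapp, hθ2]
        have hLab : Lmap a b = 0 := by
          rw [hLapp, hsa]
          have hsτb : s (τ b) = (b : V) - s w := by
            have hadd : s (τ b) + s w = (b : V) := by rw [← map_add, hsv]
            exact eq_sub_of_add_eq hadd
          rw [hsτb, map_sub]
          have hq1 : P.mkQ (b : V) = 0 := by
            rw [Submodule.mkQ_apply]
            exact (Submodule.Quotient.mk_eq_zero P).2 b.2
          have hq2 : P.mkQ (s w) = 0 := by
            rw [Submodule.mkQ_apply]
            exact (Submodule.Quotient.mk_eq_zero P).2 (hSZ w hw s hsS)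
          rw [hq1, hq2, sub_zero]
        have hLba : Lmap b a = 0 := by
          have := halt a b
          rw [hLab] at this
          exact (neg_eq_zero.1 this.symm)
        obtain ⟨γ, hγ⟩ := hkone b hb a hLba
        have hγne : γ ≠ 0 := by
          rintro rfl
          rw [zero_smul] at hγ
          have hs0 : s = 0 := by
            rw [← hsa, ← hγ, map_zero, map_zero]
          rw [hs0] at hsv
          simp at hsv
          exact hb (Subtype.ext hsv.symm)
        refine ⟨γ, hγne, ?_⟩
        have hsγ : s = γ • Θ (τ b) := by
          rw [← hsa, ← hγ, map_smul, map_smul]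
        calc γ • ((Θ (τ b)) (τ b) + (Θ (τ b)) w)
            = (γ • Θ (τ b)) (τ b + w) := by
              rw [LinearMap.smul_apply, map_add]
          _ = s (τ b + w) := by rw [← hsγ]
          _ = (b : V) := hsv
      -- specialize the witness equation at x0
      have h20 : ∀ b : P, b ≠ 0 →
          ∃ γ : K, γ ≠ 0 ∧ γ • ((Θ (τ b)) (τ b) + (b : V)) = (b : V) := by
        intro b hb
        obtain ⟨γ, hγne, hγ⟩ := h19 b hb x0 hhx0
        refine ⟨γ, hγne, ?_⟩
        rw [hΘx0 (τ b), hhτ b] at hγ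
        exact hγ
      -- final dichotomy
      by_cases hQ0 : ∀ b : P, (Θ (τ b)) (τ b) = 0
      · -- all diagonal values vanish : some canonical element has small rank
        have hPne : P ≠ ⊥ := by
          intro h0
          rw [h0] at hPn
          simp at hPn
          omega
        obtain ⟨v, hvP, hvne⟩ := Submodule.exists_mem_ne_zero_of_ne_bot hPne
        set b : P := ⟨v, hvP⟩ with hb'
        have hb : b ≠ 0 := by
          intro h0
          exact hvne (Subtype.ext_iff.1 h0)
        set Mb : P →ₗ[K] V := (Θ (τ b)) ∘ₗ τ with hMb
        have hMbb : Mb b = 0 := hQ0 b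
        have hrkMb : finrank K (LinearMap.range Mb) ≤ n - 1 := by
          have hrn3 := LinearMap.finrank_range_add_finrank_ker Mb
          rw [hPn] at hrn3
          have hker : 1 ≤ finrank K (LinearMap.ker Mb) := by
            have hle : Submodule.span K {b} ≤ LinearMap.ker Mb :=
              (Submodule.span_singleton_le_iff_mem _ _).2 (LinearMap.mem_ker.2 hMbb)
            have := Submodule.finrank_mono hle
            rw [finrank_span_singleton hb] at this
            exact this
          omega
        have hsw : ∀ w : U, h w = 0 → (Θ (τ b)) w ∈ Submodule.span K {(b : V)} := by
          intro w hw
          obtain ⟨γ, hγne, hγ⟩ := h19 b hb w hw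
          rw [hQ0 b, zero_add] at hγ
          rw [Submodule.mem_span_singleton]
          refine ⟨γ⁻¹, ?_⟩
          rw [← hγ, smul_smul, inv_mul_cancel₀ hγne, one_smul]
        have hrange : LinearMap.range (Θ (τ b)) ≤
            LinearMap.range Mb ⊔ Submodule.span K {(b : V)} := by
          rintro _ ⟨z, rfl⟩
          rw [hdecomp b z]
          exact Submodule.add_mem_sup ⟨h' z, rfl⟩ (hsw _ (hwz z))
        have hfr : finrank K (LinearMap.range (Θ (τ b))) ≤ n := by
          have h4 := Submodule.finrank_sup_add_finrank_inf_eq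
            (LinearMap.range Mb) (Submodule.span K {(b : V)})
          have h5 : finrank K (Submodule.span K {(b : V)}) = 1 := by
            apply finrank_span_singleton
            intro h0
            exact hvne h0
          have h6 := Submodule.finrank_mono hrange
          omega
        exact hbig (Θ (τ b)) (hΘS (τ b)) (hsbne b hb) (by omega)
      · push_neg at hQ0
        obtain ⟨b0, hQb0⟩ := hQ0
        have hb0 : b0 ≠ 0 := by
          rintro rfl
          apply hQb0
          rw [map_zero, map_zero]
        obtain ⟨γ0, hγ0ne, hγ0⟩ := h20 b0 hb0
        -- diagonal value is c • b0
        set c : K := γ0⁻¹ - 1 with hc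
        have hQc : (Θ (τ b0)) (τ b0) = c • (b0 : V) := by
          have h1 : (Θ (τ b0)) (τ b0) + (b0 : V) = γ0⁻¹ • (b0 : V) := by
            have h1' := congrArg (fun y : V => γ0⁻¹ • y) hγ0
            simpa [smul_smul, inv_mul_cancel₀ hγ0ne] using h1'
          have h2 : (Θ (τ b0)) (τ b0) = γ0⁻¹ • (b0 : V) - (b0 : V) := by
            rw [← h1]; abel
          rw [h2, hc, sub_smul, one_smul]
        have hcne : c ≠ 0 := by
          intro h0
          apply hQb0
          rw [hQc, h0, zero_smul]
        set t : K := -c⁻¹ with ht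
        have htne : t ≠ 0 := by
          rw [ht]
          simp [hcne]
        set b1 : P := t • b0 with hb1'
        have hb1 : b1 ≠ 0 := smul_ne_zero htne hb0
        have hQb1 : (Θ (τ b1)) (τ b1) + (b1 : V) = 0 := by
          have e1 : (Θ (τ b1)) (τ b1) = (t * t) • ((Θ (τ b0)) (τ b0)) := by
            simp only [hb1', map_smul, LinearMap.smul_apply, smul_smul]
          have e2 : ((b1 : P) : V) = t • (b0 : V) := rfl
          rw [e1, e2, hQc, smul_smul]
          have hcoef : t * t * c + t = 0 := by
            have htc : t * c = -1 := by
              rw [ht, neg_mul, inv_mul_cancel₀ hcne]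
            have h7 : t * t * c = t * (t * c) := by ring
            rw [h7, htc]
            ring
          rw [← add_smul, hcoef, zero_smul]
        obtain ⟨γ1, hγ1ne, hγ1⟩ := h20 b1 hb1
        rw [hQb1, smul_zero] at hγ1
        have : (b1 : V) = 0 := hγ1.symm
        exact hb1 (Subtype.ext this)


end main

theorem stmt15 {K U V : Type*} [Field K] [AddCommGroup U] [Module K U]
    [AddCommGroup V] [Module K V] [FiniteDimensional K U] [FiniteDimensional K V]
    {n : ℕ} (hn : 2 ≤ n) (hK : (n : Cardinal) < Cardinal.mk K)
    (S : Submodule K (U →ₗ[K] V)) (hdim : Module.finrank K S = n)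
    (hnonrefl : ∃ g : U →ₗ[K] V, g ∉ S ∧ ∀ x : U, ∃ f ∈ S, f x = g x) :
    ∃ f ∈ S, f ≠ 0 ∧ LinearMap.rank f ≤ ((2 * n - 2 : ℕ) : Cardinal) :=
  stmt15' hn hK S hdim hnonrefl
end

section
/- Let (A, ⋆, •) be an LDB division algebra over K. Then there exists a unique quadratic form q on A such that x ⋆ (x • y) = q(x)·y for all x, y ∈ A, and this quadratic form q is non-isotropic (q(x) ≠ 0 for every nonzero x). -/
theorem stmt17 {K : Type*} [Field K] (A : Type*) [AddCommGroup A] [Module K A]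
    [FiniteDimensional K A] (hA : 0 < Module.finrank K A)
    (opStar opBullet : A →ₗ[K] A →ₗ[K] A)
    (hreg : ∀ a b : A, a ≠ 0 → b ≠ 0 → opStar a b ≠ 0)
    (hbz : ∀ a b : A, opBullet a b = 0 ↔ a = 0 ∨ b = 0)
    (hcol : ∀ x y : A, ∃ c : K, opStar x (opBullet x y) = c • y) :
    (∃! q : QuadraticForm K A, ∀ x y : A, opStar x (opBullet x y) = q x • y) ∧
    ∀ q : QuadraticForm K A, (∀ x y : A, opStar x (opBullet x y) = q x • y) →
      ∀ x : A, x ≠ 0 → q x ≠ 0 := by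
  have : Nontrivial A := Module.nontrivial_of_finrank_pos hA
  obtain ⟨y₀, hy₀⟩ := exists_ne (0 : A)
  -- cancellation
  have cancel : ∀ a b : K, a • y₀ = b • y₀ → a = b := by
    intro a b h
    have : (a - b) • y₀ = 0 := by rw [sub_smul, h, sub_self]
    rcases smul_eq_zero.mp this with h' | h'
    · exact sub_eq_zero.mp h'
    · exact absurd h' hy₀
  set g : A → K := fun x => Classical.choose (hcol x y₀) with hg
  have hgspec : ∀ x : A, opStar x (opBullet x y₀) = g x • y₀ :=
    fun x => Classical.choose_spec (hcol x y₀)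
  -- main pointwise lemma
  have main : ∀ x y : A, opStar x (opBullet x y) = g x • y := by
    intro x y
    by_cases hy : y = 0
    · simp [hy]
    by_cases hdep : ∃ t : K, y = t • y₀
    · obtain ⟨t, rfl⟩ := hdep
      rw [map_smul, map_smul, hgspec, smul_comm]
    · obtain ⟨a, ha⟩ := hcol x y
      obtain ⟨d, hd⟩ := hcol x (y + y₀)
      have hsum : d • y + d • y₀ = a • y + g x • y₀ := by
        rw [← smul_add, ← hd, map_add, map_add, ha, hgspec]
      have key : (d - a) • y = (g x - d) • y₀ := by
        rw [sub_smul, sub_smul]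
        linear_combination (norm := module) hsum
      have hda : d = a := by
        by_contra hne
        apply hdep
        refine ⟨(d - a)⁻¹ * (g x - d), ?_⟩
        have := congrArg (fun v => (d - a)⁻¹ • v) key
        simpa [smul_smul, inv_mul_cancel₀ (sub_ne_zero.mpr hne)] using this
      subst hda
      have : (g x - d) • y₀ = 0 := by rw [← key, sub_self, zero_smul]
      rcases smul_eq_zero.mp this with h' | h'
      · rw [ha, sub_eq_zero.mp h']
      · exact absurd h' hy₀
  -- quadratic homogeneity
  have hsmul : ∀ (a : K) (x : A), g (a • x) = a * a * g x := by
    intro a x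
    apply cancel
    rw [← main (a • x) y₀]
    simp only [map_smul, LinearMap.smul_apply, main x y₀, smul_smul]
    module
  -- polar form
  have ppt : ∀ x z : A, (g (x + z) - g x - g z) • y₀
      = opStar x (opBullet z y₀) + opStar z (opBullet x y₀) := by
    intro x z
    have h := main (x + z) y₀
    simp only [map_add, LinearMap.add_apply, main x y₀, main z y₀] at h
    rw [sub_smul, sub_smul]
    linear_combination (norm := module) -h
  have h1 : ∀ x x' z : A, (fun x z => g (x + z) - g x - g z) (x + x') z
      = (fun x z => g (x + z) - g x - g z) x z + (fun x z => g (x + z) - g x - g z) x' z := by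
    intro x x' z
    apply cancel
    simp only
    rw [add_smul, ppt, ppt, ppt]
    simp only [map_add, LinearMap.add_apply]
    abel
  have h2 : ∀ (a : K) (x z : A), (fun x z => g (x + z) - g x - g z) (a • x) z
      = a * (fun x z => g (x + z) - g x - g z) x z := by
    intro a x z
    apply cancel
    simp only
    rw [mul_smul, ppt, ppt]
    simp only [map_smul, LinearMap.smul_apply, smul_add]
  have h3 : ∀ x z z' : A, (fun x z => g (x + z) - g x - g z) x (z + z')
      = (fun x z => g (x + z) - g x - g z) x z + (fun x z => g (x + z) - g x - g z) x z' := by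
    intro x z z'
    apply cancel
    simp only
    rw [add_smul, ppt, ppt, ppt]
    simp only [map_add, LinearMap.add_apply]
    abel
  have h4 : ∀ (a : K) (x z : A), (fun x z => g (x + z) - g x - g z) x (a • z)
      = a * (fun x z => g (x + z) - g x - g z) x z := by
    intro a x z
    apply cancel
    simp only
    rw [mul_smul, ppt, ppt]
    simp only [map_smul, LinearMap.smul_apply, smul_add]
  have hcomp : ∀ x z : A, g (x + z) = g x + g z +
      (LinearMap.mk₂ K (fun x z => g (x + z) - g x - g z) h1 h2 h3 h4) x z := by
    intro x z
    rw [LinearMap.mk₂_apply]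
    ring
  obtain ⟨Q, hQ⟩ : ∃ Q : QuadraticForm K A, ∀ x, Q x = g x :=
    ⟨⟨g, hsmul, ⟨_, hcomp⟩⟩, fun _ => rfl⟩
  refine ⟨⟨Q, fun x y => by rw [hQ]; exact main x y, ?_⟩, ?_⟩
  · intro q' hq'
    ext x
    apply cancel
    rw [← hq' x y₀, hQ]
    exact main x y₀
  · intro q hq x hx hqx
    have h1 : opBullet x y₀ ≠ 0 := by
      intro h
      rcases (hbz x y₀).mp h with h' | h' <;> [exact hx h'; exact hy₀ h']
    have := hreg x (opBullet x y₀) hx h1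
    rw [hq x y₀, hqx, zero_smul] at this
    exact this rfl
end

section
/- Let (A, ⋆) be a finite-dimensional division algebra and let ∘ and • be two bilinear quasi-left-inversions of ⋆. Then • = λ∘ for some scalar λ ∈ K. -/
/-- Key lemma: if `g` is injective and `f y` is always a scalar multiple of `g y`,
then `f = lam • g` for a single scalar `lam`. -/
lemma key_prop_lemma {K V W : Type*} [Field K] [AddCommGroup V] [Module K V]
    [AddCommGroup W] [Module K W]
    (f g : V →ₗ[K] W) (hg : Function.Injective g)
    (h : ∀ y, ∃ c : K, f y = c • g y) : ∃ lam : K, ∀ y, f y = lam • g y := by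
  by_cases hV : ∃ y₀ : V, y₀ ≠ 0
  · obtain ⟨y₀, hy₀⟩ := hV
    obtain ⟨lam, hlam⟩ := h y₀
    refine ⟨lam, fun y => ?_⟩
    by_cases hspan : ∃ a : K, y = a • y₀
    · obtain ⟨a, rfl⟩ := hspan
      rw [map_smul, hlam, map_smul, smul_comm]
    · obtain ⟨cy, hcy⟩ := h y
      obtain ⟨c', hc'⟩ := h (y + y₀)
      have e1 : cy • g y + lam • g y₀ = c' • g y + c' • g y₀ := by
        rw [← hcy, ← hlam, ← map_add f, hc', map_add g, smul_add]
      have e2 : c' • g y - cy • g y = lam • g y₀ - c' • g y₀ := by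
        rw [sub_eq_sub_iff_add_eq_add]
        exact e1.symm.trans (add_comm _ _)
      have heq : (c' - cy) • y = (lam - c') • y₀ := by
        apply hg
        rw [map_smul, map_smul, sub_smul, sub_smul]
        exact e2
      by_cases hcc : c' = cy
      · have hz : (lam - c') • y₀ = 0 := by
          rw [← heq, hcc, sub_self, zero_smul]
        rcases smul_eq_zero.mp hz with h1 | h1
        · rw [hcy, sub_eq_zero.mp h1, hcc]
        · exact absurd h1 hy₀
      · exfalso
        apply hspan
        refine ⟨(c' - cy)⁻¹ * (lam - c'), ?_⟩
        have hne : c' - cy ≠ 0 := sub_ne_zero.mpr hcc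
        calc y = (c' - cy)⁻¹ • ((c' - cy) • y) := by
                rw [smul_smul, inv_mul_cancel₀ hne, one_smul]
          _ = ((c' - cy)⁻¹ * (lam - c')) • y₀ := by rw [heq, smul_smul]
  · push_neg at hV
    exact ⟨0, fun y => by rw [hV y]; simp⟩

theorem stmt18 {K : Type*} [Field K] (A : Type*) [AddCommGroup A] [Module K A]
    [FiniteDimensional K A]
    (opStar opCirc opBullet : A →ₗ[K] A →ₗ[K] A)
    (hreg : ∀ a b : A, a ≠ 0 → b ≠ 0 → opStar a b ≠ 0)
    (hcz : ∀ a b : A, opCirc a b = 0 ↔ a = 0 ∨ b = 0)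
    (hccol : ∀ x y : A, ∃ c : K, opStar x (opCirc x y) = c • y)
    (hbz : ∀ a b : A, opBullet a b = 0 ↔ a = 0 ∨ b = 0)
    (hbcol : ∀ x y : A, ∃ c : K, opStar x (opBullet x y) = c • y) :
    ∃ lam : K, ∀ x y : A, opBullet x y = lam • opCirc x y := by
  -- Step 1: for each x ≠ 0 there is a scalar lx with opBullet x = lx • opCirc x
  have step1 : ∀ x : A, x ≠ 0 → ∃ lx : K, ∀ y, opBullet x y = lx • opCirc x y := by
    intro x hx
    have hginj : Function.Injective (opCirc x) := by
      intro a b hab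
      have h0 : opCirc x (a - b) = 0 := by rw [map_sub, hab, sub_self]
      rcases (hcz x (a - b)).mp h0 with h | h
      · exact absurd h hx
      · exact sub_eq_zero.mp h
    have hstarinj : Function.Injective (opStar x) := by
      intro a b hab
      by_contra hne
      have : a - b ≠ 0 := sub_ne_zero.mpr hne
      exact hreg x (a - b) hx this (by rw [map_sub, hab, sub_self])
    apply key_prop_lemma _ _ hginj
    intro y
    by_cases hy : y = 0
    · exact ⟨0, by simp [hy]⟩
    · obtain ⟨c₁, h1⟩ := hccol x y
      obtain ⟨c₂, h2⟩ := hbcol x y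
      have hcirc : opCirc x y ≠ 0 := by
        intro h; rcases (hcz x y).mp h with h' | h'
        · exact hx h'
        · exact hy h'
      have hc₁ : c₁ ≠ 0 := by
        intro h
        apply hreg x (opCirc x y) hx hcirc
        rw [h1, h, zero_smul]
      refine ⟨c₂ / c₁, ?_⟩
      apply hstarinj
      rw [map_smul, h2, h1, smul_smul, div_mul_cancel₀ _ hc₁]
  by_cases hA : ∃ y₀ : A, y₀ ≠ 0
  · obtain ⟨y₀, hy₀⟩ := hA
    -- Step 2: apply the key lemma in the x variable at y₀
    have hginj : Function.Injective (opCirc.flip y₀) := by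
      intro a b hab
      have h0 : opCirc (a - b) y₀ = 0 := by
        have : opCirc.flip y₀ (a - b) = 0 := by rw [map_sub, hab, sub_self]
        simpa using this
      rcases (hcz (a - b) y₀).mp h0 with h | h
      · exact sub_eq_zero.mp h
      · exact absurd h hy₀
    obtain ⟨lam, hlam⟩ := key_prop_lemma (opBullet.flip y₀) (opCirc.flip y₀) hginj
      (by
        intro x
        by_cases hx : x = 0
        · exact ⟨0, by simp [hx]⟩
        · obtain ⟨lx, hlx⟩ := step1 x hx
          exact ⟨lx, by simpa using hlx y₀⟩)
    refine ⟨lam, fun x y => ?_⟩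
    by_cases hx : x = 0
    · simp [hx]
    · obtain ⟨lx, hlx⟩ := step1 x hx
      have hcirc0 : opCirc x y₀ ≠ 0 := by
        intro h; rcases (hcz x y₀).mp h with h' | h'
        · exact hx h'
        · exact hy₀ h'
      have hx0 : lx • opCirc x y₀ = lam • opCirc x y₀ := by
        have := hlam x
        simp only [LinearMap.flip_apply] at this
        rw [← this, hlx y₀]
      have hlxlam : lx = lam := smul_left_injective K hcirc0 hx0
      rw [hlx y, hlxlam]
  · push_neg at hA
    exact ⟨0, fun x y => by rw [hA x]; simp⟩
end
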